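/- arXiv:math/9806036 — 6 statements merged into one kernel-verified Lean document; each statement's English description precedes it below -/
import Mathlib

section
/- Suppose B is a factor antichain. Then for every v ∈ B the identity C_v(s) = −s^{|v|} − Σ_{u ∈ B} (u:v)(s) · C_u(s) holds in ℤ[[s]], and moreover C(s) = Σ_{v ∈ B} C_v(s). -/
/-- `(i, b)` is an occurrence of a member of `B` in the word `w`. -/
def IsOcc {V : Type*} (B : Finset (List V)) (w : List V) (p : ℕ × List V) : Prop :=
  p.2 ∈ B ∧ (w.drop p.1).take p.2.length = p.2

/-- `(w, L)` is a cluster. -/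
def IsCluster {V : Type*} (B : Finset (List V)) (w : List V)
    (L : List (ℕ × List V)) : Prop :=
  L ≠ [] ∧ (∀ p ∈ L, IsOcc B w p) ∧
    (L.map Prod.fst).head? = some 0 ∧
    (L.map fun p => p.1 + p.2.length).getLast? = some w.length ∧
    L.Chain' fun p q =>
      p.1 < q.1 ∧ p.1 + p.2.length < q.1 + q.2.length ∧ q.1 < p.1 + p.2.length

/-- The number of clusters with word length `n` and exactly `l` occurrences. -/
noncomputable def clusterCount {V : Type*} [Fintype V] (B : Finset (List V))
    (n l : ℕ) : ℕ :=
  Nat.card {q : (Fin n → V) × List (ℕ × List V) //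
    IsCluster B (List.ofFn q.1) q.2 ∧ q.2.length = l}

/-- The number of clusters with word length `n`, exactly `l` occurrences, and whose
last occurrence is an occurrence of `v`. -/
noncomputable def clusterCountEnd {V : Type*} [Fintype V] (B : Finset (List V))
    (v : List V) (n l : ℕ) : ℕ :=
  Nat.card {q : (Fin n → V) × List (ℕ × List V) //
    IsCluster B (List.ofFn q.1) q.2 ∧ q.2.length = l ∧
      (q.2.map Prod.snd).getLast? = some v}

/-- The cluster generating function `C(s)`. -/
noncomputable def clusterGF {V : Type*} [Fintype V] (B : Finset (List V)) :
    PowerSeries ℤ :=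
  PowerSeries.mk fun n =>
    ∑ l ∈ Finset.range (n + 1), (-1 : ℤ) ^ l * clusterCount B n l

/-- The cluster generating function `C_v(s)` for clusters ending with `v`. -/
noncomputable def clusterGFEnd {V : Type*} [Fintype V] (B : Finset (List V))
    (v : List V) : PowerSeries ℤ :=
  PowerSeries.mk fun n =>
    ∑ l ∈ Finset.range (n + 1), (-1 : ℤ) ^ l * clusterCountEnd B v n l

/-- The correlation polynomial `(u:v)(s) = ∑_{x ∈ OVERLAP(u,v)} s^{|v|-|x|}`, where
`OVERLAP(u,v)` consists of the nonempty words that are simultaneously a proper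
suffix of `u` and a proper prefix of `v`; such a word is determined by its
length `k` with `1 ≤ k < |u|`, `k < |v|`. -/
noncomputable def corr {V : Type*} [DecidableEq V] (u v : List V) :
    PowerSeries ℤ :=
  ∑ k ∈ Finset.Ico 1 (min u.length v.length),
    if u.drop (u.length - k) = v.take k then PowerSeries.X ^ (v.length - k) else 0

namespace GJ

variable {V : Type*} {B : Finset (List V)} {w : List V} {L : List (ℕ × List V)}

/-- basic bounds from an occurrence -/
lemma occ_bound (hB : ∀ b ∈ B, b ≠ []) {p : ℕ × List V} (h : IsOcc B w p) :
    p.1 + p.2.length ≤ w.length ∧ 1 ≤ p.2.length := by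
  have h1 : 1 ≤ p.2.length := List.length_pos_iff.mpr (hB _ h.1)
  have h2 := congrArg List.length h.2
  simp only [List.length_take, List.length_drop] at h2
  omega

lemma cluster_ends_le (hB : ∀ b ∈ B, b ≠ []) (hc : IsCluster B w L) :
    ∀ p ∈ L, p.1 + p.2.length ≤ w.length :=
  fun p hp => (occ_bound hB (hc.2.1 p hp)).1

lemma cluster_start_lt (hB : ∀ b ∈ B, b ≠ []) (hc : IsCluster B w L) :
    ∀ p ∈ L, p.1 < w.length := by
  intro p hp
  have := occ_bound hB (hc.2.1 p hp)
  omega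

/-- ends are strictly increasing (pairwise) -/
lemma cluster_pairwise (hc : IsCluster B w L) :
    List.Pairwise (fun p q : ℕ × List V =>
      p.1 < q.1 ∧ p.1 + p.2.length < q.1 + q.2.length) L := by
  haveI : IsTrans (ℕ × List V) (fun p q : ℕ × List V =>
      p.1 < q.1 ∧ p.1 + p.2.length < q.1 + q.2.length) :=
    ⟨fun a b c h1 h2 => ⟨h1.1.trans h2.1, h1.2.trans h2.2⟩⟩
  exact List.isChain_iff_pairwise.mp (hc.2.2.2.2.imp fun _ _ h => ⟨h.1, h.2.1⟩)

lemma cluster_getLast_end (hc : IsCluster B w L) :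
    (L.getLast hc.1).1 + (L.getLast hc.1).2.length = w.length := by
  have h := hc.2.2.2.1
  rw [List.getLast?_map, List.getLast?_eq_getLast hc.1] at h
  simpa using h

lemma cluster_length_le (hB : ∀ b ∈ B, b ≠ []) (hc : IsCluster B w L) :
    L.length ≤ w.length := by
  have hnd : (L.map Prod.fst).Pairwise (· < ·) := by
    rw [List.pairwise_map]
    exact (cluster_pairwise hc).imp fun h => h.1
  have hlt : ∀ x ∈ L.map Prod.fst, x ∈ Finset.range w.length := by
    intro x hx
    rw [List.mem_map] at hx
    obtain ⟨p, hp, rfl⟩ := hx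
    exact Finset.mem_range.mpr (cluster_start_lt hB hc p hp)
  have hnodup : (L.map Prod.fst).Nodup := hnd.imp fun h => Nat.ne_of_lt h
  calc L.length = (L.map Prod.fst).length := (List.length_map _).symm
    _ = (L.map Prod.fst).toFinset.card := (List.toFinset_card_of_nodup hnodup).symm
    _ ≤ (Finset.range w.length).card := Finset.card_le_card (fun x hx => by
        simpa using hlt x (by simpa using hx))
    _ = w.length := Finset.card_range _

end GJ

namespace GJ
variable {V : Type*} {B : Finset (List V)} {w : List V} {L : List (ℕ × List V)}


lemma take_drop_take {m : ℕ} {p : ℕ × List V} (hle : p.1 + p.2.length ≤ m) :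
    ((w.take m).drop p.1).take p.2.length = (w.drop p.1).take p.2.length := by
  rw [List.drop_take, List.take_take, min_eq_left (by omega)]

lemma occ_take_iff {m : ℕ} {p : ℕ × List V} (hle : p.1 + p.2.length ≤ m) :
    IsOcc B (w.take m) p ↔ IsOcc B w p := by
  unfold IsOcc; rw [take_drop_take hle]

lemma occ_append {p : ℕ × List V} (h : IsOcc B w p) (hle : p.1 + p.2.length ≤ w.length)
    (t : List V) : IsOcc B (w ++ t) p := by
  refine ⟨h.1, ?_⟩
  rw [List.drop_append_of_le_length (by omega),
    List.take_append_of_le_length (by simp; omega)]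
  exact h.2

lemma occ_drop_eq {p : ℕ × List V} (h : IsOcc B w p) (hend : p.1 + p.2.length = w.length) :
    w.drop p.1 = p.2 := by
  conv_rhs => rw [← h.2]
  rw [List.take_of_length_le (by simp; omega)]

lemma mem_le_getLast {α : Type*} {r : α → α → Prop} {l : List α} (hpw : l.Pairwise r)
    (hl : l ≠ []) : ∀ p ∈ l, p = l.getLast hl ∨ r p (l.getLast hl) := by
  intro p hp
  rw [← List.dropLast_append_getLast hl] at hpw hp
  rcases List.mem_append.mp hp with h | h
  · exact Or.inr ((List.pairwise_append.mp hpw).2.2 p h _ (by simp))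
  · exact Or.inl (by simpa using h)

/-- Extension: given a cluster ending with `u` at position `i`, and an overlap `k`
between `u` and `v`, append an occurrence of `v`. -/
lemma ext_cluster (hB : ∀ b ∈ B, b ≠ []) {v u : List V} {k : ℕ} {w' : List V}
    {M : List (ℕ × List V)}
    (hv : v ∈ B) (hk1 : 1 ≤ k) (hku : k < u.length) (hkv : k < v.length)
    (hovl : u.drop (u.length - k) = v.take k)
    (hc : IsCluster B w' M) {i : ℕ} (hab : M.getLast hc.1 = (i, u)) :
    IsCluster B (w' ++ v.drop k) (M ++ [(w'.length - k, v)]) ∧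
      (w' ++ v.drop k).length = w'.length + (v.length - k) := by
  have hM : M ≠ [] := hc.1
  have hend : i + u.length = w'.length := by
    have := cluster_getLast_end hc; rw [hab] at this; exact this
  have hdropa : w'.drop i = u := by
    have := occ_drop_eq (hc.2.1 _ (List.getLast_mem hc.1)) (cluster_getLast_end hc)
    rw [hab] at this; exact this
  have hover : w'.drop (w'.length - k) = v.take k := by
    have h1 : w'.drop (w'.length - k) = (w'.drop i).drop (u.length - k) := by
      rw [List.drop_drop]; congr 1; omega
    rw [h1, hdropa, hovl]
  have hlen : (w' ++ v.drop k).length = w'.length + (v.length - k) := by simp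
  refine ⟨⟨by simp, ?_, ?_, ?_, ?_⟩, hlen⟩
  · intro p hp
    rcases List.mem_append.mp hp with h | h
    · exact occ_append (hc.2.1 p h) (cluster_ends_le hB hc p h) _
    · simp only [List.mem_singleton] at h
      subst h
      refine ⟨hv, ?_⟩
      rw [List.drop_append_of_le_length (by omega), hover, List.take_append_drop,
        List.take_of_length_le le_rfl]
  · rw [List.map_append, List.head?_append]
    rw [hc.2.2.1]; rfl
  · rw [List.map_append]
    have h2 : List.map (fun p : ℕ × List V => p.1 + p.2.length) [(w'.length - k, v)]
        = [w'.length - k + v.length] := by simp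
    rw [h2, List.getLast?_concat, hlen]
    congr 1; omega
  · show List.IsChain _ _
    rw [List.isChain_append]
    refine ⟨hc.2.2.2.2, List.isChain_singleton _, ?_⟩
    intro x hx y hy
    rw [Option.mem_def, List.getLast?_eq_getLast hM, Option.some_inj] at hx
    simp only [List.head?_cons, Option.mem_def, Option.some_inj] at hy
    subst hy
    rw [← hx, hab]
    refine ⟨by omega, by simp; omega, by simp; omega⟩

/-- Decomposition of a cluster whose occurrence list ends with `(j, v)`,
where the previous occurrence is `(i, b)`. -/
lemma cluster_decomp (hB : ∀ b ∈ B, b ≠ []) {M : List (ℕ × List V)} (hM : M ≠ [])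
    {i : ℕ} {b : List V} (hab : M.getLast hM = (i, b))
    {j : ℕ} {v : List V} (hc : IsCluster B w (M ++ [(j, v)])) :
    IsCluster B (w.take (i + b.length)) M ∧
      i < j ∧ j < i + b.length ∧ i + b.length < j + v.length ∧
      j + v.length = w.length ∧ w.drop j = v ∧
      b.drop (b.length - (i + b.length - j)) = v.take (i + b.length - j) := by
  have hL : (M ++ [(j,v)]) ≠ [] := by simp
  have hxlast : (M ++ [(j,v)]).getLast hL = (j, v) := List.getLast_concat
  have hjv : j + v.length = w.length := by
    have := cluster_getLast_end hc
    rwa [hxlast] at this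
  have hdropj : w.drop j = v := occ_drop_eq (hc.2.1 (j,v) (by simp)) hjv
  have hlink : i < j ∧ i + b.length < j + v.length ∧ j < i + b.length := by
    have h3 := (List.isChain_append.mp hc.2.2.2.2).2.2 (M.getLast hM)
      (by rw [Option.mem_def, List.getLast?_eq_getLast hM]) (j, v) (by simp)
    rw [hab] at h3
    exact h3
  have hmw : i + b.length ≤ w.length := by omega
  have hpwM : List.Pairwise (fun p q : ℕ × List V =>
      p.1 < q.1 ∧ p.1 + p.2.length < q.1 + q.2.length) M :=
    (List.pairwise_append.mp (cluster_pairwise hc)).1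
  have hendsM : ∀ p ∈ M, p.1 + p.2.length ≤ i + b.length := by
    intro p hp
    rcases mem_le_getLast hpwM hM p hp with h | h
    · rw [h, hab]
    · rw [hab] at h; simp at h; omega
  have hoccw : ∀ p ∈ M, IsOcc B w p := fun p hp => hc.2.1 p (by simp [hp])
  have hsub : IsCluster B (w.take (i + b.length)) M := by
    refine ⟨hM, ?_, ?_, ?_, (List.isChain_append.mp hc.2.2.2.2).1⟩
    · intro p hp
      exact (occ_take_iff (hendsM p hp)).mpr (hoccw p hp)
    · have h0 := hc.2.2.1
      rw [List.map_append, List.head?_append] at h0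
      cases h1 : (M.map Prod.fst).head? with
      | none =>
        rw [List.head?_eq_none_iff] at h1
        simp only [List.map_eq_nil_iff] at h1
        exact absurd h1 hM
      | some x =>
        rw [h1] at h0
        simpa using h0
    · rw [List.getLast?_map, List.getLast?_eq_getLast hM, hab, List.length_take,
        min_eq_left hmw]
      rfl
  have haocc : IsOcc B w (i, b) := by
    have := hoccw (M.getLast hM) (List.getLast_mem hM)
    rwa [hab] at this
  have h1 : (w.drop i).take b.length = b := haocc.2
  have hovl : b.drop (b.length - (i + b.length - j)) = v.take (i + b.length - j) := by
    calc b.drop (b.length - (i + b.length - j)) = b.drop (j - i) := by congr 1; omega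
      _ = ((w.drop i).take b.length).drop (j - i) := by rw [h1]
      _ = ((w.drop i).drop (j - i)).take (b.length - (j - i)) := List.drop_take
      _ = (w.drop j).take (i + b.length - j) := by
          rw [List.drop_drop, show i + (j - i) = j by omega,
            show b.length - (j - i) = i + b.length - j by omega]
      _ = v.take (i + b.length - j) := by rw [hdropj]
  exact ⟨hsub, hlink.1, hlink.2.2, hlink.2.1, hjv, hdropj, hovl⟩

end GJ

namespace GJ
variable {V : Type*} [DecidableEq V] {B : Finset (List V)}

/-- The cluster condition, list version, with prescribed final word. -/
def ClCond (B : Finset (List V)) (v : List V) (n l : ℕ)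
    (q : List V × List (ℕ × List V)) : Prop :=
  q.1.length = n ∧ IsCluster B q.1 q.2 ∧ q.2.length = l ∧
    (q.2.map Prod.snd).getLast? = some v

/-- The cluster condition, list version. -/
def ClCondAll (B : Finset (List V)) (n l : ℕ)
    (q : List V × List (ℕ × List V)) : Prop :=
  q.1.length = n ∧ IsCluster B q.1 q.2 ∧ q.2.length = l

lemma nat_card_sigma {ι : Type*} [Fintype ι] (f : ι → Type*) [∀ i, Finite (f i)] :
    Nat.card (Σ i, f i) = ∑ i : ι, Nat.card (f i) := by
  letI : ∀ i, Fintype (f i) := fun i => Fintype.ofFinite _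
  simp [Nat.card_eq_fintype_card, Fintype.card_sigma]

lemma sigma_subtype_ext {ι : Type*} {Q : Type*} {C : ι → Q → Prop}
    {x y : Σ i, {q : Q // C i q}} (h1 : x.1 = y.1) (h2 : x.2.1 = y.2.1) : x = y := by
  obtain ⟨i, q, hq⟩ := x
  obtain ⟨i', q', hq'⟩ := y
  dsimp at h1 h2
  subst h1
  exact Sigma.ext rfl (heq_of_eq (Subtype.ext h2))

/-- Finiteness of sets of clusters. -/
lemma finite_cl [Finite V] (hB : ∀ b ∈ B, b ≠ [])
    {P : (List V × List (ℕ × List V)) → Prop} (n : ℕ)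
    (hP : ∀ q, P q → q.1.length = n ∧ IsCluster B q.1 q.2) :
    Finite {q // P q} := by
  have h2 : {L : List (ℕ × List V) |
      L.length ≤ n ∧ ∀ p ∈ L, p ∈ ((Finset.range n ×ˢ B : Finset (ℕ × List V)) :
        Set (ℕ × List V))}.Finite := by
    apply Set.Finite.subset (Set.Finite.image
      (fun l : List {x // x ∈ ((Finset.range n ×ˢ B : Finset (ℕ × List V)) :
        Set (ℕ × List V))} => l.map Subtype.val)
      (List.finite_length_le _ n))
    intro L hL
    refine ⟨L.pmap (fun p hp => ⟨p, hp⟩) hL.2, ?_, ?_⟩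
    · simp only [Set.mem_setOf_eq, List.length_pmap]
      exact hL.1
    · dsimp only
      rw [List.map_pmap]
      simp [List.pmap_eq_map]
  have h1 : {w : List V | w.length ≤ n}.Finite := List.finite_length_le V n
  have hsub : {q | P q} ⊆ ({w : List V | w.length ≤ n} ×ˢ
      {L : List (ℕ × List V) | L.length ≤ n ∧ ∀ p ∈ L,
        p ∈ ((Finset.range n ×ˢ B : Finset (ℕ × List V)) : Set (ℕ × List V))}) :=
    fun q hq => by
    obtain ⟨hw, hc⟩ := hP q hq
    refine Set.mem_prod.mpr ⟨by simp [hw], ?_, ?_⟩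
    · rw [Set.mem_setOf_eq] at *
      have := cluster_length_le hB hc
      omega
    · intro p hp
      have h3 := cluster_start_lt hB hc p hp
      have h4 := (hc.2.1 p hp).1
      simp only [Finset.coe_product, Set.mem_prod, Finset.mem_coe, Finset.coe_range,
        Set.mem_Iio]
      exact ⟨by omega, h4⟩
  exact Set.Finite.to_subtype ((h1.prod h2).subset hsub)

end GJ

namespace GJ
variable {V : Type*} [DecidableEq V] {B : Finset (List V)}

lemma card_fin_eq {V : Type*} (P : List V → List (ℕ × List V) → Prop) (n : ℕ) :
    Nat.card {q : (Fin n → V) × List (ℕ × List V) // P (List.ofFn q.1) q.2}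
      = Nat.card {q : List V × List (ℕ × List V) // q.1.length = n ∧ P q.1 q.2} := by
  have key : ∀ (l : List V) (h : l.length = n),
      List.ofFn (fun i : Fin n => l.get (Fin.cast h.symm i)) = l := by
    intro l h
    subst h
    simpa using List.ofFn_get l
  apply Nat.card_congr
  refine ⟨fun q => ⟨(List.ofFn q.1.1, q.1.2), by simp, q.2⟩,
    fun q => ⟨(fun i => q.1.1.get (Fin.cast q.2.1.symm i), q.1.2), by
      rw [key q.1.1 q.2.1]; exact q.2.2⟩, ?_, ?_⟩
  · intro q
    apply Subtype.ext
    apply Prod.ext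
    · funext i
      simp [List.get_ofFn]
    · rfl
  · intro q
    apply Subtype.ext
    apply Prod.ext
    · exact key q.1.1 q.2.1
    · rfl

lemma card_l_zero (v : List V) (n : ℕ) :
    Nat.card {q : List V × List (ℕ × List V) // ClCond B v n 0 q} = 0 := by
  have : IsEmpty {q : List V × List (ℕ × List V) // ClCond B v n 0 q} := by
    constructor
    rintro ⟨q, hq⟩
    exact hq.2.1.1 (List.length_eq_zero_iff.mp hq.2.2.1)
  exact Nat.card_of_isEmpty

lemma card_l_gt (hB : ∀ b ∈ B, b ≠ []) (v : List V) {n l : ℕ} (h : n < l) :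
    Nat.card {q : List V × List (ℕ × List V) // ClCond B v n l q} = 0 := by
  have : IsEmpty {q : List V × List (ℕ × List V) // ClCond B v n l q} := by
    constructor
    rintro ⟨q, hq⟩
    have h1 := cluster_length_le hB hq.2.1
    have h2 := hq.1
    have h3 := hq.2.2.1
    omega
  exact Nat.card_of_isEmpty

lemma card_l_one (hB : ∀ b ∈ B, b ≠ []) {v : List V} (hv : v ∈ B) (n : ℕ) :
    Nat.card {q : List V × List (ℕ × List V) // ClCond B v n 1 q}
      = if n = v.length then 1 else 0 := by
  have hchar : ∀ q : List V × List (ℕ × List V), ClCond B v n 1 q →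
      q = (v, [(0, v)]) ∧ n = v.length := by
    rintro ⟨w, L⟩ ⟨hw, hc, hl, hlast⟩
    obtain ⟨p, rfl⟩ := List.length_eq_one_iff.mp hl
    have hp2 : p.2 = v := by simpa using hlast
    have hp1 : p.1 = 0 := by
      have := hc.2.2.1
      simpa using this
    have hend : p.1 + p.2.length = w.length := by
      have := hc.2.2.2.1
      simpa using this
    have hwv : w = v := by
      have := occ_drop_eq (hc.2.1 p (by simp)) hend
      rw [hp1] at this
      simpa [hp2] using this
    constructor
    · rw [hwv, show p = (0, v) from by rw [← hp1, ← hp2]]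
    · rw [← hw, hwv]
  split_ifs with hn
  · have hcl : ClCond B v n 1 (v, [(0, v)]) := by
      refine ⟨hn.symm, ⟨by simp, ?_, by simp, by simp [hn], ?_⟩, by simp, by simp⟩
      · rintro p hp
        simp only [List.mem_singleton] at hp
        subst hp
        exact ⟨hv, by simp⟩
      · exact List.isChain_singleton _
    have : Nonempty {q : List V × List (ℕ × List V) // ClCond B v n 1 q} :=
      ⟨⟨_, hcl⟩⟩
    have : Subsingleton {q : List V × List (ℕ × List V) // ClCond B v n 1 q} := by
      constructor
      rintro ⟨q, hq⟩ ⟨q', hq'⟩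
      exact Subtype.ext ((hchar q hq).1.trans (hchar q' hq').1.symm)
    exact Nat.card_unique
  · have : IsEmpty {q : List V × List (ℕ × List V) // ClCond B v n 1 q} := by
      constructor
      rintro ⟨q, hq⟩
      exact hn (hchar q hq).2
    exact Nat.card_of_isEmpty

lemma card_split [Finite V] (hB : ∀ b ∈ B, b ≠ []) (n l : ℕ) :
    Nat.card {q : List V × List (ℕ × List V) // ClCondAll B n l q}
      = ∑ v ∈ B, Nat.card {q : List V × List (ℕ × List V) // ClCond B v n l q} := by
  haveI : ∀ v : {x // x ∈ B}, Finite {q : List V × List (ℕ × List V) //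
      ClCond B v.1 n l q} := fun v =>
    finite_cl hB n (fun q hq => ⟨hq.1, hq.2.1⟩)
  rw [← Finset.sum_coe_sort B (fun v => Nat.card
    {q : List V × List (ℕ × List V) // ClCond B v n l q})]
  rw [← nat_card_sigma (fun v : {x // x ∈ B} =>
    {q : List V × List (ℕ × List V) // ClCond B v.1 n l q})]
  apply Nat.card_congr
  refine ⟨fun q => ⟨⟨(q.1.2.map Prod.snd).getLast (by
      simp only [ne_eq, List.map_eq_nil_iff]; exact q.2.2.1.1), ?_⟩,
      ⟨q.1, q.2.1, q.2.2.1, q.2.2.2, List.getLast?_eq_getLast _⟩⟩,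
    fun x => ⟨x.2.1, x.2.2.1, x.2.2.2.1, x.2.2.2.2.1⟩, ?_, ?_⟩
  · obtain ⟨hlen, hc, hl⟩ := q.2
    obtain ⟨p, hp, hpL⟩ := List.mem_map.mp (List.getLast_mem (l := q.1.2.map Prod.snd)
      (by simp only [ne_eq, List.map_eq_nil_iff]; exact hc.1))
    rw [← hpL]
    exact (hc.2.1 p hp).1
  · intro q; rfl
  · intro x
    apply sigma_subtype_ext
    · apply Subtype.ext
      have := x.2.2.2.2.2
      rw [List.getLast?_eq_getLast (by
        simp only [ne_eq, List.map_eq_nil_iff]; exact x.2.2.2.1.1)] at this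
      simpa using this
    · rfl

end GJ

namespace GJ
variable {V : Type*} [DecidableEq V] {B : Finset (List V)}

/-- Extend a cluster by a final occurrence of `v` overlapping the last `k` letters. -/
def extend (v : List V) (k : ℕ) (q : List V × List (ℕ × List V)) :
    List V × List (ℕ × List V) :=
  (q.1 ++ v.drop k, q.2 ++ [(q.1.length - k, v)])

/-- Remove the final occurrence of a cluster, recording the word of the previous
occurrence and the overlap length. -/
def shrink {V : Type*} (q : List V × List (ℕ × List V)) :
    (List V × ℕ) × (List V × List (ℕ × List V)) :=
  (((q.2.dropLast.getLast?.getD (0, [])).2,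
    (q.2.dropLast.getLast?.getD (0, [])).1
      + (q.2.dropLast.getLast?.getD (0, [])).2.length
      - (q.2.getLast?.getD (0, [])).1),
   (q.1.take ((q.2.dropLast.getLast?.getD (0, [])).1
      + (q.2.dropLast.getLast?.getD (0, [])).2.length),
    q.2.dropLast))

lemma extend_spec (hB : ∀ b ∈ B, b ≠ []) {v u : List V} {k m l : ℕ}
    (hv : v ∈ B) (hk1 : 1 ≤ k) (hku : k < u.length) (hkv : k < v.length)
    (hovl : u.drop (u.length - k) = v.take k)
    {q : List V × List (ℕ × List V)} (hq : ClCond B u m l q) :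
    ClCond B v (m + (v.length - k)) (l + 1) (extend v k q) ∧
      shrink (extend v k q) = ((u, k), q) := by
  obtain ⟨w', M⟩ := q
  obtain ⟨hw, hc, hlen, hlast⟩ := hq
  dsimp only at hw hc hlen hlast
  have hM : M ≠ [] := hc.1
  have h2 : (M.getLast hM).2 = u := by
    rw [List.getLast?_map, List.getLast?_eq_getLast hM] at hlast
    simpa using hlast
  have hab : M.getLast hM = ((M.getLast hM).1, u) := by
    rw [← h2]
  have hext := ext_cluster hB hv hk1 hku hkv hovl hc hab
  have hend : (M.getLast hM).1 + u.length = w'.length := by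
    have h3 := cluster_getLast_end hc
    rw [h2] at h3
    exact h3
  have hEx1 : (extend v k (w', M)).1 = w' ++ v.drop k := rfl
  have hEx2 : (extend v k (w', M)).2 = M ++ [(w'.length - k, v)] := rfl
  constructor
  · refine ⟨?_, ?_, ?_, ?_⟩
    · show (w' ++ v.drop k).length = m + (v.length - k)
      simp only [List.length_append, List.length_drop]
      omega
    · rw [hEx1, hEx2]; exact hext.1
    · rw [hEx2]; simp [hlen]
    · rw [hEx2, List.map_append]
      exact List.getLast?_concat
  · have e1 : (M.getLast hM).2 = u := h2
    have e2' : (M.getLast hM).2.length = u.length := by rw [h2]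
    have e2 : (M.getLast hM).1 + (M.getLast hM).2.length - (w'.length - k) = k := by
      rw [e2']; omega
    have e3 : (w' ++ v.drop k).take ((M.getLast hM).1 + (M.getLast hM).2.length)
        = w' := by
      rw [cluster_getLast_end hc]
      exact List.take_left
    unfold shrink
    rw [hEx1, hEx2, List.dropLast_concat, List.getLast?_concat,
      List.getLast?_eq_getLast hM]
    simp only [Option.getD_some]
    exact Prod.ext (Prod.ext e1 e2) (Prod.ext e3 rfl)

lemma shrink_spec (hB : ∀ b ∈ B, b ≠ []) {v : List V} {n l : ℕ} (hl : l ≠ 0)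
    {q : List V × List (ℕ × List V)} (hq : ClCond B v n (l + 1) q) :
    (shrink q).1.1 ∈ B ∧ 1 ≤ (shrink q).1.2 ∧ (shrink q).1.2 < (shrink q).1.1.length ∧
      (shrink q).1.2 < v.length ∧
      (shrink q).1.1.drop ((shrink q).1.1.length - (shrink q).1.2)
        = v.take (shrink q).1.2 ∧
      v.length - (shrink q).1.2 ≤ n ∧
      ClCond B (shrink q).1.1 (n - (v.length - (shrink q).1.2)) l (shrink q).2 ∧
      extend v (shrink q).1.2 (shrink q).2 = q := by
  obtain ⟨w, L⟩ := q
  obtain ⟨hw, hc, hlen, hlast⟩ := hq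
  dsimp only at hw hc hlen hlast
  have hLne : L ≠ [] := hc.1
  have hdrop_ne : L.dropLast ≠ [] := by
    intro h
    have h9 := List.length_dropLast (xs := L)
    rw [h] at h9
    simp only [List.length_nil] at h9
    omega
  have ha2 : (L.getLast hLne).2 = v := by
    rw [List.getLast?_map, List.getLast?_eq_getLast hLne] at hlast
    simpa using hlast
  have hdecomp : L.dropLast ++ [((L.getLast hLne).1, v)] = L := by
    rw [← ha2, Prod.mk.eta]
    exact List.dropLast_append_getLast hLne
  have hc' : IsCluster B w (L.dropLast ++ [((L.getLast hLne).1, v)]) := by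
    rw [hdecomp]; exact hc
  obtain ⟨hsub, h1, h2, h3, h4, h5, h6⟩ := cluster_decomp hB hdrop_ne
    (Prod.mk.eta (p := L.dropLast.getLast hdrop_ne)).symm hc'
  have hs : shrink (w, L) = (((L.dropLast.getLast hdrop_ne).2,
      (L.dropLast.getLast hdrop_ne).1 + (L.dropLast.getLast hdrop_ne).2.length
        - (L.getLast hLne).1),
      (w.take ((L.dropLast.getLast hdrop_ne).1
        + (L.dropLast.getLast hdrop_ne).2.length), L.dropLast)) := by
    unfold shrink
    rw [List.getLast?_eq_getLast hLne, List.getLast?_eq_getLast hdrop_ne]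
    rfl
  rw [hs]
  dsimp only
  have hPB : (L.dropLast.getLast hdrop_ne).2 ∈ B :=
    (hsub.2.1 _ (List.getLast_mem hdrop_ne)).1
  have hmw : (L.dropLast.getLast hdrop_ne).1 + (L.dropLast.getLast hdrop_ne).2.length
      ≤ w.length := by omega
  have hmtake : (w.take ((L.dropLast.getLast hdrop_ne).1
      + (L.dropLast.getLast hdrop_ne).2.length)).length
      = (L.dropLast.getLast hdrop_ne).1 + (L.dropLast.getLast hdrop_ne).2.length := by
    rw [List.length_take]; omega
  refine ⟨hPB, by omega, by omega, by omega, h6, by omega, ⟨?_, hsub, ?_, ?_⟩, ?_⟩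
  · rw [hmtake]; omega
  · show L.dropLast.length = l
    rw [List.length_dropLast, hlen]
    omega
  · show (L.dropLast.map Prod.snd).getLast? = some (L.dropLast.getLast hdrop_ne).2
    rw [List.getLast?_map, List.getLast?_eq_getLast hdrop_ne]
    rfl
  · have hEx1 : ∀ q' : List V × List (ℕ × List V), ∀ kk,
        extend v kk q' = (q'.1 ++ v.drop kk, q'.2 ++ [(q'.1.length - kk, v)]) :=
      fun _ _ => rfl
    rw [hEx1]
    dsimp only
    rw [hmtake]
    have hv1 : v.drop ((L.dropLast.getLast hdrop_ne).1
        + (L.dropLast.getLast hdrop_ne).2.length - (L.getLast hLne).1)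
        = w.drop ((L.dropLast.getLast hdrop_ne).1
          + (L.dropLast.getLast hdrop_ne).2.length) := by
      rw [← h5, List.drop_drop]
      congr 1
      omega
    refine Prod.ext ?_ ?_
    · show w.take _ ++ v.drop _ = w
      rw [hv1, List.take_append_drop]
    · show L.dropLast ++ [(_, v)] = L
      rw [show (L.dropLast.getLast hdrop_ne).1 + (L.dropLast.getLast hdrop_ne).2.length
          - ((L.dropLast.getLast hdrop_ne).1 + (L.dropLast.getLast hdrop_ne).2.length
            - (L.getLast hLne).1) = (L.getLast hLne).1 by omega]
      exact hdecomp

end GJ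

namespace GJ
variable {V : Type*} [DecidableEq V] {B : Finset (List V)}

lemma card_rec [Finite V] (hB : ∀ b ∈ B, b ≠ []) {v : List V} (hv : v ∈ B)
    (n l : ℕ) (hl : l ≠ 0) :
    Nat.card {q : List V × List (ℕ × List V) // ClCond B v n (l + 1) q}
      = ∑ u ∈ B, ∑ k ∈ Finset.Ico 1 (min u.length v.length),
          if u.drop (u.length - k) = v.take k ∧ v.length - k ≤ n
          then Nat.card {q : List V × List (ℕ × List V) //
            ClCond B u (n - (v.length - k)) l q} else 0 := by
  set F : Finset (List V × ℕ) := (B ×ˢ Finset.Ico 1 v.length).filter (fun p =>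
    p.2 < p.1.length ∧ (p.1.drop (p.1.length - p.2) = v.take p.2 ∧
      v.length - p.2 ≤ n)) with hF
  have hFmem : ∀ p : List V × ℕ, p ∈ F ↔ p.1 ∈ B ∧ 1 ≤ p.2 ∧ p.2 < v.length ∧
      p.2 < p.1.length ∧ p.1.drop (p.1.length - p.2) = v.take p.2 ∧
      v.length - p.2 ≤ n := by
    intro p
    rw [hF, Finset.mem_filter, Finset.mem_product, Finset.mem_Ico]
    tauto
  haveI : ∀ p : {x // x ∈ F}, Finite {q : List V × List (ℕ × List V) //
      ClCond B p.1.1 (n - (v.length - p.1.2)) l q} := fun p =>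
    finite_cl hB _ (fun q hq => ⟨hq.1, hq.2.1⟩)
  have main : Nat.card {q : List V × List (ℕ × List V) // ClCond B v n (l + 1) q}
      = ∑ p ∈ F, Nat.card {q : List V × List (ℕ × List V) //
          ClCond B p.1 (n - (v.length - p.2)) l q} := by
    rw [← Finset.sum_coe_sort F (fun p => Nat.card
      {q : List V × List (ℕ × List V) // ClCond B p.1 (n - (v.length - p.2)) l q}),
      ← nat_card_sigma (fun p : {x // x ∈ F} =>
        {q : List V × List (ℕ × List V) // ClCond B p.1.1 (n - (v.length - p.1.2)) l q})]
    apply Nat.card_congr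
    refine
      { toFun := fun y =>
          have hs := shrink_spec hB hl y.2
          ⟨⟨(shrink y.1).1, (hFmem _).mpr ⟨hs.1, hs.2.1, hs.2.2.2.1, hs.2.2.1,
            hs.2.2.2.2.1, hs.2.2.2.2.2.1⟩⟩, ⟨(shrink y.1).2, hs.2.2.2.2.2.2.1⟩⟩
        invFun := fun x =>
          have hm := (hFmem _).mp x.1.2
          ⟨extend v x.1.1.2 x.2.1, by
            have he := (extend_spec hB hv hm.2.1 hm.2.2.2.1 hm.2.2.1 hm.2.2.2.2.1
              x.2.2).1
            have harith : (n - (v.length - x.1.1.2)) + (v.length - x.1.1.2) = n := by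
              have := hm.2.2.2.2.2
              omega
            rw [harith] at he
            exact he⟩
        left_inv := ?_
        right_inv := ?_ }
    · intro y
      exact Subtype.ext (shrink_spec hB hl y.2).2.2.2.2.2.2.2
    · intro x
      have hm := (hFmem _).mp x.1.2
      have he := (extend_spec hB hv hm.2.1 hm.2.2.2.1 hm.2.2.1 hm.2.2.2.2.1 x.2.2).2
      apply sigma_subtype_ext
      · apply Subtype.ext
        show (shrink (extend v x.1.1.2 x.2.1)).1 = x.1.1
        rw [he]
      · show (shrink (extend v x.1.1.2 x.2.1)).2 = x.2.1
        rw [he]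
  rw [main, hF, Finset.sum_filter, Finset.sum_product]
  apply Finset.sum_congr rfl
  intro u hu
  have hIco : Finset.Ico 1 (min u.length v.length)
      = (Finset.Ico 1 v.length).filter (fun k => k < u.length) := by
    ext k
    simp only [Finset.mem_Ico, Finset.mem_filter]
    omega
  rw [hIco, Finset.sum_filter]
  apply Finset.sum_congr rfl
  intro k hk
  rw [ite_and]

end GJ

namespace GJ
variable {V : Type*} [DecidableEq V] {B : Finset (List V)}

/-- List-based count of clusters ending with `v`. -/
noncomputable def cce {V : Type*} (B : Finset (List V)) (v : List V) (n l : ℕ) : ℕ :=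
  Nat.card {q : List V × List (ℕ × List V) // ClCond B v n l q}

/-- List-based count of clusters. -/
noncomputable def cca {V : Type*} (B : Finset (List V)) (n l : ℕ) : ℕ :=
  Nat.card {q : List V × List (ℕ × List V) // ClCondAll B n l q}

/-- Alternating sums over a cluster count telescope. -/
lemma sum_ext [Finite V] (hB : ∀ b ∈ B, b ≠ []) (u : List V) {m n : ℕ} (hmn : m ≤ n) :
    ∑ t ∈ Finset.range (m + 1), (-1 : ℤ) ^ t * cce B u m t
      = - ∑ t ∈ Finset.range n, (-1 : ℤ) ^ t * cce B u m (t + 1) := by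
  rw [Finset.sum_range_succ']
  have h0 : (cce B u m 0 : ℤ) = 0 := by
    simp [cce, card_l_zero]
  rw [pow_zero, one_mul, h0, add_zero]
  rw [← Finset.sum_subset (Finset.range_subset_range.mpr hmn) (fun t ht hnt => ?_)]
  · rw [← Finset.sum_neg_distrib]
    apply Finset.sum_congr rfl
    intro t _
    rw [pow_succ]
    ring
  · have hgt : m < t + 1 := by
      simp only [Finset.mem_range, not_lt] at hnt
      omega
    simp [cce, card_l_gt hB u hgt]

lemma key [Finite V] (hB : ∀ b ∈ B, b ≠ []) {v : List V} (hv : v ∈ B) (n : ℕ) :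
    ∑ l ∈ Finset.range (n + 1), (-1 : ℤ) ^ l * cce B v n l
      = -(if n = v.length then 1 else 0)
        + ∑ u ∈ B, ∑ k ∈ Finset.Ico 1 (min u.length v.length),
            (if u.drop (u.length - k) = v.take k ∧ v.length - k ≤ n
             then ∑ t ∈ Finset.range n,
                (-1 : ℤ) ^ t * cce B u (n - (v.length - k)) (t + 1)
             else 0) := by
  have hv0 : v.length ≠ 0 := fun h => hB v hv (List.length_eq_zero_iff.mp h)
  cases n with
  | zero =>
    simp only [zero_add, Finset.range_one, Finset.sum_singleton, pow_zero, one_mul]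
    rw [if_neg (by omega)]
    rw [Finset.sum_eq_zero (fun u _ => Finset.sum_eq_zero (fun k hk =>
      if_neg (fun hcond => by
        rw [Finset.mem_Ico] at hk
        have h8 := hcond.2
        omega)))]
    simp [cce, card_l_zero]
  | succ N =>
    have h0 : (cce B v (N + 1) 0 : ℤ) = 0 := by simp [cce, card_l_zero]
    have h1 : (cce B v (N + 1) 1 : ℤ) = if N + 1 = v.length then 1 else 0 := by
      rw [cce, card_l_one hB hv]
      split_ifs <;> simp
    rw [Finset.sum_range_succ', pow_zero, one_mul, h0, add_zero]
    rw [Finset.sum_range_succ' (fun l => (-1 : ℤ) ^ (l + 1) * cce B v (N + 1) (l + 1)) N]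
    rw [zero_add, pow_one, h1]
    have hrec : ∀ l ∈ Finset.range N, (-1 : ℤ) ^ (l + 1 + 1) * cce B v (N + 1) (l + 2)
        = ∑ u ∈ B, ∑ k ∈ Finset.Ico 1 (min u.length v.length),
            (if u.drop (u.length - k) = v.take k ∧ v.length - k ≤ N + 1
             then (-1 : ℤ) ^ l * cce B u (N + 1 - (v.length - k)) (l + 1)
             else 0) := by
      intro l _
      have hcast : (cce B v (N + 1) (l + 2) : ℤ)
          = ∑ u ∈ B, ∑ k ∈ Finset.Ico 1 (min u.length v.length),
              (if u.drop (u.length - k) = v.take k ∧ v.length - k ≤ N + 1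
               then (cce B u (N + 1 - (v.length - k)) (l + 1) : ℤ) else 0) := by
        have := card_rec hB hv (N + 1) (l + 1) (by omega)
        rw [show l + 1 + 1 = l + 2 from rfl] at this
        rw [cce, this]
        push_cast
        rfl
      rw [hcast, Finset.mul_sum]
      apply Finset.sum_congr rfl
      intro u _
      rw [Finset.mul_sum]
      apply Finset.sum_congr rfl
      intro k _
      rw [mul_ite, mul_zero]
      congr 1
      rw [pow_add, pow_add]
      ring
    rw [Finset.sum_congr rfl hrec]
    rw [Finset.sum_comm]
    have hswap : ∀ u ∈ B,
        ∑ l ∈ Finset.range N, ∑ k ∈ Finset.Ico 1 (min u.length v.length),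
            (if u.drop (u.length - k) = v.take k ∧ v.length - k ≤ N + 1
             then (-1 : ℤ) ^ l * cce B u (N + 1 - (v.length - k)) (l + 1)
             else 0)
        = ∑ k ∈ Finset.Ico 1 (min u.length v.length),
            (if u.drop (u.length - k) = v.take k ∧ v.length - k ≤ N + 1
             then ∑ t ∈ Finset.range (N + 1),
                (-1 : ℤ) ^ t * cce B u (N + 1 - (v.length - k)) (t + 1)
             else 0) := by
      intro u _
      rw [Finset.sum_comm]
      apply Finset.sum_congr rfl
      intro k hk
      rw [Finset.mem_Ico] at hk
      split_ifs with hcond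
      · rw [Finset.sum_range_succ]
        have hz : (cce B u (N + 1 - (v.length - k)) (N + 1) : ℤ) = 0 := by
          have hlt : N + 1 - (v.length - k) < N + 1 := by omega
          simp [cce, card_l_gt hB u hlt]
        rw [hz]
        simp
      · simp
    rw [Finset.sum_congr rfl hswap]
    ring
end GJ

namespace GJ
variable {V : Type*} [Fintype V] [DecidableEq V] {B : Finset (List V)}

lemma cce_eq (B : Finset (List V)) (v : List V) (n l : ℕ) :
    clusterCountEnd B v n l = cce B v n l :=
  card_fin_eq (fun w L => IsCluster B w L ∧ L.length = l ∧
    (L.map Prod.snd).getLast? = some v) n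

lemma cca_eq (B : Finset (List V)) (n l : ℕ) :
    clusterCount B n l = cca B n l :=
  card_fin_eq (fun w L => IsCluster B w L ∧ L.length = l) n

lemma coeff_corr_mul (u v : List V) (f : PowerSeries ℤ) (n : ℕ) :
    PowerSeries.coeff n (corr u v * f)
      = ∑ k ∈ Finset.Ico 1 (min u.length v.length),
          if u.drop (u.length - k) = v.take k ∧ v.length - k ≤ n
          then PowerSeries.coeff (n - (v.length - k)) f else 0 := by
  unfold corr
  rw [Finset.sum_mul, map_sum]
  apply Finset.sum_congr rfl
  intro k _
  rw [ite_mul, zero_mul, apply_ite (PowerSeries.coeff n), map_zero, mul_comm,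
    PowerSeries.coeff_mul_X_pow', ite_and]

lemma coeff_gfEnd (B : Finset (List V)) (v : List V) (n : ℕ) :
    PowerSeries.coeff n (clusterGFEnd B v)
      = ∑ l ∈ Finset.range (n + 1), (-1 : ℤ) ^ l * cce B v n l := by
  rw [clusterGFEnd, PowerSeries.coeff_mk]
  simp_rw [cce_eq]

end GJ


/-- The linear system for the cluster generating functions:
`C_v = -s^{|v|} - ∑_{u ∈ B} (u:v) C_u`, and `C = ∑_{v ∈ B} C_v`. -/
theorem stmt6 {V : Type*} [Fintype V] [DecidableEq V]
    (B : Finset (List V)) (hB : ∀ b ∈ B, b ≠ [])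
    (hanti : ∀ u ∈ B, ∀ v ∈ B, u <:+: v → u = v) :
    (∀ v ∈ B, clusterGFEnd B v =
        -(PowerSeries.X ^ v.length) - ∑ u ∈ B, corr u v * clusterGFEnd B u) ∧
      clusterGF B = ∑ v ∈ B, clusterGFEnd B v := by
  constructor
  · intro v hv
    apply PowerSeries.ext
    intro n
    rw [GJ.coeff_gfEnd, GJ.key hB hv n]
    rw [map_sub, map_neg, PowerSeries.coeff_X_pow, map_sum]
    rw [sub_eq_add_neg, ← Finset.sum_neg_distrib]
    congr 1
    apply Finset.sum_congr rfl
    intro u hu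
    rw [GJ.coeff_corr_mul, ← Finset.sum_neg_distrib]
    apply Finset.sum_congr rfl
    intro k hk
    rw [Finset.mem_Ico] at hk
    split_ifs with hcond
    · rw [GJ.coeff_gfEnd,
        GJ.sum_ext (n := n) (m := n - (v.length - k)) hB u (by omega)]
      ring
    · ring
  · apply PowerSeries.ext
    intro n
    rw [clusterGF, PowerSeries.coeff_mk, map_sum]
    have hsplit : ∀ l, (clusterCount B n l : ℤ)
        = ∑ v ∈ B, (GJ.cce B v n l : ℤ) := by
      intro l
      rw [GJ.cca_eq, GJ.cca, GJ.card_split hB n l]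
      push_cast
      rfl
    simp_rw [hsplit, Finset.mul_sum]
    rw [Finset.sum_comm]
    apply Finset.sum_congr rfl
    intro v _
    rw [GJ.coeff_gfEnd]
end

section
/- Suppose B is a factor antichain, and for natural numbers n, m let a_m(n) be the number of words of length n over V having exactly m occurrences of B. Let F(s,t) be the formal power series in s over ℤ[t] whose coefficient of s^n is Σ_m a_m(n) t^m, and let C(s,t) be the formal power series in s over ℤ[t] whose coefficient of s^n is the (finite) sum of (t−1)^l over all clusters whose word has length n. Then (1 − d·s − C(s,t)) · F(s,t) = 1 in (ℤ[t])[[s]]. -/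
/-- The finite set of occurrences of a member of `B` in the word `w`. -/
def Occs {V : Type*} [DecidableEq V] (B : Finset (List V)) (w : List V) :
    Finset (ℕ × List V) :=
  (Finset.range (w.length + 1) ×ˢ B).filter fun p => (w.drop p.1).take p.2.length = p.2

/-- `a_m(n)`: the number of words of length `n` with exactly `m` occurrences of `B`. -/
noncomputable def occCount {V : Type*} [Fintype V] [DecidableEq V]
    (B : Finset (List V)) (n m : ℕ) : ℕ :=
  Nat.card {f : Fin n → V // (Occs B (List.ofFn f)).card = m}

/-- `F(s,t) ∈ ℤ[t][[s]]`: coefficient of `s^n` is `∑_m a_m(n) t^m` (here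
`m ≤ (n+1)·|B|` since there are at most that many occurrences). -/
noncomputable def occGF {V : Type*} [Fintype V] [DecidableEq V]
    (B : Finset (List V)) : PowerSeries (Polynomial ℤ) :=
  PowerSeries.mk fun n =>
    ∑ m ∈ Finset.range ((n + 1) * B.card + 1),
      (occCount B n m : Polynomial ℤ) * Polynomial.X ^ m

/-- `C(s,t) ∈ ℤ[t][[s]]`: coefficient of `s^n` is the sum of `(t-1)^l` over all
clusters whose word has length `n`. -/
noncomputable def clusterGFT {V : Type*} [Fintype V] (B : Finset (List V)) :
    PowerSeries (Polynomial ℤ) :=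
  PowerSeries.mk fun n =>
    ∑ l ∈ Finset.range (n + 1),
      (Polynomial.X - 1 : Polynomial ℤ) ^ l * clusterCount B n l

theorem List.Chain'.imp {α : Type*} {R S : α → α → Prop} (H : ∀ a b, R a b → S a b)
    {l : List α} (p : List.Chain' R l) : List.Chain' S l :=
  List.IsChain.imp (fun ⦃a b⦄ h => H a b h) p

theorem List.Pairwise.chain' {α : Type*} {R : α → α → Prop} {l : List α}
    (p : l.Pairwise R) : List.Chain' R l :=
  p.isChain

namespace GJ
open List Finset Polynomial

variable {α : Type*}

/-- Sum of x^length over all sublists. -/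
lemma sum_sublists_pow {R : Type*} [CommRing R] (x : R) (l : List α) :
    (l.sublists.map fun t => x ^ t.length).sum = (x + 1) ^ l.length := by
  induction l with
  | nil => simp
  | cons a l ih =>
    have hperm := List.sublists_cons_perm_append a l
    rw [List.Perm.sum_eq (hperm.map fun t => x ^ t.length)]
    rw [List.map_append, List.sum_append, List.map_map]
    have : ((fun t : List α => x ^ t.length) ∘ fun t => a :: t) = fun t => x * x ^ t.length := by
      funext t; simp [pow_succ]; ring
    rw [this]
    have h2 : (List.map (fun t : List α => x * x ^ t.length) l.sublists).sum
        = x * (List.map (fun t : List α => x ^ t.length) l.sublists).sum := by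
      induction l.sublists with
      | nil => simp
      | cons hd tl ih2 => simp [ih2]; ring
    rw [h2, ih]
    simp [pow_succ]; ring

/-- strict-sorted subset is a sublist -/
lemma sublist_of_pairwise_subset {r : α → α → Prop} (hasymm : ∀ a b, r a b → ¬ r b a) :
    ∀ {L M : List α}, M.Pairwise r → L.Pairwise r → L ⊆ M → L.Sublist M := by
  intro L M
  induction M generalizing L with
  | nil => intro _ _ hsub; simp [List.subset_nil.mp hsub]
  | cons m M ih =>
    intro hM hL hsub
    cases L with
    | nil => exact List.nil_sublist _
    | cons l L' =>
      rcases List.pairwise_cons.mp hM with ⟨hmM, hM'⟩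
      rcases List.pairwise_cons.mp hL with ⟨hlL, hL'⟩
      by_cases hlm : l = m
      · subst hlm
        refine List.Sublist.cons₂ _ ?_
        apply ih hM' hL'
        intro x hx
        have hxM : x ∈ l :: M := hsub (List.mem_cons_of_mem _ hx)
        rcases List.mem_cons.mp hxM with h | h
        · exact absurd (h ▸ hlL x hx) (fun hh => hasymm _ _ hh hh)
        · exact h
      · apply List.Sublist.cons
        apply ih hM' hL
        intro x hx
        have hxM : x ∈ m :: M := hsub hx
        rcases List.mem_cons.mp hxM with h | h
        · -- x = m; derive contradiction : m ∈ L
          exfalso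
          cases h
          -- l ∈ m :: M, l ≠ m so l ∈ M, so r m l. Also x = m ∈ l :: L'.
          have hlM : l ∈ M := by
            rcases List.mem_cons.mp (hsub (List.mem_cons_self)) with h' | h'
            · exact absurd h' hlm
            · exact h'
          have hrml : r m l := hmM l hlM
          rcases List.mem_cons.mp hx with h' | h'
          · exact hlm h'.symm
          · exact hasymm _ _ hrml (hlL _ h')
        · exact h

/-- lists over s with length ≤ k -/
def listsOf [DecidableEq α] (s : Finset α) : ℕ → Finset (List α)
  | 0 => {[]}
  | (k+1) => {[]} ∪ (s ×ˢ listsOf s k).image (fun p => p.1 :: p.2)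

lemma mem_listsOf [DecidableEq α] {s : Finset α} :
    ∀ {k : ℕ} {L : List α}, L ∈ listsOf s k ↔ L.length ≤ k ∧ ∀ x ∈ L, x ∈ s := by
  intro k
  induction k with
  | zero =>
    intro L
    simp only [listsOf, Finset.mem_singleton]
    constructor
    · rintro rfl; simp
    · rintro ⟨h1, _⟩; exact List.length_eq_zero_iff.mp (Nat.le_zero.mp h1)
  | succ k ih =>
    intro L
    simp only [listsOf, Finset.mem_union, Finset.mem_singleton, Finset.mem_image,
      Finset.mem_product]
    constructor
    · rintro (rfl | ⟨⟨a, t⟩, ⟨ha, ht⟩, rfl⟩)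
      · simp
      · rcases ih.mp ht with ⟨h1, h2⟩
        refine ⟨by simpa using h1, ?_⟩
        intro x hx
        rcases List.mem_cons.mp hx with rfl | hx
        · exact ha
        · exact h2 x hx
    · rintro ⟨h1, h2⟩
      cases L with
      | nil => exact Or.inl rfl
      | cons a t =>
        refine Or.inr ⟨(a, t), ⟨h2 a (List.mem_cons_self), ih.mpr ⟨?_, ?_⟩⟩, rfl⟩
        · simpa using h1
        · exact fun x hx => h2 x (List.mem_cons_of_mem _ hx)

/-- a pairwise-strict-increasing list of ℕ keys with keys < n has length ≤ n -/
lemma length_le_of_pairwise_lt_keys {β : Type*} {L : List (ℕ × β)} (n : ℕ)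
    (hp : L.Pairwise fun p q => p.1 < q.1) (hb : ∀ p ∈ L, p.1 < n) : L.length ≤ n := by
  have hnd : (L.map Prod.fst).Nodup :=
    List.pairwise_map.mpr (hp.imp fun h => Nat.ne_of_lt h)
  have hsub : (L.map Prod.fst).toFinset ⊆ Finset.range n := by
    intro i hi
    rw [List.mem_toFinset, List.mem_map] at hi
    rcases hi with ⟨p, hp, rfl⟩
    exact Finset.mem_range.mpr (hb p hp)
  calc L.length = (L.map Prod.fst).length := (List.length_map _).symm
    _ = (L.map Prod.fst).toFinset.card := (List.toFinset_card_of_nodup hnd).symm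
    _ ≤ (Finset.range n).card := Finset.card_le_card hsub
    _ = n := Finset.card_range n

-- occurrence basics
section Occ
variable {V : Type*} [DecidableEq V] {B : Finset (List V)} {w : List V}

instance : DecidablePred (IsOcc B w) := fun p => by unfold IsOcc; infer_instance

lemma isOcc_bound (hB : ∀ b ∈ B, b ≠ []) {p : ℕ × List V} (h : IsOcc B w p) :
    p.2 ≠ [] ∧ p.1 + p.2.length ≤ w.length := by
  obtain ⟨hb, he⟩ := h
  have hne := hB _ hb
  refine ⟨hne, ?_⟩
  have hlen : p.2.length ≤ w.length - p.1 := by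
    have := congrArg List.length he
    simp only [List.length_take, List.length_drop] at this
    omega
  have hpos : 0 < p.2.length := List.length_pos_iff.mpr hne
  omega

lemma mem_occs_iff (hB : ∀ b ∈ B, b ≠ []) {p : ℕ × List V} :
    p ∈ Occs B w ↔ IsOcc B w p := by
  unfold Occs IsOcc
  simp only [Finset.mem_filter, Finset.mem_product, Finset.mem_range]
  constructor
  · rintro ⟨⟨_, hb⟩, he⟩; exact ⟨hb, he⟩
  · rintro ⟨hb, he⟩
    refine ⟨⟨?_, hb⟩, he⟩
    have := isOcc_bound hB (⟨hb, he⟩ : IsOcc B w p)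
    omega

/-- an occurrence's word is an infix determined by position -/
lemma occ_infix_of_nested {i j : ℕ} {b b' : List V}
    (h1 : IsOcc B w (i, b)) (h2 : IsOcc B w (j, b'))
    (hij : i ≤ j) (hje : j + b'.length ≤ i + b.length) : b' <:+: b := by
  obtain ⟨-, he1⟩ := h1
  obtain ⟨-, he2⟩ := h2
  simp only at he1 he2
  have key : (b.drop (j - i)).take b'.length = b' := by
    conv_lhs => rw [← he1]
    rw [List.drop_take]
    rw [List.drop_drop]
    have hji : i + (j - i) = j := by omega
    rw [hji]
    rw [List.take_take]
    rw [min_eq_left (by omega)]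
    exact he2
  rw [← key]
  exact ((List.take_prefix _ _).isInfix).trans ((List.drop_suffix _ _).isInfix)

lemma occ_eq_of_nested (hanti : ∀ u ∈ B, ∀ v ∈ B, u <:+: v → u = v)
    {i j : ℕ} {b b' : List V}
    (h1 : IsOcc B w (i, b)) (h2 : IsOcc B w (j, b'))
    (hij : i ≤ j) (hje : j + b'.length ≤ i + b.length) : i = j ∧ b = b' := by
  have hinf := occ_infix_of_nested h1 h2 hij hje
  have heq : b' = b := hanti _ h2.1 _ h1.1 hinf
  subst heq
  exact ⟨by omega, rfl⟩

lemma occ_same_start (hanti : ∀ u ∈ B, ∀ v ∈ B, u <:+: v → u = v)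
    {i : ℕ} {b b' : List V}
    (h1 : IsOcc B w (i, b)) (h2 : IsOcc B w (i, b')) : b = b' := by
  rcases Nat.le_total b'.length b.length with h | h
  · exact ((occ_eq_of_nested hanti h1 h2 le_rfl (by omega)).2)
  · exact ((occ_eq_of_nested hanti h2 h1 le_rfl (by omega)).2).symm

lemma occ_end_lt (hanti : ∀ u ∈ B, ∀ v ∈ B, u <:+: v → u = v)
    {i j : ℕ} {b b' : List V}
    (h1 : IsOcc B w (i, b)) (h2 : IsOcc B w (j, b'))
    (hij : i < j) : i + b.length < j + b'.length := by
  by_contra hc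
  push_neg at hc
  obtain ⟨heq, -⟩ := occ_eq_of_nested hanti h1 h2 (by omega) hc
  omega

end Occ

section OccList
variable {V : Type*} [DecidableEq V] {B : Finset (List V)} {w : List V}

lemma pairwise_of_length_le_one {γ : Type*} {r : γ → γ → Prop} {l : List γ}
    (h : l.length ≤ 1) : l.Pairwise r := by
  match l with
  | [] => exact List.Pairwise.nil
  | [a] => simp
  | a :: b :: t => simp at h

lemma pairwise_flatMap_blocks {γ : Type*} (f : ℕ → List γ) {r : γ → γ → Prop} {l : List ℕ}
    (hl : l.Pairwise (· < ·)) (hf : ∀ i, (f i).Pairwise r)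
    (hc : ∀ i j, i < j → ∀ x ∈ f i, ∀ y ∈ f j, r x y) :
    (l.flatMap f).Pairwise r := by
  induction l with
  | nil => simp
  | cons a l ih =>
    rcases List.pairwise_cons.mp hl with ⟨ha, hl'⟩
    rw [List.flatMap_cons, List.pairwise_append]
    refine ⟨hf a, ih hl', ?_⟩
    intro x hx y hy
    rw [List.mem_flatMap] at hy
    rcases hy with ⟨j, hj, hyj⟩
    exact hc a j (ha j hj) x hx y hyj

/-- canonical sorted list of all occurrences -/
noncomputable def occList (B : Finset (List V)) (w : List V) : List (ℕ × List V) :=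
  (List.range w.length).flatMap fun i =>
    ((B.filter fun b => (w.drop i).take b.length = b).toList).map fun b => (i, b)

lemma mem_occList (hB : ∀ b ∈ B, b ≠ []) {p : ℕ × List V} :
    p ∈ occList B w ↔ IsOcc B w p := by
  unfold occList
  simp only [List.mem_flatMap, List.mem_range, List.mem_map, Finset.mem_toList,
    Finset.mem_filter]
  constructor
  · rintro ⟨i, hi, b, ⟨hb, he⟩, rfl⟩; exact ⟨hb, he⟩
  · rintro h
    obtain ⟨hb, he⟩ := h
    have hbd := isOcc_bound hB (⟨hb, he⟩ : IsOcc B w p)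
    refine ⟨p.1, ?_, p.2, ⟨hb, he⟩, rfl⟩
    have : 0 < p.2.length := List.length_pos_iff.mpr hbd.1
    omega

lemma occList_pairwise (hanti : ∀ u ∈ B, ∀ v ∈ B, u <:+: v → u = v) :
    (occList B w).Pairwise (fun p q => p.1 < q.1) := by
  apply pairwise_flatMap_blocks _ List.pairwise_lt_range
  · intro i
    apply pairwise_of_length_le_one
    rw [List.length_map, Finset.length_toList]
    apply Finset.card_le_one.mpr
    intro b hb b' hb'
    rw [Finset.mem_filter] at hb hb'
    exact occ_same_start hanti (⟨hb.1, hb.2⟩ : IsOcc B w (i, b)) ⟨hb'.1, hb'.2⟩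
  · rintro i j hij x hx y hy
    rw [List.mem_map] at hx hy
    rcases hx with ⟨b, -, rfl⟩
    rcases hy with ⟨b', -, rfl⟩
    exact hij

lemma occList_nodup (hanti : ∀ u ∈ B, ∀ v ∈ B, u <:+: v → u = v) :
    (occList B w).Nodup :=
  (occList_pairwise hanti).imp fun h => by
    intro he; rw [he] at h; exact lt_irrefl _ h

lemma occList_toFinset (hB : ∀ b ∈ B, b ≠ [])
    (hanti : ∀ u ∈ B, ∀ v ∈ B, u <:+: v → u = v) :
    (occList B w).toFinset = Occs B w := by
  ext p
  rw [List.mem_toFinset, mem_occList hB, mem_occs_iff hB]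

lemma occList_length (hB : ∀ b ∈ B, b ≠ [])
    (hanti : ∀ u ∈ B, ∀ v ∈ B, u <:+: v → u = v) :
    (occList B w).length = (Occs B w).card := by
  rw [← occList_toFinset hB hanti, List.toFinset_card_of_nodup (occList_nodup hanti)]

/-- marked subsets as sorted lists -/
def MarkedP (B : Finset (List V)) (w : List V) (L : List (ℕ × List V)) : Prop :=
  (∀ p ∈ L, IsOcc B w p) ∧ L.Pairwise (fun p q => p.1 < q.1)

instance : DecidablePred (MarkedP B w) := fun L => by unfold MarkedP; infer_instance

lemma sublist_occList_iff (hB : ∀ b ∈ B, b ≠ [])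
    (hanti : ∀ u ∈ B, ∀ v ∈ B, u <:+: v → u = v) {L : List (ℕ × List V)} :
    L.Sublist (occList B w) ↔ MarkedP B w L := by
  constructor
  · intro h
    exact ⟨fun p hp => (mem_occList hB).mp (h.subset hp),
      (occList_pairwise hanti).sublist h⟩
  · rintro ⟨h1, h2⟩
    apply sublist_of_pairwise_subset (r := fun p q : ℕ × List V => p.1 < q.1)
      (fun a b hab hba => by omega) (occList_pairwise hanti) h2
    intro p hp
    exact (mem_occList hB).mpr (h1 p hp)

lemma marked_mem_listsOf (hB : ∀ b ∈ B, b ≠ []) {L : List (ℕ × List V)}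
    (h : MarkedP B w L) : L ∈ listsOf (Finset.range w.length ×ˢ B) w.length := by
  rw [mem_listsOf]
  constructor
  · apply length_le_of_pairwise_lt_keys _ h.2
    intro p hp
    have := isOcc_bound hB (h.1 p hp)
    have : 0 < p.2.length := List.length_pos_iff.mpr this.1
    have := (isOcc_bound hB (h.1 p hp)).2
    omega
  · intro p hp
    have hocc := h.1 p hp
    have hbd := isOcc_bound hB hocc
    have : 0 < p.2.length := List.length_pos_iff.mpr hbd.1
    rw [Finset.mem_product, Finset.mem_range]
    exact ⟨by omega, hocc.1⟩

lemma sum_marked_eq (hB : ∀ b ∈ B, b ≠ [])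
    (hanti : ∀ u ∈ B, ∀ v ∈ B, u <:+: v → u = v) {n : ℕ} (hw : w.length = n) :
    ∑ L ∈ (listsOf (Finset.range n ×ˢ B) n).filter (fun L => MarkedP B w L),
      (Polynomial.X - 1 : Polynomial ℤ) ^ L.length
      = (Polynomial.X : Polynomial ℤ) ^ (Occs B w).card := by
  have hset : (listsOf (Finset.range n ×ˢ B) n).filter (fun L => MarkedP B w L)
      = (occList B w).sublists.toFinset := by
    ext L
    rw [Finset.mem_filter, List.mem_toFinset, List.mem_sublists,
      sublist_occList_iff hB hanti]
    constructor
    · rintro ⟨-, h⟩; exact h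
    · intro h; exact ⟨hw ▸ marked_mem_listsOf hB h, h⟩
  rw [hset, List.sum_toFinset _ ((List.nodup_sublists).mpr (occList_nodup hanti))]
  rw [sum_sublists_pow (Polynomial.X - 1 : Polynomial ℤ) (occList B w)]
  rw [sub_add_cancel, occList_length hB hanti]

end OccList

section Cut
variable {V : Type*}

/-- overlap relation -/
def Ovl (p q : ℕ × List V) : Prop := q.1 < p.1 + p.2.length

instance : ∀ p q : ℕ × List V, Decidable (Ovl p q) := fun p q => by
  unfold Ovl; infer_instance

/-- cut off the maximal overlapping initial run -/
def cut : List (ℕ × List V) → List (ℕ × List V) × List (ℕ × List V)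
  | [] => ([], [])
  | [p] => ([p], [])
  | p :: q :: r =>
    if Ovl p q then (p :: (cut (q :: r)).1, (cut (q :: r)).2) else ([p], q :: r)

lemma cut_append : ∀ L : List (ℕ × List V), (cut L).1 ++ (cut L).2 = L
  | [] => rfl
  | [p] => rfl
  | p :: q :: r => by
    rw [cut]
    split
    · simp only [List.cons_append, List.cons.injEq, true_and]
      exact cut_append (q :: r)
    · rfl

lemma cut_fst_ne_nil : ∀ L : List (ℕ × List V), L ≠ [] → (cut L).1 ≠ []
  | [], h => absurd rfl h
  | [p], _ => by simp [cut]
  | p :: q :: r, _ => by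
    rw [cut]; split <;> simp

lemma cut_head? : ∀ L : List (ℕ × List V), (cut L).1.head? = L.head?
  | [] => rfl
  | [p] => rfl
  | p :: q :: r => by rw [cut]; split <;> rfl

lemma cut_chain' : ∀ L : List (ℕ × List V), (cut L).1.Chain' Ovl
  | [] => List.isChain_nil
  | [p] => List.isChain_singleton p
  | p :: q :: r => by
    rw [cut]
    split
    · rename_i hovl
      show List.IsChain _ _
      rw [List.isChain_cons]
      refine ⟨?_, cut_chain' (q :: r)⟩
      intro y hy
      rw [cut_head? (q :: r)] at hy
      simp only [List.head?_cons, Option.mem_def, Option.some.injEq] at hy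
      exact hy ▸ hovl
    · exact List.isChain_singleton p

lemma getLast?_cons_ne {γ : Type*} (a : γ) {l : List γ} (h : l ≠ []) :
    (a :: l).getLast? = l.getLast? := by
  cases l with
  | nil => exact absurd rfl h
  | cons b t => exact List.getLast?_cons_cons

lemma cut_boundary : ∀ L : List (ℕ × List V), ∀ p q,
    (cut L).1.getLast? = some p → (cut L).2.head? = some q →
    p.1 + p.2.length ≤ q.1
  | [] => by intro p q h; simp [cut] at h
  | [p'] => by intro p q _ h; simp [cut] at h
  | p' :: q' :: r => by
    intro p q hl hh
    rw [cut] at hl hh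
    by_cases hovl : Ovl p' q'
    · rw [if_pos hovl] at hl hh
      simp only at hl hh
      rw [getLast?_cons_ne _ (cut_fst_ne_nil (q' :: r) (by simp))] at hl
      exact cut_boundary (q' :: r) p q hl hh
    · rw [if_neg hovl] at hl hh
      simp only [List.getLast?_singleton, Option.some.injEq, List.head?_cons] at hl hh
      subst hl
      cases hh
      unfold Ovl at hovl
      omega

lemma cut_spec : ∀ (K R : List (ℕ × List V)), K ≠ [] → K.Chain' Ovl →
    (∀ p q, K.getLast? = some p → R.head? = some q → p.1 + p.2.length ≤ q.1) →
    cut (K ++ R) = (K, R)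
  | [], _, h, _, _ => absurd rfl h
  | [p], R, _, _, hb => by
    cases R with
    | nil => simp [cut]
    | cons q R' =>
      simp only [List.cons_append, List.nil_append]
      rw [cut, if_neg]
      have := hb p q (by simp) (by simp)
      unfold Ovl
      omega
  | p :: p' :: K'', R, _, hch, hb => by
    have hovl : Ovl p p' := (List.isChain_cons_cons.mp hch).1
    simp only [List.cons_append]
    rw [cut, if_pos hovl]
    have hrec : cut ((p' :: K'') ++ R) = (p' :: K'', R) := by
      apply cut_spec (p' :: K'') R (by simp) (List.isChain_cons_cons.mp hch).2
      intro a b ha hbq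
      apply hb a b _ hbq
      rw [List.getLast?_cons_cons]
      exact ha
    simp only [List.cons_append] at hrec
    rw [hrec]

lemma pairwise_rel_getLast {γ : Type*} {r : γ → γ → Prop} :
    ∀ {K : List γ} (h : K ≠ []), K.Pairwise r → ∀ p ∈ K,
      p = K.getLast h ∨ r p (K.getLast h)
  | [], h => absurd rfl h
  | [a], _ => by simp
  | a :: b :: t, _ => by
    intro hpw p hp
    rw [List.getLast_cons_cons]
    rcases List.pairwise_cons.mp hpw with ⟨ha, hpw'⟩
    rcases List.mem_cons.mp hp with rfl | hp'
    · exact Or.inr (ha _ (List.getLast_mem _))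
    · exact pairwise_rel_getLast (by simp) hpw' p hp'

lemma pairwise_rel_head {γ : Type*} {r : γ → γ → Prop} {K : List γ} (h : K ≠ [])
    (hpw : K.Pairwise r) : ∀ p ∈ K, p = K.head h ∨ r (K.head h) p := by
  cases K with
  | nil => exact absurd rfl h
  | cons a t =>
    intro p hp
    rcases List.mem_cons.mp hp with rfl | hp'
    · exact Or.inl rfl
    · exact Or.inr ((List.pairwise_cons.mp hpw).1 p hp')

end Cut

section Main
variable {V : Type*} [Fintype V] [DecidableEq V] {B : Finset (List V)}

instance : ∀ (w : List V) L, Decidable (IsCluster B w L) := fun w L => by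
  unfold IsCluster IsOcc List.Chain'; infer_instance

def wordF (V : Type*) [Fintype V] [DecidableEq V] (n : ℕ) : Finset (List V) :=
  (listsOf (Finset.univ : Finset V) n).filter fun w => w.length = n

lemma mem_wordF {n : ℕ} {w : List V} : w ∈ wordF V n ↔ w.length = n := by
  unfold wordF
  rw [Finset.mem_filter, mem_listsOf]
  constructor
  · rintro ⟨-, h⟩; exact h
  · intro h; exact ⟨⟨le_of_eq h, fun x _ => Finset.mem_univ x⟩, h⟩

def MFw (B : Finset (List V)) (n : ℕ) : Finset (List V × List (ℕ × List V)) :=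
  (wordF V n ×ˢ listsOf (Finset.range n ×ˢ B) n).filter fun q => MarkedP B q.1 q.2

def ClFw (B : Finset (List V)) (n : ℕ) : Finset (List V × List (ℕ × List V)) :=
  (wordF V n ×ˢ listsOf (Finset.range n ×ˢ B) n).filter fun q => IsCluster B q.1 q.2

noncomputable def Mw (B : Finset (List V)) (n : ℕ) : Polynomial ℤ :=
  ∑ q ∈ MFw B n, (Polynomial.X - 1) ^ q.2.length

noncomputable def Clw (B : Finset (List V)) (n : ℕ) : Polynomial ℤ :=
  ∑ q ∈ ClFw B n, (Polynomial.X - 1) ^ q.2.length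

lemma chain'_fst_lt_pairwise {l : List (ℕ × List V)}
    (h : l.Chain' fun p q => p.1 < q.1) : l.Pairwise fun p q => p.1 < q.1 := by
  have : IsTrans (ℕ × List V) (fun p q => p.1 < q.1) := ⟨fun a b c h1 h2 => lt_trans h1 h2⟩
  have : Trans (fun p q : ℕ × List V => p.1 < q.1) (fun p q : ℕ × List V => p.1 < q.1)
    (fun p q : ℕ × List V => p.1 < q.1) := ⟨fun h1 h2 => lt_trans h1 h2⟩
  exact List.isChain_iff_pairwise.mp h

lemma isCluster_markedP {w : List V} {L : List (ℕ × List V)}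
    (h : IsCluster B w L) : MarkedP B w L :=
  ⟨h.2.1, chain'_fst_lt_pairwise (List.Chain'.imp (fun a b hh => hh.1) h.2.2.2.2)⟩

lemma mem_MFw (hB : ∀ b ∈ B, b ≠ []) {n : ℕ} {q : List V × List (ℕ × List V)} :
    q ∈ MFw B n ↔ q.1.length = n ∧ MarkedP B q.1 q.2 := by
  unfold MFw
  rw [Finset.mem_filter, Finset.mem_product, mem_wordF]
  constructor
  · rintro ⟨⟨h1, -⟩, h2⟩; exact ⟨h1, h2⟩
  · rintro ⟨h1, h2⟩
    exact ⟨⟨h1, h1 ▸ marked_mem_listsOf hB h2⟩, h2⟩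

lemma mem_ClFw (hB : ∀ b ∈ B, b ≠ []) {n : ℕ} {q : List V × List (ℕ × List V)} :
    q ∈ ClFw B n ↔ q.1.length = n ∧ IsCluster B q.1 q.2 := by
  unfold ClFw
  rw [Finset.mem_filter, Finset.mem_product, mem_wordF]
  constructor
  · rintro ⟨⟨h1, -⟩, h2⟩; exact ⟨h1, h2⟩
  · rintro ⟨h1, h2⟩
    exact ⟨⟨h1, h1 ▸ marked_mem_listsOf hB (isCluster_markedP h2)⟩, h2⟩

lemma chain'_and {γ : Type*} {r s : γ → γ → Prop} {l : List γ}
    (hr : l.Chain' r) (hs : l.Chain' s) : l.Chain' fun a b => r a b ∧ s a b := by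
  unfold List.Chain' at *
  rw [List.isChain_iff_getElem] at *
  exact fun i h => ⟨hr i h, hs i h⟩

lemma isOcc_take {w : List V} {p : ℕ × List V} {j : ℕ} (h : IsOcc B w p)
    (hj : p.1 + p.2.length ≤ j) : IsOcc B (w.take j) p := by
  obtain ⟨hb, he⟩ := h
  refine ⟨hb, ?_⟩
  rw [List.drop_take, List.take_take, min_eq_left (by omega)]
  exact he

lemma isOcc_drop {w : List V} {p : ℕ × List V} {j : ℕ} (h : IsOcc B w p)
    (hj : j ≤ p.1) : IsOcc B (w.drop j) (p.1 - j, p.2) := by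
  obtain ⟨hb, he⟩ := h
  refine ⟨hb, ?_⟩
  simp only
  rw [List.drop_drop]
  have : j + (p.1 - j) = p.1 := by omega
  rw [this]
  exact he

lemma isOcc_append_left (hB : ∀ b ∈ B, b ≠ []) {u v : List V} {p : ℕ × List V}
    (h : IsOcc B u p) : IsOcc B (u ++ v) p := by
  have hbd := isOcc_bound hB h
  obtain ⟨hb, he⟩ := h
  refine ⟨hb, ?_⟩
  rw [List.drop_append_of_le_length (by omega),
    List.take_append_of_le_length (by rw [List.length_drop]; omega)]
  exact he

lemma isOcc_append_right {u v : List V} {p : ℕ × List V}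
    (h : IsOcc B v p) : IsOcc B (u ++ v) (p.1 + u.length, p.2) := by
  obtain ⟨hb, he⟩ := h
  refine ⟨hb, ?_⟩
  simp only
  rw [Nat.add_comm p.1 u.length, List.drop_append, List.drop_eq_nil_of_le (by omega),
    List.nil_append, Nat.add_sub_cancel_left]
  exact he

lemma Mw_zero : Mw B 0 = 1 := by
  have h : MFw B 0 = {([], [])} := by
    ext q
    rw [Finset.mem_singleton]
    unfold MFw
    rw [Finset.mem_filter, Finset.mem_product, mem_wordF, mem_listsOf]
    constructor
    · rintro ⟨⟨h1, h2, -⟩, h3, -⟩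
      have hq1 : q.1 = [] := List.length_eq_zero_iff.mp h1
      have hq2 : q.2 = [] := List.length_eq_zero_iff.mp (Nat.le_zero.mp h2)
      rw [Prod.ext_iff]
      exact ⟨hq1, hq2⟩
    · intro h
      rw [h]
      simp [MarkedP]
  rw [Mw, h]
  simp

end Main

section CaseA
variable {V : Type*} [Fintype V] [DecidableEq V] {B : Finset (List V)}

lemma isOcc_cons {a : V} {u : List V} {p : ℕ × List V} (h : IsOcc B u p) :
    IsOcc B (a :: u) (p.1 + 1, p.2) := by
  obtain ⟨hb, he⟩ := h
  exact ⟨hb, by simpa using he⟩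

lemma caseA (hB : ∀ b ∈ B, b ≠ []) (n : ℕ) :
    ∑ q ∈ (MFw B (n+1)).filter (fun q => ¬ ∃ p ∈ q.2, p.1 = 0),
      ((Polynomial.X : Polynomial ℤ) - 1) ^ q.2.length
    = (Fintype.card V) * Mw B n := by
  have h2 : ∑ t ∈ (Finset.univ : Finset V) ×ˢ MFw B n,
      ((Polynomial.X : Polynomial ℤ) - 1) ^ t.2.2.length
      = (Fintype.card V) * Mw B n := by
    rw [Finset.sum_product]
    have hc : ∀ x : V, (∑ y ∈ MFw B n, ((Polynomial.X : Polynomial ℤ) - 1) ^ (x, y).2.2.length)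
        = Mw B n := fun _ => rfl
    rw [Finset.sum_congr rfl (fun x _ => hc x), Finset.sum_const, Finset.card_univ, nsmul_eq_mul]
  rw [← h2]
  refine Finset.sum_bij'
    (fun q hq => (q.1.head (by
      have h1 := ((mem_MFw hB).mp (Finset.mem_filter.mp hq).1).1
      exact List.ne_nil_of_length_pos (by omega)),
      (q.1.tail, q.2.map fun p => (p.1 - 1, p.2))))
    (fun t _ => (t.1 :: t.2.1, t.2.2.map fun p => (p.1 + 1, p.2)))
    ?_ ?_ ?_ ?_ ?_
  · -- hi
    intro q hq
    obtain ⟨hmem, hnot⟩ := Finset.mem_filter.mp hq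
    obtain ⟨hlen, hocc, hpw⟩ := (mem_MFw hB).mp hmem
    push_neg at hnot
    have hge1 : ∀ p ∈ q.2, 1 ≤ p.1 := fun p hp => Nat.one_le_iff_ne_zero.mpr (hnot p hp)
    rw [Finset.mem_product]
    refine ⟨Finset.mem_univ _, (mem_MFw hB).mpr ⟨by simp [List.length_tail, hlen], ?_, ?_⟩⟩
    · intro p' hp'
      rw [List.mem_map] at hp'
      obtain ⟨p, hp, rfl⟩ := hp'
      have := isOcc_drop (hocc p hp) (hge1 p hp)
      rwa [List.drop_one] at this
    · rw [List.pairwise_map]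
      exact hpw.imp_of_mem fun {p} {p'} hp hp' hlt => by
        have := hge1 p hp; omega
  · -- hj
    rintro ⟨a, u, L'⟩ ht
    rw [Finset.mem_product] at ht
    obtain ⟨-, hmem⟩ := ht
    obtain ⟨hlen, hocc, hpw⟩ := (mem_MFw hB).mp hmem
    rw [Finset.mem_filter]
    constructor
    · refine (mem_MFw hB).mpr ⟨by simp [hlen], ?_, ?_⟩
      · intro p hp
        rw [List.mem_map] at hp
        obtain ⟨p', hp', rfl⟩ := hp
        exact isOcc_cons (hocc p' hp')
      · rw [List.pairwise_map]
        exact hpw.imp fun hlt => by omega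
    · intro hcon
      obtain ⟨p, hp, hp0⟩ := hcon
      rw [List.mem_map] at hp
      obtain ⟨p', -, rfl⟩ := hp
      simp at hp0
  · -- left inverse
    intro q hq
    obtain ⟨hmem, hnot⟩ := Finset.mem_filter.mp hq
    push_neg at hnot
    refine Prod.ext ?_ ?_
    · exact List.cons_head_tail _
    · simp only [List.map_map]
      rw [List.map_congr_left (g := id) (fun p hp => by
        have h1 : 1 ≤ p.1 := Nat.one_le_iff_ne_zero.mpr (hnot p hp)
        simp only [Function.comp_apply, id_eq]
        rw [Nat.sub_add_cancel h1])]
      exact List.map_id _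
  · -- right inverse
    rintro ⟨a, u, L'⟩ ht
    simp only [List.head_cons, List.tail_cons, List.map_map]
    refine Prod.ext rfl (Prod.ext rfl ?_)
    simp only
    rw [List.map_congr_left (g := id) (fun p hp => by
      simp only [Function.comp_apply, id_eq, Nat.add_sub_cancel])]
    exact List.map_id _
  · -- weights
    intro q hq
    simp [List.length_map]

end CaseA

section CaseB
variable {V : Type*} [Fintype V] [DecidableEq V] {B : Finset (List V)}

/-- end position of the last element -/
def lastEnd (K : List (ℕ × List V)) : ℕ :=
  ((K.map fun p => p.1 + p.2.length).getLast?).getD 0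

lemma lastEnd_eq {K : List (ℕ × List V)} (h : K ≠ []) :
    lastEnd K = (K.getLast h).1 + (K.getLast h).2.length := by
  unfold lastEnd
  rw [List.getLast?_map, List.getLast?_eq_getLast h]
  rfl

lemma cut_facts (hB : ∀ b ∈ B, b ≠ []) (hanti : ∀ u ∈ B, ∀ v ∈ B, u <:+: v → u = v)
    {w : List V} {L : List (ℕ × List V)}
    (hM : MarkedP B w L) (h0 : ∃ p ∈ L, p.1 = 0) :
    1 ≤ lastEnd (cut L).1 ∧ lastEnd (cut L).1 ≤ w.length ∧
    IsCluster B (w.take (lastEnd (cut L).1)) (cut L).1 ∧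
    (∀ p ∈ (cut L).2, lastEnd (cut L).1 ≤ p.1) ∧
    MarkedP B (w.drop (lastEnd (cut L).1))
      ((cut L).2.map fun p => (p.1 - lastEnd (cut L).1, p.2)) := by
  obtain ⟨hocc, hpw⟩ := hM
  have hKR : (cut L).1 ++ (cut L).2 = L := cut_append L
  have hLne : L ≠ [] := by
    rintro rfl
    simp at h0
  have hKne : (cut L).1 ≠ [] := cut_fst_ne_nil L hLne
  have hje := lastEnd_eq hKne
  set pe := (cut L).1.getLast hKne with hpe
  have hpeK : pe ∈ (cut L).1 := List.getLast_mem hKne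
  have hmemK : ∀ p ∈ (cut L).1, p ∈ L := fun p hp =>
    hKR ▸ List.mem_append_left _ hp
  have hmemR : ∀ p ∈ (cut L).2, p ∈ L := fun p hp =>
    hKR ▸ List.mem_append_right _ hp
  have hKocc : ∀ p ∈ (cut L).1, IsOcc B w p := fun p hp => hocc p (hmemK p hp)
  obtain ⟨hKpw, hRpw, hcross⟩ := List.pairwise_append.mp
    (show ((cut L).1 ++ (cut L).2).Pairwise (fun p q : ℕ × List V => p.1 < q.1) by
      rw [hKR]; exact hpw)
  have hends : (cut L).1.Pairwise
      (fun p q => p.1 + p.2.length < q.1 + q.2.length) :=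
    hKpw.imp_of_mem fun hp hq hlt => occ_end_lt hanti (hKocc _ hp) (hKocc _ hq) hlt
  have hend_le : ∀ p ∈ (cut L).1, p.1 + p.2.length ≤ lastEnd (cut L).1 := by
    intro p hp
    rcases pairwise_rel_getLast hKne hends p hp with h | h
    · rw [h, ← hpe, hje]
    · rw [← hpe] at h
      rw [hje]; omega
  have hpe_occ : IsOcc B w pe := hKocc pe hpeK
  have hpe_bd := isOcc_bound hB hpe_occ
  have hpe_len : 0 < pe.2.length := List.length_pos_iff.mpr hpe_bd.1
  have h1j : 1 ≤ lastEnd (cut L).1 := by rw [hje]; omega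
  have hjw : lastEnd (cut L).1 ≤ w.length := by rw [hje]; exact hpe_bd.2
  -- head of L has fst 0
  obtain ⟨p0, hp0, hp00⟩ := h0
  have hhead0 : (L.head hLne).1 = 0 := by
    rcases pairwise_rel_head hLne hpw p0 hp0 with h | h
    · rw [← h, hp00]
    · omega
  have hKhead : (cut L).1.head hKne = L.head hLne := by
    have h := cut_head? L
    rw [List.head?_eq_head hKne, List.head?_eq_head hLne] at h
    exact Option.some.inj h
  -- boundary fact
  have hRge : ∀ p ∈ (cut L).2, lastEnd (cut L).1 ≤ p.1 := by
    intro p hp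
    have hRne : (cut L).2 ≠ [] := by
      rintro hnil; rw [hnil] at hp; simp at hp
    have hbdy := cut_boundary L pe ((cut L).2.head hRne)
      (by rw [List.getLast?_eq_getLast hKne, hpe]) (List.head?_eq_head hRne)
    rcases pairwise_rel_head hRne hRpw p hp with h | h
    · rw [h, hje]; exact hbdy
    · rw [hje]; omega
  refine ⟨h1j, hjw, ?_, hRge, ?_, ?_⟩
  · -- cluster
    refine ⟨hKne, ?_, ?_, ?_, ?_⟩
    · intro p hp
      exact isOcc_take (hKocc p hp) (hend_le p hp)
    · rw [List.head?_map, List.head?_eq_head hKne]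
      simp only [Option.map_some]
      rw [hKhead, hhead0]
    · rw [List.getLast?_map, List.getLast?_eq_getLast hKne, ← hpe]
      simp only [Option.map_some]
      congr 1
      rw [List.length_take, min_eq_left hjw, hje]
    · have hc1 : (cut L).1.Chain' (fun p q => p.1 < q.1) := hKpw.chain'
      have hc2 : (cut L).1.Chain'
          (fun p q : ℕ × List V => p.1 + p.2.length < q.1 + q.2.length) := hends.chain'
      have hc3 : (cut L).1.Chain' Ovl := cut_chain' L
      exact (chain'_and hc1 (chain'_and hc2 hc3)).imp fun a b h => ⟨h.1, h.2.1, h.2.2⟩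
  · -- marked of remainder
    intro p hp
    rw [List.mem_map] at hp
    obtain ⟨p', hp', rfl⟩ := hp
    exact isOcc_drop (hocc p' (hmemR p' hp')) (hRge p' hp')
  · rw [List.pairwise_map]
    apply hRpw.imp_of_mem
    intro a b ha hb hlt
    have h1 := hRge a ha
    simp only
    omega

end CaseB

section CaseB2
variable {V : Type*} [Fintype V] [DecidableEq V] {B : Finset (List V)}

lemma glue_facts (hB : ∀ b ∈ B, b ≠ []) {j : ℕ} {u v : List V}
    {K R' : List (ℕ × List V)}
    (hu : u.length = j) (hclu : IsCluster B u K) (hR' : MarkedP B v R') :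
    MarkedP B (u ++ v) (K ++ R'.map fun p => (p.1 + j, p.2)) ∧
    (∃ p ∈ K ++ R'.map (fun p => (p.1 + j, p.2)), p.1 = 0) ∧
    cut (K ++ R'.map fun p => (p.1 + j, p.2)) = (K, R'.map fun p => (p.1 + j, p.2)) := by
  obtain ⟨hKne, hKocc, hKhead, hKlast, hKch⟩ := hclu
  have hKb : ∀ p ∈ K, p.1 + p.2.length ≤ j := fun p hp =>
    hu ▸ (isOcc_bound hB (hKocc p hp)).2
  have hKlt : ∀ p ∈ K, p.1 < j := by
    intro p hp
    have h1 := hKb p hp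
    have h2 : 0 < p.2.length := List.length_pos_iff.mpr (isOcc_bound hB (hKocc p hp)).1
    omega
  have hKpw : K.Pairwise (fun p q => p.1 < q.1) :=
    chain'_fst_lt_pairwise (hKch.imp fun a b h => h.1)
  have hhead : (K.head hKne).1 = 0 := by
    rw [List.head?_map, List.head?_eq_head hKne] at hKhead
    simpa using hKhead
  have hlastend : (K.getLast hKne).1 + (K.getLast hKne).2.length = j := by
    rw [List.getLast?_map, List.getLast?_eq_getLast hKne] at hKlast
    simp only [Option.map_some, Option.some.injEq] at hKlast
    omega
  refine ⟨⟨?_, ?_⟩, ?_, ?_⟩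
  · -- occurrences
    intro p hp
    rcases List.mem_append.mp hp with hp | hp
    · exact isOcc_append_left hB (hKocc p hp)
    · rw [List.mem_map] at hp
      obtain ⟨p', hp', rfl⟩ := hp
      have := isOcc_append_right (u := u) (hR'.1 p' hp')
      rwa [hu] at this
  · -- pairwise
    rw [List.pairwise_append]
    refine ⟨hKpw, ?_, ?_⟩
    · rw [List.pairwise_map]
      exact hR'.2.imp fun h => by omega
    · intro a ha b hb
      rw [List.mem_map] at hb
      obtain ⟨b', -, rfl⟩ := hb
      have := hKlt a ha
      simp only
      omega
  · -- exists start 0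
    exact ⟨K.head hKne, List.mem_append_left _ (List.head_mem hKne), hhead⟩
  · -- cut
    apply cut_spec _ _ hKne (hKch.imp fun a b h => h.2.2)
    intro p q hp hq
    rw [List.getLast?_eq_getLast hKne] at hp
    have hpe : p = K.getLast hKne := (Option.some.inj hp).symm
    have hqR : ∃ q' ∈ R', (q'.1 + j, q'.2) = q := by
      cases R' with
      | nil => simp at hq
      | cons a t =>
        simp only [List.map_cons, List.head?_cons, Option.some.injEq] at hq
        exact ⟨a, List.mem_cons_self, hq⟩
    obtain ⟨q', -, rfl⟩ := hqR
    rw [hpe] at *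
    simp only
    omega

def phiB {V : Type*} (q : List V × List (ℕ × List V)) :
    Σ _ : ℕ, (List V × List (ℕ × List V)) × (List V × List (ℕ × List V)) :=
  ⟨lastEnd (cut q.2).1,
    ((q.1.take (lastEnd (cut q.2).1), (cut q.2).1),
     (q.1.drop (lastEnd (cut q.2).1),
      (cut q.2).2.map fun p => (p.1 - lastEnd (cut q.2).1, p.2)))⟩

def psiB {V : Type*}
    (t : Σ _ : ℕ, (List V × List (ℕ × List V)) × (List V × List (ℕ × List V))) :
    List V × List (ℕ × List V) :=
  (t.2.1.1 ++ t.2.2.1, t.2.1.2 ++ t.2.2.2.map fun p => (p.1 + t.1, p.2))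

lemma caseB (hB : ∀ b ∈ B, b ≠ []) (hanti : ∀ u ∈ B, ∀ v ∈ B, u <:+: v → u = v)
    (n : ℕ) :
    ∑ q ∈ (MFw B (n+1)).filter (fun q => ∃ p ∈ q.2, p.1 = 0),
      ((Polynomial.X : Polynomial ℤ) - 1) ^ q.2.length
    = ∑ j ∈ Finset.Icc 1 (n+1), Clw B j * Mw B (n+1-j) := by
  have h2 : ∑ j ∈ Finset.Icc 1 (n+1), Clw B j * Mw B (n+1-j)
      = ∑ t ∈ (Finset.Icc 1 (n+1)).sigma (fun j => ClFw B j ×ˢ MFw B (n+1-j)),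
          ((Polynomial.X : Polynomial ℤ) - 1) ^ (t.2.1.2.length + t.2.2.2.length) := by
    rw [Finset.sum_sigma]
    refine Finset.sum_congr rfl fun j _ => ?_
    rw [Clw, Mw, Finset.sum_mul_sum]
    rw [Finset.sum_product]
    exact Finset.sum_congr rfl fun a _ => Finset.sum_congr rfl fun b _ => (pow_add _ _ _).symm
  rw [h2]
  refine Finset.sum_bij' (fun q _ => phiB q) (fun t _ => psiB t) ?_ ?_ ?_ ?_ ?_
  · -- maps into sigma
    intro q hq
    obtain ⟨hmem, hP⟩ := Finset.mem_filter.mp hq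
    obtain ⟨hlen, hM⟩ := (mem_MFw hB).mp hmem
    obtain ⟨h1j, hjw, hclu, hRge, hMrest⟩ := cut_facts hB hanti hM hP
    rw [hlen] at hjw
    rw [Finset.mem_sigma]
    constructor
    · simp only [phiB, Finset.mem_Icc]
      exact ⟨h1j, hjw⟩
    · rw [Finset.mem_product]
      constructor
      · apply (mem_ClFw hB).mpr
        simp only [phiB]
        refine ⟨?_, ?_⟩
        · rw [List.length_take, hlen, min_eq_left hjw]
        · rw [← hlen] at hjw
          exact hclu
      · apply (mem_MFw hB).mpr
        simp only [phiB]
        refine ⟨?_, hMrest⟩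
        rw [List.length_drop, hlen]
  · -- maps back into filter
    rintro ⟨j, ⟨u, K⟩, ⟨v, R'⟩⟩ ht
    rw [Finset.mem_sigma, Finset.mem_product] at ht
    obtain ⟨hjIcc, hCl, hMm⟩ := ht
    rw [Finset.mem_Icc] at hjIcc
    obtain ⟨hu, hclu⟩ := (mem_ClFw hB).mp hCl
    obtain ⟨hv, hR'⟩ := (mem_MFw hB).mp hMm
    obtain ⟨hmarked, hex, -⟩ := glue_facts hB hu hclu hR'
    rw [Finset.mem_filter]
    constructor
    · apply (mem_MFw hB).mpr
      refine ⟨?_, hmarked⟩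
      show (u ++ v).length = n + 1
      rw [List.length_append, hu, hv]
      omega
    · exact hex
  · -- left inverse
    intro q hq
    obtain ⟨hmem, hP⟩ := Finset.mem_filter.mp hq
    obtain ⟨hlen, hM⟩ := (mem_MFw hB).mp hmem
    obtain ⟨-, -, -, hRge, -⟩ := cut_facts hB hanti hM hP
    simp only [phiB, psiB]
    refine Prod.ext ?_ ?_
    · exact List.take_append_drop _ _
    · simp only [List.map_map]
      rw [List.map_congr_left (g := id) (fun p hp => by
        have h1 := hRge p hp
        simp only [Function.comp_apply, id_eq]
        rw [Nat.sub_add_cancel h1])]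
      rw [List.map_id]
      exact cut_append q.2
  · -- right inverse
    rintro ⟨j, ⟨u, K⟩, ⟨v, R'⟩⟩ ht
    rw [Finset.mem_sigma, Finset.mem_product] at ht
    obtain ⟨hjIcc, hCl, hMm⟩ := ht
    obtain ⟨hu, hclu⟩ := (mem_ClFw hB).mp hCl
    obtain ⟨hv, hR'⟩ := (mem_MFw hB).mp hMm
    obtain ⟨-, -, hcut⟩ := glue_facts hB hu hclu hR'
    have hKlast := hclu.2.2.2.1
    have hJ : lastEnd K = j := by
      unfold lastEnd
      rw [hKlast, hu]
      rfl
    simp only [phiB, psiB, hcut, hJ]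
    congr 1
    refine Prod.ext (Prod.ext ?_ rfl) (Prod.ext ?_ ?_)
    · exact List.take_left' hu
    · exact List.drop_left' hu
    · simp only [List.map_map]
      rw [List.map_congr_left (g := id) (fun p hp => by
        simp only [Function.comp_apply, id_eq, Nat.add_sub_cancel])]
      exact List.map_id _
  · -- weights
    intro q hq
    simp only [phiB]
    congr 1
    rw [List.length_map, ← List.length_append, cut_append]

end CaseB2

section Bridges
variable {V : Type*} [Fintype V] [DecidableEq V] {B : Finset (List V)}

theorem Mw_rec (hB : ∀ b ∈ B, b ≠ []) (hanti : ∀ u ∈ B, ∀ v ∈ B, u <:+: v → u = v)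
    (n : ℕ) :
    Mw B (n+1) = (Fintype.card V) * Mw B n
      + ∑ j ∈ Finset.Icc 1 (n+1), Clw B j * Mw B (n+1-j) := by
  have := Finset.sum_filter_add_sum_filter_not (MFw B (n+1))
    (fun q => ∃ p ∈ q.2, p.1 = 0)
    (fun q => ((Polynomial.X : Polynomial ℤ) - 1) ^ q.2.length)
  rw [Mw, ← this, caseA hB n, caseB hB hanti n]
  ring

lemma sum_word_reindex {M : Type*} [AddCommMonoid M] (g : List V → M) (n : ℕ) :
    ∑ f : Fin n → V, g (List.ofFn f) = ∑ w ∈ wordF V n, g w := by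
  refine Finset.sum_bij' (fun f _ => List.ofFn f)
    (fun w hw => fun i : Fin n => w.get (Fin.cast (mem_wordF.mp hw).symm i))
    ?_ ?_ ?_ ?_ ?_
  · intro f _
    exact mem_wordF.mpr (List.length_ofFn)
  · intro w hw
    exact Finset.mem_univ _
  · intro f _
    funext i
    simp [List.get_ofFn]
  · intro w hw
    have h : w.length = n := mem_wordF.mp hw
    subst h
    simp
  · intro f _
    rfl

lemma sum_MFw_eq (hB : ∀ b ∈ B, b ≠ []) (n : ℕ) :
    Mw B n = ∑ w ∈ wordF V n,
      ∑ L ∈ (listsOf (Finset.range n ×ˢ B) n).filter (fun L => MarkedP B w L),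
        ((Polynomial.X : Polynomial ℤ) - 1) ^ L.length := by
  rw [Mw, MFw, Finset.sum_filter, Finset.sum_product]
  exact Finset.sum_congr rfl fun w _ => (Finset.sum_filter _ _).symm

lemma coeff_occGF (hB : ∀ b ∈ B, b ≠ []) (hanti : ∀ u ∈ B, ∀ v ∈ B, u <:+: v → u = v)
    (n : ℕ) :
    PowerSeries.coeff n (occGF B) = Mw B n := by
  rw [occGF, PowerSeries.coeff_mk]
  -- occCount as a filter card
  have hcount : ∀ m, occCount B n m
      = ((Finset.univ : Finset (Fin n → V)).filter
          fun f => (Occs B (List.ofFn f)).card = m).card := by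
    intro m
    rw [occCount, Nat.card_eq_fintype_card, Fintype.card_subtype]
  -- card bound
  have hbound : ∀ f : Fin n → V,
      (Occs B (List.ofFn f)).card ∈ Finset.range ((n + 1) * B.card + 1) := by
    intro f
    rw [Finset.mem_range, Nat.lt_succ_iff]
    calc (Occs B (List.ofFn f)).card
        ≤ ((Finset.range ((List.ofFn f).length + 1)) ×ˢ B).card :=
          Finset.card_le_card (Finset.filter_subset _ _)
      _ = ((List.ofFn f).length + 1) * B.card := by
          rw [Finset.card_product, Finset.card_range]
      _ = (n + 1) * B.card := by rw [List.length_ofFn]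
  have hfib := Finset.sum_fiberwise_of_maps_to (s := (Finset.univ : Finset (Fin n → V)))
      (t := Finset.range ((n + 1) * B.card + 1))
      (g := fun f : Fin n → V => (Occs B (List.ofFn f)).card) (fun f _ => hbound f)
      (fun f => (Polynomial.X : Polynomial ℤ) ^ (Occs B (List.ofFn f)).card)
  rw [show ∑ m ∈ Finset.range ((n + 1) * B.card + 1),
      (occCount B n m : Polynomial ℤ) * Polynomial.X ^ m
      = ∑ f : Fin n → V, (Polynomial.X : Polynomial ℤ) ^ (Occs B (List.ofFn f)).card by
    rw [← hfib]
    refine Finset.sum_congr rfl fun m _ => ?_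
    rw [hcount m, Finset.sum_congr rfl (fun f hf => by
      rw [(Finset.mem_filter.mp hf).2])]
    rw [Finset.sum_const, nsmul_eq_mul]]
  rw [sum_word_reindex (fun w => (Polynomial.X : Polynomial ℤ) ^ (Occs B w).card) n]
  rw [sum_MFw_eq hB n]
  exact Finset.sum_congr rfl fun w hw => (sum_marked_eq hB hanti (mem_wordF.mp hw)).symm

end Bridges

section Bridge2
variable {V : Type*} [Fintype V] [DecidableEq V] {B : Finset (List V)}

lemma clusterCount_eq (hB : ∀ b ∈ B, b ≠ []) (n l : ℕ) :
    clusterCount B n l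
      = (((Finset.univ : Finset (Fin n → V)) ×ˢ listsOf (Finset.range n ×ˢ B) n).filter
          fun q => IsCluster B (List.ofFn q.1) q.2 ∧ q.2.length = l).card := by
  have hset : {q : (Fin n → V) × List (ℕ × List V) |
      IsCluster B (List.ofFn q.1) q.2 ∧ q.2.length = l}
      = ↑(((Finset.univ : Finset (Fin n → V)) ×ˢ listsOf (Finset.range n ×ˢ B) n).filter
          fun q => IsCluster B (List.ofFn q.1) q.2 ∧ q.2.length = l) := by
    ext q
    simp only [Set.mem_setOf_eq, Finset.coe_filter, Finset.mem_product, Finset.mem_univ,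
      true_and]
    constructor
    · intro h
      refine ⟨?_, h⟩
      have := marked_mem_listsOf hB (isCluster_markedP h.1)
      rwa [List.length_ofFn] at this
    · rintro ⟨-, h⟩; exact h
  calc clusterCount B n l
      = Set.ncard {q : (Fin n → V) × List (ℕ × List V) |
          IsCluster B (List.ofFn q.1) q.2 ∧ q.2.length = l} :=
        Nat.card_coe_set_eq _
    _ = _ := by rw [hset, Set.ncard_coe_finset]

lemma sum_ClFw_eq (n : ℕ) :
    Clw B n = ∑ w ∈ wordF V n,
      ∑ L ∈ (listsOf (Finset.range n ×ˢ B) n).filter (fun L => IsCluster B w L),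
        ((Polynomial.X : Polynomial ℤ) - 1) ^ L.length := by
  rw [Clw, ClFw, Finset.sum_filter, Finset.sum_product]
  exact Finset.sum_congr rfl fun w _ => (Finset.sum_filter _ _).symm

lemma coeff_clusterGFT (hB : ∀ b ∈ B, b ≠ []) (n : ℕ) :
    PowerSeries.coeff n (clusterGFT B) = Clw B n := by
  rw [clusterGFT, PowerSeries.coeff_mk]
  set s := ((Finset.univ : Finset (Fin n → V)) ×ˢ listsOf (Finset.range n ×ˢ B) n).filter
    (fun q => IsCluster B (List.ofFn q.1) q.2) with hs
  have hmaps : ∀ q ∈ s, q.2.length ∈ Finset.range (n + 1) := by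
    intro q hq
    rw [hs, Finset.mem_filter, Finset.mem_product] at hq
    rw [Finset.mem_range, Nat.lt_succ_iff]
    exact (mem_listsOf.mp hq.1.2).1
  have hfib := Finset.sum_fiberwise_of_maps_to hmaps
    (fun q => ((Polynomial.X : Polynomial ℤ) - 1) ^ q.2.length)
  have hstep : ∑ l ∈ Finset.range (n + 1),
      ((Polynomial.X : Polynomial ℤ) - 1) ^ l * clusterCount B n l
      = ∑ q ∈ s, ((Polynomial.X : Polynomial ℤ) - 1) ^ q.2.length := by
    rw [← hfib]
    refine Finset.sum_congr rfl fun l _ => ?_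
    rw [clusterCount_eq hB n l]
    have hff : Finset.filter (fun q => q.2.length = l) s
        = ((Finset.univ : Finset (Fin n → V)) ×ˢ listsOf (Finset.range n ×ˢ B) n).filter
          fun q => IsCluster B (List.ofFn q.1) q.2 ∧ q.2.length = l := by
      rw [hs, Finset.filter_filter]
    rw [← hff]
    rw [Finset.sum_congr rfl (fun q hq => by
      rw [(Finset.mem_filter.mp hq).2])]
    rw [Finset.sum_const, nsmul_eq_mul]
    ring
  rw [hstep]
  -- reindex words
  have hsum : ∑ q ∈ s, ((Polynomial.X : Polynomial ℤ) - 1) ^ q.2.length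
      = ∑ f : Fin n → V, ∑ L ∈ (listsOf (Finset.range n ×ˢ B) n).filter
          (fun L => IsCluster B (List.ofFn f) L),
          ((Polynomial.X : Polynomial ℤ) - 1) ^ L.length := by
    rw [hs, Finset.sum_filter, Finset.sum_product]
    exact Finset.sum_congr rfl fun f _ => (Finset.sum_filter _ _).symm
  rw [hsum, sum_word_reindex (fun w => ∑ L ∈ (listsOf (Finset.range n ×ˢ B) n).filter
      (fun L => IsCluster B w L), ((Polynomial.X : Polynomial ℤ) - 1) ^ L.length) n]
  exact (sum_ClFw_eq n).symm

lemma Clw_zero (hB : ∀ b ∈ B, b ≠ []) : Clw B 0 = 0 := by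
  rw [Clw]
  have h : ClFw B 0 = ∅ := by
    apply Finset.eq_empty_of_forall_notMem
    intro q hq
    obtain ⟨hlen, hclu⟩ := (mem_ClFw hB).mp hq
    obtain ⟨hne, hocc, -, -, -⟩ := hclu
    have hp := hocc (q.2.head hne) (List.head_mem hne)
    have hbd := isOcc_bound hB hp
    have := List.length_pos_iff.mpr hbd.1
    omega
  rw [h, Finset.sum_empty]

end Bridge2

end GJ
open GJ in
/-- Goulden–Jackson with a counter `t` for occurrences:
`(1 - d·s - C(s,t)) · F(s,t) = 1`. -/
theorem stmt7 {V : Type*} [Fintype V] [DecidableEq V]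
    (d : ℕ) (hd : Fintype.card V = d)
    (B : Finset (List V)) (hB : ∀ b ∈ B, b ≠ [])
    (hanti : ∀ u ∈ B, ∀ v ∈ B, u <:+: v → u = v) :
    (1 - (d : PowerSeries (Polynomial ℤ)) * PowerSeries.X - clusterGFT B) *
      occGF B = 1 := by
  subst hd
  refine PowerSeries.ext fun n => ?_
  rw [PowerSeries.coeff_mul, Finset.Nat.sum_antidiagonal_eq_sum_range_succ_mk]
  have hc : ∀ k, PowerSeries.coeff k
      (1 - (Fintype.card V : PowerSeries (Polynomial ℤ)) * PowerSeries.X - clusterGFT B)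
      = (if k = 0 then 1 else 0)
        - (if k = 1 then ((Fintype.card V : ℕ) : Polynomial ℤ) else 0) - Clw B k := by
    intro k
    rw [map_sub, map_sub, PowerSeries.coeff_one, coeff_clusterGFT hB]
    congr 2
    rw [← map_natCast (PowerSeries.C (R := Polynomial ℤ)) (Fintype.card V),
      PowerSeries.coeff_C_mul, PowerSeries.coeff_X]
    split <;> simp
  simp only [hc, coeff_occGF hB hanti]
  cases n with
  | zero =>
    rw [Finset.sum_range_one]
    simp [Clw_zero hB, Mw_zero]
  | succ m =>
    have h1 : ∑ k ∈ Finset.range (m + 2),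
        ((if k = 0 then (1 : Polynomial ℤ) else 0)
          - (if k = 1 then ((Fintype.card V : ℕ) : Polynomial ℤ) else 0) - Clw B k)
          * Mw B (m + 1 - k)
        = (∑ k ∈ Finset.range (m + 2), (if k = 0 then (1 : Polynomial ℤ) else 0)
            * Mw B (m + 1 - k))
          - (∑ k ∈ Finset.range (m + 2),
              (if k = 1 then ((Fintype.card V : ℕ) : Polynomial ℤ) else 0) * Mw B (m + 1 - k))
          - ∑ k ∈ Finset.range (m + 2), Clw B k * Mw B (m + 1 - k) := by
      rw [← Finset.sum_sub_distrib, ← Finset.sum_sub_distrib]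
      refine Finset.sum_congr rfl fun k _ => ?_
      ring
    rw [h1]
    have h2 : ∑ k ∈ Finset.range (m + 2), (if k = 0 then (1 : Polynomial ℤ) else 0)
        * Mw B (m + 1 - k) = Mw B (m + 1) := by
      rw [Finset.sum_eq_single_of_mem 0 (Finset.mem_range.mpr (by omega))]
      · simp
      · intro k _ hk
        rw [if_neg hk, zero_mul]
    have h3 : ∑ k ∈ Finset.range (m + 2),
        (if k = 1 then ((Fintype.card V : ℕ) : Polynomial ℤ) else 0) * Mw B (m + 1 - k)
        = (Fintype.card V : Polynomial ℤ) * Mw B m := by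
      rw [Finset.sum_eq_single_of_mem 1 (Finset.mem_range.mpr (by omega))]
      · simp
      · intro k _ hk
        rw [if_neg hk, zero_mul]
    have h4 : ∑ k ∈ Finset.range (m + 2), Clw B k * Mw B (m + 1 - k)
        = ∑ k ∈ Finset.Icc 1 (m + 1), Clw B k * Mw B (m + 1 - k) := by
      rw [Finset.range_eq_Ico, Finset.sum_eq_sum_Ico_succ_bot (by omega)]
      rw [Clw_zero hB, zero_mul, zero_add]
      congr 1
    rw [h2, h3, h4, Mw_rec hB hanti m, PowerSeries.coeff_one, if_neg (by omega)]
    push_cast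
    ring
end

section
/- Suppose B is a factor antichain. For v ∈ B let C_v(s,t) be the formal power series in s over ℤ[t] whose coefficient of s^n is the sum of (t−1)^l over clusters of length n whose last occurrence (i_l,b_l) satisfies b_l = v. Then for every v ∈ B the identity C_v(s,t) = (t−1)·s^{|v|} + (t−1)·Σ_{u ∈ B} (u:v)(s) · C_u(s,t) holds in (ℤ[t])[[s]]. -/
/-- `C_v(s,t) ∈ ℤ[t][[s]]`: the coefficient of `s^n` is the sum of `(t-1)^l` over
clusters of length `n` whose last occurrence is an occurrence of `v`. -/
noncomputable def clusterGFEndT {V : Type*} [Fintype V] (B : Finset (List V))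
    (v : List V) : PowerSeries (Polynomial ℤ) :=
  PowerSeries.mk fun n =>
    ∑ l ∈ Finset.range (n + 1),
      (Polynomial.X - 1 : Polynomial ℤ) ^ l * clusterCountEnd B v n l

/-- The correlation polynomial `(u:v)(s) = ∑_{x ∈ OVERLAP(u,v)} s^{|v|-|x|}`,
with coefficients in `ℤ[t]`. -/
noncomputable def corrT {V : Type*} [DecidableEq V] (u v : List V) :
    PowerSeries (Polynomial ℤ) :=
  ∑ k ∈ Finset.Ico 1 (min u.length v.length),
    if u.drop (u.length - k) = v.take k then PowerSeries.X ^ (v.length - k) else 0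

namespace GJaux

variable {V : Type*}

/-- The cluster property, phrased for a word given as a plain list. -/
def ClProp (B : Finset (List V)) (v : List V) (n l : ℕ)
    (q : List V × List (ℕ × List V)) : Prop :=
  q.1.length = n ∧ IsCluster B q.1 q.2 ∧ q.2.length = l ∧
    (q.2.map Prod.snd).getLast? = some v

lemma pairwise_lt_le_getLast? {xs : List ℕ} (h : xs.Pairwise (· < ·)) {x y : ℕ}
    (hx : x ∈ xs) (hy : xs.getLast? = some y) : x ≤ y := by
  have hne : xs ≠ [] := by rintro rfl; simp at hy
  rw [List.getLast?_eq_getLast hne, Option.some_inj] at hy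
  subst hy
  obtain ⟨i, hi, rfl⟩ := List.mem_iff_getElem.mp hx
  rw [List.getLast_eq_getElem]
  rcases eq_or_lt_of_le (Nat.le_pred_of_lt hi) with h1 | h1
  · simp only [h1]; exact le_refl _
  · exact le_of_lt (List.pairwise_iff_getElem.mp h i (xs.length - 1) hi (by omega) h1)

lemma ends_pairwise {L : List (ℕ × List V)}
    (h : L.Chain' fun p q =>
      p.1 < q.1 ∧ p.1 + p.2.length < q.1 + q.2.length ∧ q.1 < p.1 + p.2.length) :
    (L.map fun p => p.1 + p.2.length).Pairwise (· < ·) :=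
  List.isChain_iff_pairwise.mp ((List.isChain_map _).mpr (h.imp fun _ _ hpq => hpq.2.1))

lemma starts_pairwise {L : List (ℕ × List V)}
    (h : L.Chain' fun p q =>
      p.1 < q.1 ∧ p.1 + p.2.length < q.1 + q.2.length ∧ q.1 < p.1 + p.2.length) :
    (L.map Prod.fst).Pairwise (· < ·) :=
  List.isChain_iff_pairwise.mp ((List.isChain_map _).mpr (h.imp fun _ _ hpq => hpq.1))

lemma end_le {B : Finset (List V)} {w : List V} {L : List (ℕ × List V)}
    (h : IsCluster B w L) {p : ℕ × List V} (hp : p ∈ L) :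
    p.1 + p.2.length ≤ w.length :=
  pairwise_lt_le_getLast? (ends_pairwise h.2.2.2.2)
    (List.mem_map_of_mem hp) h.2.2.2.1

end GJaux

section part2
namespace GJaux
variable {V : Type*}

lemma clProp_finite [Finite V] (B : Finset (List V)) (v : List V) (n l : ℕ) :
    Finite {q : List V × List (ℕ × List V) // ClProp B v n l q} := by
  classical
  have hsub : Finite {p : ℕ × List V // p.1 ≤ n ∧ p.2 ∈ B} := by
    apply Finite.of_injective
      (fun p => ((⟨p.val.1, Nat.lt_succ_of_le p.prop.1⟩ : Fin (n+1)),
        (⟨p.val.2, p.prop.2⟩ : {b // b ∈ B})))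
    intro a b hab
    apply Subtype.ext
    have h1 := congrArg (fun z => (z.1 : ℕ)) hab
    have h2 := congrArg (fun z => (z.2 : List V)) hab
    exact Prod.ext h1 h2
  have hlists : Finite {L : List {p : ℕ × List V // p.1 ≤ n ∧ p.2 ∈ B} // L.length = l} :=
    (List.finite_length_eq {p : ℕ × List V // p.1 ≤ n ∧ p.2 ∈ B} l).to_subtype
  have hwords : Finite {w : List V // w.length = n} :=
    (List.finite_length_eq V n).to_subtype
  apply Finite.of_injective (β := {w : List V // w.length = n} ×
      {L : List {p : ℕ × List V // p.1 ≤ n ∧ p.2 ∈ B} // L.length = l})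
    (fun q => (⟨q.val.1, q.prop.1⟩,
      ⟨q.val.2.pmap (fun p hp => (⟨p, hp⟩ : {p : ℕ × List V // p.1 ≤ n ∧ p.2 ∈ B}))
        (fun p hp => ⟨le_trans (Nat.le_add_right _ _)
            (q.prop.1 ▸ end_le q.prop.2.1 hp), (q.prop.2.1.2.1 p hp).1⟩),
        by simp [q.prop.2.2.1]⟩))
  intro a b hab
  apply Subtype.ext
  have h1 : a.val.1 = b.val.1 := congrArg (fun z => (z.1 : List V)) hab
  have h2 := congrArg (fun z => (z.2.val.map Subtype.val)) hab
  simp only [List.map_pmap, List.pmap_eq_map, List.map_id] at h2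
  exact Prod.ext h1 (by simpa using h2)

variable [Fintype V]

lemma count_eq (B : Finset (List V)) (v : List V) (n l : ℕ) :
    clusterCountEnd B v n l
      = Nat.card {q : List V × List (ℕ × List V) // ClProp B v n l q} := by
  apply Nat.card_congr
  refine ⟨fun q => ⟨(List.ofFn q.val.1, q.val.2), by
      simpa [ClProp] using q.prop⟩,
    fun q => ⟨(fun i => q.val.1.get (Fin.cast q.prop.1.symm i), q.val.2), ?_⟩, ?_, ?_⟩
  · have hofn : List.ofFn (fun i => q.val.1.get (Fin.cast q.prop.1.symm i)) = q.val.1 := by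
      obtain ⟨⟨w, L⟩, hw, h⟩ := q
      subst hw
      simp only [Fin.cast_refl, Function.comp]
      exact List.ofFn_get w
    rw [hofn]
    exact ⟨q.prop.2.1, q.prop.2.2.1, q.prop.2.2.2⟩
  · intro q
    apply Subtype.ext
    apply Prod.ext
    · funext i
      simp [List.get_ofFn]
    · rfl
  · intro q
    apply Subtype.ext
    apply Prod.ext
    · obtain ⟨⟨w, L⟩, hw, h⟩ := q
      subst hw
      simp only [Fin.cast_refl, Function.comp]
      exact List.ofFn_get w
    · rfl

lemma cc_zero (B : Finset (List V)) (v : List V) (n : ℕ) :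
    clusterCountEnd B v n 0 = 0 := by
  rw [count_eq]
  have : IsEmpty {q : List V × List (ℕ × List V) // ClProp B v n 0 q} := by
    refine ⟨fun q => ?_⟩
    obtain ⟨⟨w, L⟩, _, hcl, hlen, _⟩ := q
    exact hcl.1 (List.length_eq_zero_iff.mp hlen)
  simp [Nat.card_of_isEmpty]

lemma cc_word0 (B : Finset (List V)) (hB : ∀ b ∈ B, b ≠ []) (v : List V) (l : ℕ) :
    clusterCountEnd B v 0 l = 0 := by
  rw [count_eq]
  have : IsEmpty {q : List V × List (ℕ × List V) // ClProp B v 0 l q} := by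
    refine ⟨fun q => ?_⟩
    obtain ⟨⟨w, L⟩, hw, hcl, _, _⟩ := q
    obtain ⟨p, hp⟩ := List.exists_mem_of_ne_nil L hcl.1
    have hocc := hcl.2.1 p hp
    have hwnil : w = [] := List.length_eq_zero_iff.mp hw
    have : p.2 = [] := by
      have := hocc.2
      rw [hwnil] at this
      simpa using this.symm
    exact hB p.2 hocc.1 this
  simp [Nat.card_of_isEmpty]

lemma cc_gt (B : Finset (List V)) (hB : ∀ b ∈ B, b ≠ []) (v : List V) {n l : ℕ}
    (h : n < l) : clusterCountEnd B v n l = 0 := by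
  rw [count_eq]
  have : IsEmpty {q : List V × List (ℕ × List V) // ClProp B v n l q} := by
    refine ⟨fun q => ?_⟩
    obtain ⟨⟨w, L⟩, hw, hcl, hlen, _⟩ := q
    have hpw : (L.map Prod.fst).Pairwise (· < ·) := starts_pairwise hcl.2.2.2.2
    have hnd : (L.map Prod.fst).Nodup := hpw.imp ne_of_lt
    have hbound : ∀ x ∈ L.map Prod.fst, x < n := by
      intro x hx
      obtain ⟨p, hp, rfl⟩ := List.mem_map.mp hx
      have h1 : p.1 + p.2.length ≤ n := hw ▸ end_le hcl hp
      have h2 : p.2.length ≠ 0 := by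
        simpa using hB p.2 (hcl.2.1 p hp).1
      omega
    have hcard : (L.map Prod.fst).length ≤ n := by
      have h1 : (L.map Prod.fst).toFinset.card = (L.map Prod.fst).length :=
        List.toFinset_card_of_nodup hnd
      have h2 : (L.map Prod.fst).toFinset ⊆ Finset.range n := by
        intro x hx
        simp only [Finset.mem_range]
        exact hbound x (List.mem_toFinset.mp hx)
      have := Finset.card_le_card h2
      simp only [Finset.card_range] at this
      omega
    simp only [List.length_map, hlen] at hcard
    omega
  simp [Nat.card_of_isEmpty]

lemma cc_one (B : Finset (List V)) (v : List V) (hv : v ∈ B) (n : ℕ) :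
    clusterCountEnd B v n 1 = if n = v.length then 1 else 0 := by
  rw [count_eq]
  have hchar : ∀ q : List V × List (ℕ × List V), ClProp B v n 1 q ↔
      (n = v.length ∧ q = (v, [(0, v)])) := by
    rintro ⟨w, L⟩
    constructor
    · rintro ⟨hw, hcl, hlen, hlast⟩
      dsimp only at hw hcl hlen hlast
      obtain ⟨p, rfl⟩ := List.length_eq_one_iff.mp hlen
      have hp2 : p.2 = v := by simpa using hlast
      have hp1 : p.1 = 0 := by simpa using hcl.2.2.1
      have hend : p.1 + p.2.length = w.length := by simpa using hcl.2.2.2.1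
      have hocc := (hcl.2.1 p (by simp)).2
      rw [hp1, hp2] at hocc hend
      simp only [List.drop_zero, Nat.zero_add] at hocc hend
      have hwv : w = v := by
        calc w = w.take w.length := List.take_length.symm
        _ = w.take v.length := by rw [hend]
        _ = v := hocc
      have hp : p = (0, v) := Prod.ext hp1 hp2
      exact ⟨by omega, by rw [hwv, hp]⟩
    · rintro ⟨hn, heq⟩
      rw [Prod.mk.injEq] at heq
      obtain ⟨rfl, rfl⟩ := heq
      refine ⟨hn.symm, ⟨by simp, ?_, by simp, by simp, List.isChain_singleton _⟩, by simp, by simp⟩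
      rintro p hp
      simp only [List.mem_singleton] at hp
      subst hp
      exact ⟨hv, by simp [List.take_length]⟩
  by_cases hn : n = v.length
  · rw [if_pos hn]
    have : Unique {q : List V × List (ℕ × List V) // ClProp B v n 1 q} := by
      refine ⟨⟨⟨(v, [(0, v)]), (hchar _).mpr ⟨hn, rfl⟩⟩⟩, fun q => ?_⟩
      apply Subtype.ext
      exact ((hchar _).mp q.prop).2
    exact Nat.card_unique
  · rw [if_neg hn]
    have : IsEmpty {q : List V × List (ℕ × List V) // ClProp B v n 1 q} := by
      refine ⟨fun q => hn ((hchar _).mp q.prop).1⟩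
    simp [Nat.card_of_isEmpty]

end GJaux
end part2
section part3
namespace GJaux
variable {V : Type*} [DecidableEq V]

/-- The index finset of pairs `(u, k)` of a member of `B` and an overlap length. -/
def Fidx (B : Finset (List V)) (v : List V) : Finset (List V × ℕ) :=
  (B ×ˢ Finset.range v.length).filter fun p =>
    (1 ≤ p.2 ∧ p.2 < min p.1.length v.length) ∧
      p.1.drop (p.1.length - p.2) = v.take p.2

lemma compose_mem {B : Finset (List V)} (hB : ∀ b ∈ B, b ≠ []) {v : List V}
    (hv : v ∈ B) {n l : ℕ} {p : List V × ℕ} (hp : p ∈ Fidx B v)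
    {q : List V × List (ℕ × List V)}
    (hq : ClProp B p.1 (n - (v.length - p.2)) (l+1) q) :
    ClProp B v n (l+2) (q.1 ++ v.drop p.2, q.2 ++ [(q.1.length - p.2, v)]) := by
  obtain ⟨u, k⟩ := p
  obtain ⟨w, L⟩ := q
  show ClProp B v n (l+2) (w ++ v.drop k, L ++ [(w.length - k, v)])
  simp only [Fidx, Finset.mem_filter, Finset.mem_product, Finset.mem_range] at hp
  obtain ⟨⟨hu, hkvr⟩, ⟨hk1, hkmin⟩, hmatch⟩ := hp
  obtain ⟨hwlen0, hcl0, hLlen0, hLlast0⟩ := hq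
  have hwlen : w.length = n - (v.length - k) := hwlen0
  have hcl : IsCluster B w L := hcl0
  have hLlen : L.length = l + 1 := hLlen0
  have hLlast : (L.map Prod.snd).getLast? = some u := hLlast0
  clear hwlen0 hcl0 hLlen0 hLlast0
  have hku : k < u.length := lt_of_lt_of_le hkmin (min_le_left _ _)
  have hkv : k < v.length := lt_of_lt_of_le hkmin (min_le_right _ _)
  have hLne : L ≠ [] := hcl.1
  set a := L.getLast hLne with ha
  have hsplit : L.dropLast ++ [a] = L := List.dropLast_append_getLast hLne
  have hau : a.2 = u := by
    rw [← hsplit] at hLlast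
    simpa using hLlast
  have haend : a.1 + u.length = w.length := by
    have h1 := hcl.2.2.2.1
    rw [← hsplit] at h1
    simp only [List.map_append, List.map_cons, List.map_nil, List.getLast?_concat,
      Option.some_inj] at h1
    rw [← hau]
    exact h1
  have hune : u ≠ [] := hB u hu
  have hul : 1 ≤ u.length := List.length_pos_iff.mpr hune
  have hw1 : 1 ≤ w.length := by omega
  have hn : w.length + (v.length - k) = n := by omega
  have hfac : w.drop a.1 = u := by
    have h1 := (hcl.2.1 a (List.getLast_mem hLne)).2
    rw [hau] at h1
    have hlen2 : (w.drop a.1).length = u.length := by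
      rw [List.length_drop]; omega
    rw [← hlen2, List.take_length] at h1
    exact h1
  have hdropw : w.drop (w.length - k) = v.take k := by
    have he : w.length - k = a.1 + (u.length - k) := by omega
    rw [he, ← List.drop_drop, hfac, hmatch]
  refine ⟨?_, ⟨?_, ?_, ?_, ?_, ?_⟩, ?_, ?_⟩
  · simp only [List.length_append, List.length_drop]
    omega
  · simp
  · intro x hx
    rcases List.mem_append.mp hx with hx | hx
    · have hxo := hcl.2.1 x hx
      have hxe : x.1 + x.2.length ≤ w.length := end_le hcl hx
      refine ⟨hxo.1, ?_⟩
      rw [List.drop_append_of_le_length (by omega),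
        List.take_append_of_le_length (by rw [List.length_drop]; omega), hxo.2]
    · simp only [List.mem_singleton] at hx
      subst hx
      refine ⟨hv, ?_⟩
      have h2 : (w ++ v.drop k).drop (w.length - k) = v.take k ++ v.drop k := by
        rw [List.drop_append_of_le_length (by omega), hdropw]
      dsimp only
      rw [h2, List.take_append_drop, List.take_length]
  · rcases L with _ | ⟨c, t⟩
    · exact absurd rfl hLne
    · have := hcl.2.2.1
      simpa using this
  · simp only [List.map_append, List.map_cons, List.map_nil, List.getLast?_concat,
      Option.some_inj, List.length_append, List.length_drop]
    omega
  · rw [List.Chain', List.isChain_append]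
    refine ⟨hcl.2.2.2.2, List.isChain_singleton _, ?_⟩
    intro x hx y hy
    simp only [List.head?_cons, Option.mem_def, Option.some_inj] at hy
    subst hy
    have hxa : x = a := by
      rw [List.getLast?_eq_getLast hLne, Option.mem_def, Option.some_inj] at hx
      exact hx.symm
    subst hxa
    rw [hau]
    dsimp only
    refine ⟨by omega, by omega, by omega⟩
  · simp [hLlen]
  · simp

end GJaux
end part3
section part4
namespace GJaux
variable {V : Type*} [DecidableEq V]

lemma card_sigma' {ι : Type*} [Fintype ι] (f : ι → Type*) [∀ i, Finite (f i)] :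
    Nat.card (Σ i, f i) = ∑ i, Nat.card (f i) := by
  letI : ∀ i, Fintype (f i) := fun i => Fintype.ofFinite _
  simp [Nat.card_eq_fintype_card]

lemma card_rec [Fintype V] {B : Finset (List V)} (hB : ∀ b ∈ B, b ≠ []) {v : List V}
    (hv : v ∈ B) (n l : ℕ) :
    Nat.card {q : List V × List (ℕ × List V) // ClProp B v n (l+2) q}
      = ∑ p ∈ Fidx B v,
          Nat.card {q : List V × List (ℕ × List V) //
            ClProp B p.1 (n - (v.length - p.2)) (l+1) q} := by
  classical
  haveI : ∀ (p : {p // p ∈ Fidx B v}),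
      Finite {q : List V × List (ℕ × List V) //
        ClProp B p.val.1 (n - (v.length - p.val.2)) (l+1) q} :=
    fun p => clProp_finite _ _ _ _
  have hbij : Function.Bijective
      (fun x : Σ p : {p // p ∈ Fidx B v}, {q : List V × List (ℕ × List V) //
          ClProp B p.val.1 (n - (v.length - p.val.2)) (l+1) q} =>
        (⟨(x.2.val.1 ++ v.drop x.1.val.2,
            x.2.val.2 ++ [(x.2.val.1.length - x.1.val.2, v)]),
          compose_mem hB hv x.1.prop x.2.prop⟩ :
          {q : List V × List (ℕ × List V) // ClProp B v n (l+2) q})) := by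
    constructor
    · rintro ⟨⟨⟨u1, k1⟩, hp1⟩, ⟨⟨w1, L1⟩, hq1⟩⟩ ⟨⟨⟨u2, k2⟩, hp2⟩, ⟨⟨w2, L2⟩, hq2⟩⟩ h
      simp only [Subtype.mk.injEq, Prod.mk.injEq] at h
      obtain ⟨hw, hL⟩ := h
      have hL1 : L1.length = l + 1 := hq1.2.2.1
      have hL2 : L2.length = l + 1 := hq2.2.2.1
      obtain ⟨hLL, _⟩ := List.append_inj hL (by rw [hL1, hL2])
      have hu1 : (L1.map Prod.snd).getLast? = some u1 := hq1.2.2.2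
      have hu2 : (L2.map Prod.snd).getLast? = some u2 := hq2.2.2.2
      rw [hLL, hu2, Option.some_inj] at hu1
      have he1 : (L1.map fun p => p.1 + p.2.length).getLast? = some w1.length :=
        hq1.2.1.2.2.2.1
      have he2 : (L2.map fun p => p.1 + p.2.length).getLast? = some w2.length :=
        hq2.2.1.2.2.2.1
      rw [hLL, he2, Option.some_inj] at he1
      obtain ⟨hww, hdd⟩ := List.append_inj hw he1.symm
      have hk1b : k1 < v.length := by
        have := hp1
        simp only [Fidx, Finset.mem_filter, Finset.mem_product, Finset.mem_range] at this
        exact this.1.2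
      have hk2b : k2 < v.length := by
        have := hp2
        simp only [Fidx, Finset.mem_filter, Finset.mem_product, Finset.mem_range] at this
        exact this.1.2
      have hkk : k1 = k2 := by
        have := congrArg List.length hdd
        simp only [List.length_drop] at this
        omega
      subst hu1; subst hkk; subst hww; subst hLL
      rfl
    · rintro ⟨⟨w, L⟩, hq⟩
      obtain ⟨hwlen0, hcl0, hLlen0, hLlast0⟩ := hq
      have hwlen : w.length = n := hwlen0
      have hcl : IsCluster B w L := hcl0
      have hLlen : L.length = l + 2 := hLlen0
      have hLlast : (L.map Prod.snd).getLast? = some v := hLlast0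
      have hLne : L ≠ [] := hcl.1
      set a := L.getLast hLne with ha
      set M := L.dropLast with hMdef
      have hsplit : M ++ [a] = L := List.dropLast_append_getLast hLne
      have hMlen : M.length = l + 1 := by
        rw [hMdef, List.length_dropLast, hLlen]
        omega
      have hMne : M ≠ [] := by
        intro h; rw [h] at hMlen; simp at hMlen
      set b := M.getLast hMne with hb
      have hsplitM : M.dropLast ++ [b] = M := List.dropLast_append_getLast hMne
      have hav : a.2 = v := by
        rw [← hsplit] at hLlast
        simpa using hLlast
      have haend : a.1 + v.length = n := by
        have h1 := hcl.2.2.2.1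
        rw [← hsplit] at h1
        simp only [List.map_append, List.map_cons, List.map_nil, List.getLast?_concat,
          Option.some_inj] at h1
        rw [← hav]
        omega
      have hchain := hcl.2.2.2.2
      rw [← hsplit, List.Chain', List.isChain_append] at hchain
      obtain ⟨hchainM, -, hrel⟩ := hchain
      have hMg : M.getLast? = some b := by
        rw [List.getLast?_eq_getLast hMne]
      have hrel' := hrel b hMg a (by simp)
      rw [hav] at hrel'
      have hbmem : b ∈ L := by
        rw [← hsplit]; exact List.mem_append_left _ (List.getLast_mem hMne)
      have hbocc := hcl.2.1 b hbmem
      have hbB : b.2 ∈ B := hbocc.1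
      have hbe : b.1 + b.2.length ≤ n := by
        have := end_le hcl hbmem; omega
      have hul : 1 ≤ b.2.length := List.length_pos_iff.mpr (hB _ hbB)
      set e := b.1 + b.2.length with he
      set k := e - a.1 with hk
      have hk1 : 1 ≤ k := by omega
      have hku : k < b.2.length := by omega
      have hkv : k < v.length := by omega
      have haocc := (hcl.2.1 a (by rw [← hsplit]; exact List.mem_append_right _ (by simp))).2
      rw [hav] at haocc
      have hwv : w.drop a.1 = v := by
        have hlen : (w.drop a.1).length = v.length := by
          rw [List.length_drop]; omega
        rw [← hlen, List.take_length] at haocc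
        exact haocc
      have hmatch : b.2.drop (b.2.length - k) = v.take k := by
        have h2 : b.2.drop (b.2.length - k)
            = ((w.drop b.1).take b.2.length).drop (b.2.length - k) := by rw [hbocc.2]
        rw [List.drop_take, List.drop_drop] at h2
        have h3 : b.1 + (b.2.length - k) = a.1 := by omega
        have h4 : b.2.length - (b.2.length - k) = k := by omega
        rw [h3, h4, hwv] at h2
        exact h2
      have hpF : (b.2, k) ∈ Fidx B v := by
        simp only [Fidx, Finset.mem_filter, Finset.mem_product, Finset.mem_range]
        exact ⟨⟨hbB, hkv⟩, ⟨hk1, lt_min hku hkv⟩, hmatch⟩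
      have hm : n - (v.length - k) = e := by omega
      have hends_M : (M.map fun p => p.1 + p.2.length).getLast? = some e := by
        rw [← hsplitM]
        simp [List.getLast?_concat]
        exact he.symm
      have hq' : ClProp B b.2 (n - (v.length - k)) (l+1) (w.take e, M) := by
        refine ⟨?_, ⟨hMne, ?_, ?_, ?_, hchainM⟩, hMlen, ?_⟩
        · rw [List.length_take]; omega
        · intro x hx
          have hxL : x ∈ L := by rw [← hsplit]; exact List.mem_append_left _ hx
          have hxo := hcl.2.1 x hxL
          refine ⟨hxo.1, ?_⟩
          have hxe : x.1 + x.2.length ≤ e :=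
            pairwise_lt_le_getLast? (ends_pairwise hchainM)
              (List.mem_map_of_mem hx) hends_M
          rw [List.drop_take, List.take_take, min_eq_left (by omega), hxo.2]
        · have hhead := hcl.2.2.1
          rw [← hsplit] at hhead
          rcases M with _ | ⟨c, t⟩
          · exact absurd rfl hMne
          · simpa using hhead
        · rw [hends_M, Option.some_inj, List.length_take]
          omega
        · rw [← hsplitM]
          simp [List.getLast?_concat]
      refine ⟨⟨⟨(b.2, k), hpF⟩, ⟨(w.take e, M), hq'⟩⟩, ?_⟩
      apply Subtype.ext
      show (w.take e ++ v.drop k, M ++ [((w.take e).length - k, v)]) = (w, L)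
      have hlt : (w.take e).length = e := by
        rw [List.length_take]; omega
      rw [hlt]
      refine Prod.ext ?_ ?_
      · have hvd : v.drop k = w.drop e := by
          rw [← hwv, List.drop_drop]
          congr 1
          omega
        rw [hvd, List.take_append_drop]
      · have hek : e - k = a.1 := by omega
        have hpa : (e - k, v) = a := by
          rw [hek, ← hav]
        rw [hpa]
        exact hsplit
  rw [← Nat.card_congr (Equiv.ofBijective _ hbij), card_sigma']
  exact Finset.sum_coe_sort (Fidx B v) (fun p => Nat.card
    {q : List V × List (ℕ × List V) // ClProp B p.1 (n - (v.length - p.2)) (l+1) q})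

lemma cc_rec [Fintype V] (B : Finset (List V)) (hB : ∀ b ∈ B, b ≠ []) {v : List V}
    (hv : v ∈ B) (n l : ℕ) :
    clusterCountEnd B v n (l+2)
      = ∑ u ∈ B, ∑ k ∈ Finset.Ico 1 (min u.length v.length),
          if u.drop (u.length - k) = v.take k
          then clusterCountEnd B u (n - (v.length - k)) (l+1) else 0 := by
  classical
  rw [count_eq, card_rec hB hv n l]
  rw [Fidx, Finset.sum_filter, Finset.sum_product]
  apply Finset.sum_congr rfl
  intro u hu
  simp only [count_eq]
  rw [← Finset.sum_filter, ← Finset.sum_filter]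
  apply Finset.sum_congr _ (fun _ _ => rfl)
  ext k
  simp only [Finset.mem_filter, Finset.mem_range, Finset.mem_Ico, lt_min_iff]
  tauto

end GJaux
end part4
section part5
open GJaux Finset

/-- The `n`-th coefficient of the cluster generating function. -/
noncomputable def Spoly {V : Type*} [Fintype V] (B : Finset (List V)) (u : List V)
    (m : ℕ) : Polynomial ℤ :=
  ∑ l ∈ Finset.range (m + 1),
    (Polynomial.X - 1) ^ l * (clusterCountEnd B u m l : Polynomial ℤ)

lemma coeff_clusterGFEndT {V : Type*} [Fintype V] (B : Finset (List V)) (u : List V)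
    (m : ℕ) :
    PowerSeries.coeff m (clusterGFEndT B u) = Spoly B u m := by
  rw [clusterGFEndT, PowerSeries.coeff_mk, Spoly]


/-- The linear system for the `t`-weighted cluster generating functions:
`C_v(s,t) = (t-1)·s^{|v|} + (t-1)·∑_{u ∈ B} (u:v)(s)·C_u(s,t)`. -/
theorem stmt8 {V : Type*} [Fintype V] [DecidableEq V]
    (B : Finset (List V)) (hB : ∀ b ∈ B, b ≠ [])
    (hanti : ∀ u ∈ B, ∀ v ∈ B, u <:+: v → u = v) :
    ∀ v ∈ B, clusterGFEndT B v =
      PowerSeries.C (R := Polynomial ℤ) (Polynomial.X - 1) * PowerSeries.X ^ v.length +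
        PowerSeries.C (R := Polynomial ℤ) (Polynomial.X - 1) *
          ∑ u ∈ B, corrT u v * clusterGFEndT B u := by

  classical
  intro v hv
  apply PowerSeries.ext
  intro n
  -- the key polynomial identity, per pair (u, k)
  have hmain : ∀ u ∈ B, ∀ k ∈ Finset.Ico 1 (min u.length v.length),
      (∑ l ∈ range n, (Polynomial.X - 1 : Polynomial ℤ) ^ (l + 2)
          * (clusterCountEnd B u (n - (v.length - k)) (l + 1) : Polynomial ℤ))
      = (Polynomial.X - 1)
          * (if v.length - k ≤ n then Spoly B u (n - (v.length - k)) else 0) := by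
    intro u hu k hk
    rw [Finset.mem_Ico] at hk
    by_cases hle : v.length - k ≤ n
    · rw [if_pos hle]
      have hmn : n - (v.length - k) ≤ n := Nat.sub_le _ _
      have h1 : Spoly B u (n - (v.length - k))
          = ∑ l ∈ range (n - (v.length - k)),
              (Polynomial.X - 1 : Polynomial ℤ) ^ (l + 1)
                * (clusterCountEnd B u (n - (v.length - k)) (l + 1) : Polynomial ℤ) := by
        rw [Spoly, Finset.sum_range_succ']
        simp [cc_zero]
      have h2 : ∑ l ∈ range (n - (v.length - k)),
            (Polynomial.X - 1 : Polynomial ℤ) ^ (l + 1)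
              * (clusterCountEnd B u (n - (v.length - k)) (l + 1) : Polynomial ℤ)
          = ∑ l ∈ range n,
            (Polynomial.X - 1 : Polynomial ℤ) ^ (l + 1)
              * (clusterCountEnd B u (n - (v.length - k)) (l + 1) : Polynomial ℤ) := by
        apply Finset.sum_subset (Finset.range_subset_range.mpr hmn)
        intro x hx hnx
        simp only [Finset.mem_range] at hx hnx
        rw [cc_gt B hB u (by omega)]
        simp
      rw [h1, h2, Finset.mul_sum]
      apply Finset.sum_congr rfl
      intro l _
      ring
    · rw [if_neg hle, mul_zero]
      apply Finset.sum_eq_zero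
      intro l _
      have hm0 : n - (v.length - k) = 0 := by omega
      rw [hm0, cc_word0 B hB]
      simp
  have key : Spoly B v n
      = (Polynomial.X - 1) * (if n = v.length then 1 else 0)
        + (Polynomial.X - 1) * ∑ u ∈ B, ∑ k ∈ Finset.Ico 1 (min u.length v.length),
            (if u.drop (u.length - k) = v.take k then
              (if v.length - k ≤ n then Spoly B u (n - (v.length - k)) else 0) else 0) := by
    have e1 : Spoly B v n
        = ∑ l ∈ range (n + 2),
            (Polynomial.X - 1 : Polynomial ℤ) ^ l * (clusterCountEnd B v n l : Polynomial ℤ) := by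
      rw [Spoly, Finset.sum_range_succ _ (n + 1), cc_gt B hB v (Nat.lt_succ_self n)]
      simp
    rw [e1, Finset.sum_range_succ', Finset.sum_range_succ']
    simp only [zero_add]
    rw [cc_zero, cc_one B v hv]
    have e4 : ∀ l ∈ range n,
        (Polynomial.X - 1 : Polynomial ℤ) ^ (l + 1 + 1)
            * (clusterCountEnd B v n (l + 1 + 1) : Polynomial ℤ)
        = ∑ u ∈ B, ∑ k ∈ Finset.Ico 1 (min u.length v.length),
            (if u.drop (u.length - k) = v.take k then
              (Polynomial.X - 1 : Polynomial ℤ) ^ (l + 2)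
                * (clusterCountEnd B u (n - (v.length - k)) (l + 1) : Polynomial ℤ)
            else 0) := by
      intro l _
      rw [show l + 1 + 1 = l + 2 by omega]
      rw [cc_rec B hB hv n l, Nat.cast_sum, Finset.mul_sum]
      apply Finset.sum_congr rfl
      intro u _
      rw [Nat.cast_sum, Finset.mul_sum]
      apply Finset.sum_congr rfl
      intro k _
      rw [apply_ite (Nat.cast : ℕ → Polynomial ℤ), Nat.cast_zero, mul_ite, mul_zero]
    rw [Finset.sum_congr rfl e4, Finset.sum_comm]
    have e5 : ∀ u ∈ B,
        (∑ l ∈ range n, ∑ k ∈ Finset.Ico 1 (min u.length v.length),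
          (if u.drop (u.length - k) = v.take k then
            (Polynomial.X - 1 : Polynomial ℤ) ^ (l + 2)
              * (clusterCountEnd B u (n - (v.length - k)) (l + 1) : Polynomial ℤ)
          else 0))
        = (Polynomial.X - 1) * ∑ k ∈ Finset.Ico 1 (min u.length v.length),
            (if u.drop (u.length - k) = v.take k then
              (if v.length - k ≤ n then Spoly B u (n - (v.length - k)) else 0) else 0) := by
      intro u hu
      rw [Finset.sum_comm, Finset.mul_sum]
      apply Finset.sum_congr rfl
      intro k hk
      by_cases hc : u.drop (u.length - k) = v.take k
      · simp only [if_pos hc]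
        exact hmain u hu k hk
      · simp only [if_neg hc, mul_zero]
        exact Finset.sum_eq_zero fun _ _ => rfl
    rw [Finset.sum_congr rfl e5, ← Finset.mul_sum]
    push_cast
    ring
  rw [coeff_clusterGFEndT, map_add, PowerSeries.coeff_C_mul, PowerSeries.coeff_C_mul,
    PowerSeries.coeff_X_pow, map_sum]
  have hco : ∀ u ∈ B, (PowerSeries.coeff n) (corrT u v * clusterGFEndT B u)
      = ∑ k ∈ Finset.Ico 1 (min u.length v.length),
          (if u.drop (u.length - k) = v.take k then
            (if v.length - k ≤ n then Spoly B u (n - (v.length - k)) else 0) else 0) := by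
    intro u hu
    rw [corrT, Finset.sum_mul, map_sum]
    apply Finset.sum_congr rfl
    intro k hk
    rw [ite_mul, zero_mul, apply_ite (PowerSeries.coeff n), map_zero]
    by_cases hc : u.drop (u.length - k) = v.take k
    · rw [if_pos hc, if_pos hc, PowerSeries.coeff_X_pow_mul']
      by_cases hle : v.length - k ≤ n
      · rw [if_pos hle, if_pos hle, coeff_clusterGFEndT]
      · rw [if_neg hle, if_neg hle]
    · rw [if_neg hc, if_neg hc]
  rw [Finset.sum_congr rfl hco]
  exact key

end part5
end

section
/- Let V be an alphabet with 26 letters (identified with Fin 26) and let B = {[0,1,0,1], [2,3,2,3]} (encoding the words PIPI and CACA). Let a(n) be the number of words of length n over V avoiding B. Then the identity (Σ_{n≥0} a(n) s^n) · (1 − 26s + s² − 26s³ + 2s⁴) = 1 + s² holds in ℤ[[s]]. -/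
/-- The set of bad words: `PIPI` and `CACA`, encoded over `Fin 26`. -/
def badPC : Finset (List (Fin 26)) := {[0, 1, 0, 1], [2, 3, 2, 3]}

/-- The number of words of length `n` over a 26-letter alphabet avoiding
`PIPI` and `CACA` as factors. -/
noncomputable def aPC (n : ℕ) : ℕ :=
  Nat.card {f : Fin n → Fin 26 // ∀ b ∈ badPC, ¬ b <:+: List.ofFn f}

open List Finset

abbrev V : Type := Fin 26
def avoidPC (l : List V) : Prop := ¬ [0,1,0,1] <:+: l ∧ ¬ [2,3,2,3] <:+: l

lemma concat_suffix_concat (t l : List V) (x y : V) :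
    t ++ [y] <:+ l ++ [x] ↔ y = x ∧ t <:+ l := by
  rw [← List.reverse_prefix]
  simp only [List.reverse_append, List.reverse_singleton, List.singleton_append,
    List.cons_prefix_cons, List.reverse_prefix]

lemma avoid_concat (l : List V) (x : V) :
    avoidPC (l ++ [x]) ↔ avoidPC l ∧ ¬(x = 1 ∧ [0,1,0] <:+ l) ∧ ¬(x = 3 ∧ [2,3,2] <:+ l) := by
  unfold avoidPC
  rw [List.infix_concat_iff, List.infix_concat_iff,
    show ([0,1,0,1] : List V) = [0,1,0] ++ [1] from rfl,
    show ([2,3,2,3] : List V) = [2,3,2] ++ [3] from rfl,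
    concat_suffix_concat, concat_suffix_concat]
  constructor
  · rintro ⟨h1, h2⟩
    exact ⟨⟨fun h => h1 (Or.inr h), fun h => h2 (Or.inr h)⟩,
      fun ⟨hx, hs⟩ => h1 (Or.inl ⟨hx.symm, hs⟩), fun ⟨hx, hs⟩ => h2 (Or.inl ⟨hx.symm, hs⟩)⟩
  · rintro ⟨⟨h1, h2⟩, h3, h4⟩
    refine ⟨?_, ?_⟩
    · rintro (⟨hx, hs⟩ | h); exact h3 ⟨hx.symm, hs⟩; exact h1 h
    · rintro (⟨hx, hs⟩ | h); exact h4 ⟨hx.symm, hs⟩; exact h2 h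

lemma avoid_append01 (l : List V) : avoidPC (l ++ [0,1]) ↔ avoidPC l ∧ ¬ [0,1] <:+ l := by
  rw [show (l ++ [0,1] : List V) = (l ++ [0]) ++ [1] by simp, avoid_concat,
    show ([0,1,0]:List V) = [0,1]++[0] from rfl, show ([2,3,2]:List V) = [2,3]++[2] from rfl,
    concat_suffix_concat, concat_suffix_concat, avoid_concat]
  simp

lemma avoid_append010 (l : List V) : avoidPC (l ++ [0,1,0]) ↔ avoidPC l ∧ ¬ [0,1] <:+ l := by
  rw [show (l ++ [0,1,0] : List V) = (l ++ [0,1]) ++ [0] by simp, avoid_concat,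
    avoid_append01]
  simp

lemma avoid_append23 (l : List V) : avoidPC (l ++ [2,3]) ↔ avoidPC l ∧ ¬ [2,3] <:+ l := by
  rw [show (l ++ [2,3] : List V) = (l ++ [2]) ++ [3] by simp, avoid_concat,
    show ([0,1,0]:List V) = [0,1]++[0] from rfl, show ([2,3,2]:List V) = [2,3]++[2] from rfl,
    concat_suffix_concat, concat_suffix_concat, avoid_concat]
  simp

lemma avoid_append232 (l : List V) : avoidPC (l ++ [2,3,2]) ↔ avoidPC l ∧ ¬ [2,3] <:+ l := by
  rw [show (l ++ [2,3,2] : List V) = (l ++ [2,3]) ++ [2] by simp, avoid_concat,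
    avoid_append23]
  simp

instance : DecidablePred avoidPC := fun l => by unfold avoidPC; infer_instance

/-- all words of length n -/
def Wd : ℕ → Finset (List V)
  | 0 => {[]}
  | n+1 => ((Wd n) ×ˢ (Finset.univ : Finset V)).image fun p => p.1 ++ [p.2]

lemma mem_Wd {n : ℕ} {l : List V} : l ∈ Wd n ↔ l.length = n := by
  induction n generalizing l with
  | zero => simp [Wd, List.length_eq_zero_iff]
  | succ n ih =>
    simp only [Wd, Finset.mem_image, Finset.mem_product, Finset.mem_univ, and_true]
    constructor
    · rintro ⟨⟨u, x⟩, hu, rfl⟩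
      simp [ih.mp hu]
    · intro h
      have hne : l ≠ [] := by intro h'; simp [h'] at h
      refine ⟨⟨l.dropLast, l.getLast hne⟩, ih.mpr ?_, List.dropLast_append_getLast hne⟩
      simp [List.length_dropLast, h]

def Ad (n : ℕ) : Finset (List V) := (Wd n).filter avoidPC
def Bd (n : ℕ) : Finset (List V) := (Ad n).filter (fun l => [0,1,0] <:+ l)
def Cd (n : ℕ) : Finset (List V) := (Ad n).filter (fun l => [2,3,2] <:+ l)
def Dd (n : ℕ) : Finset (List V) := (Ad n).filter (fun l => [0,1] <:+ l)

lemma Wd_eq (n : ℕ) : Wd n = (Finset.univ : Finset (Fin n → V)).image List.ofFn := by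
  ext l
  simp only [mem_Wd, Finset.mem_image, Finset.mem_univ, true_and]
  constructor
  · rintro rfl
    exact ⟨fun i => l[i], List.ofFn_getElem⟩
  · rintro ⟨f, rfl⟩; simp

lemma aPC_eq (n : ℕ) : aPC n = (Ad n).card := by
  have h : aPC n = Nat.card {f : Fin n → Fin 26 // avoidPC (List.ofFn f)} := by
    unfold aPC
    exact Nat.card_congr (Equiv.subtypeEquivRight (fun f => by simp [badPC, avoidPC]))
  rw [h, Nat.card_eq_fintype_card, Fintype.card_subtype]
  rw [Ad, Wd_eq, Finset.filter_image, Finset.card_image_of_injective _ List.ofFn_injective]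

lemma card_Wd (n : ℕ) : (Wd n).card = 26 ^ n := by
  induction n with
  | zero => simp [Wd]
  | succ n ih =>
    have hinj : Function.Injective (fun p : List V × V => p.1 ++ [p.2]) := by
      rintro ⟨a, b⟩ ⟨c, d⟩ h
      simp only at h
      obtain ⟨h1, h2⟩ := List.append_inj' h rfl
      simp_all
    rw [Wd, Finset.card_image_of_injective _ hinj, Finset.card_product, ih]
    simp [pow_succ]

lemma avoid_of_short {l : List V} (h : l.length ≤ 3) : avoidPC l := by
  constructor <;> intro hin <;> have := hin.length_le <;> simp at this <;> omega

lemma Ad_eq_Wd {n : ℕ} (h : n ≤ 3) : Ad n = Wd n :=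
  Finset.filter_true_of_mem (fun l hl => avoid_of_short (by rw [mem_Wd] at hl; omega))

lemma aPC_small {n : ℕ} (h : n ≤ 3) : aPC n = 26 ^ n := by
  rw [aPC_eq, Ad_eq_Wd h, card_Wd]

lemma concat_inj : Function.Injective (fun p : List V × V => p.1 ++ [p.2]) := by
  rintro ⟨a, b⟩ ⟨c, d⟩ h
  simp only at h
  obtain ⟨h1, h2⟩ := List.append_inj' h rfl
  simp_all

lemma L1 (n : ℕ) : (Ad (n+1)).card + (Bd n).card + (Cd n).card = 26 * (Ad n).card := by
  classical
  set P := (Ad n) ×ˢ (Finset.univ : Finset V) with hP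
  have hgood : Ad (n+1) = (P.filter fun p => avoidPC (p.1 ++ [p.2])).image
      (fun p => p.1 ++ [p.2]) := by
    ext l
    simp only [Ad, Finset.mem_filter, mem_Wd, Finset.mem_image, hP, Finset.mem_product,
      Finset.mem_univ, and_true]
    constructor
    · rintro ⟨hlen, hav⟩
      have hne : l ≠ [] := by intro h'; simp [h'] at hlen
      refine ⟨⟨l.dropLast, l.getLast hne⟩, ⟨⟨?_, ?_⟩, ?_⟩, List.dropLast_append_getLast hne⟩
      · simp [List.length_dropLast, hlen]
      · have := (avoid_concat l.dropLast (l.getLast hne)).mp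
          (by rwa [List.dropLast_append_getLast hne])
        exact this.1
      · rwa [List.dropLast_append_getLast hne]
    · rintro ⟨⟨u, x⟩, ⟨⟨hlen, _⟩, hav⟩, rfl⟩
      exact ⟨by simp [hlen], hav⟩
  have hcard1 : (Ad (n+1)).card = (P.filter fun p => avoidPC (p.1 ++ [p.2])).card := by
    rw [hgood, Finset.card_image_of_injective _ concat_inj]
  have hbad : (P.filter fun p => ¬ avoidPC (p.1 ++ [p.2])) =
      (Bd n) ×ˢ ({1} : Finset V) ∪ (Cd n) ×ˢ ({3} : Finset V) := by
    ext ⟨l, x⟩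
    simp only [Finset.mem_filter, hP, Finset.mem_product, Finset.mem_univ, and_true,
      Finset.mem_union, Bd, Cd, Finset.mem_singleton, Ad, mem_Wd]
    rw [avoid_concat]
    constructor
    · rintro ⟨⟨hlen, hav⟩, hbad⟩
      rw [not_and_or] at hbad
      rcases hbad with h | h
      · exact absurd hav h
      rw [not_and_or] at h
      rcases h with h | h
      · rw [not_not] at h
        exact Or.inl ⟨⟨⟨hlen, hav⟩, h.2⟩, h.1⟩
      · rw [not_not] at h
        exact Or.inr ⟨⟨⟨hlen, hav⟩, h.2⟩, h.1⟩
    · rintro (⟨⟨⟨hlen, hav⟩, hs⟩, rfl⟩ | ⟨⟨⟨hlen, hav⟩, hs⟩, rfl⟩)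
      · exact ⟨⟨hlen, hav⟩, by tauto⟩
      · exact ⟨⟨hlen, hav⟩, by tauto⟩
  have hdisj : Disjoint ((Bd n) ×ˢ ({1} : Finset V)) ((Cd n) ×ˢ ({3} : Finset V)) := by
    rw [Finset.disjoint_left]
    rintro ⟨l, x⟩ h1 h2
    simp only [Finset.mem_product, Finset.mem_singleton] at h1 h2
    rw [h1.2] at h2
    exact absurd h2.2 (by decide)
  have hsplit := Finset.card_filter_add_card_filter_not
    (s := P) (p := fun p => avoidPC (p.1 ++ [p.2]))
  rw [hbad, Finset.card_union_of_disjoint hdisj, Finset.card_product, Finset.card_product,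
    Finset.card_singleton, Finset.card_singleton] at hsplit
  have hPcard : P.card = (Ad n).card * 26 := by
    rw [hP, Finset.card_product]; simp
  omega

lemma L4 (n : ℕ) : (Dd (n+2)).card + (Dd n).card = (Ad n).card := by
  classical
  have himg : Dd (n+2) = ((Ad n).filter (fun l => ¬ [0,1] <:+ l)).image (· ++ [0,1]) := by
    ext l
    simp only [Dd, Ad, Finset.mem_filter, mem_Wd, Finset.mem_image]
    constructor
    · rintro ⟨⟨hlen, hav⟩, hsuf⟩
      obtain ⟨u, rfl⟩ := hsuf
      rw [avoid_append01] at hav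
      have hu : u.length = n := by simp at hlen; omega
      exact ⟨u, ⟨⟨hu, hav.1⟩, hav.2⟩, rfl⟩
    · rintro ⟨u, ⟨⟨hlen, hav⟩, hns⟩, rfl⟩
      exact ⟨⟨by simp [hlen], (avoid_append01 u).mpr ⟨hav, hns⟩⟩, ⟨u, rfl⟩⟩
  have h1 : (Dd (n+2)).card = ((Ad n).filter (fun l => ¬ [0,1] <:+ l)).card := by
    rw [himg, Finset.card_image_of_injective _ (List.append_left_injective _)]
  have h2 := Finset.card_filter_add_card_filter_not
    (s := Ad n) (p := fun l => [0,1] <:+ l)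
  rw [h1]
  rw [show Dd n = (Ad n).filter (fun l => [0,1] <:+ l) from rfl] 
  omega

lemma L2 (n : ℕ) : (Bd (n+3)).card + (Dd n).card = (Ad n).card := by
  classical
  have himg : Bd (n+3) = ((Ad n).filter (fun l => ¬ [0,1] <:+ l)).image (· ++ [0,1,0]) := by
    ext l
    simp only [Bd, Ad, Finset.mem_filter, mem_Wd, Finset.mem_image]
    constructor
    · rintro ⟨⟨hlen, hav⟩, hsuf⟩
      obtain ⟨u, rfl⟩ := hsuf
      rw [avoid_append010] at hav
      have hu : u.length = n := by simp at hlen; omega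
      exact ⟨u, ⟨⟨hu, hav.1⟩, hav.2⟩, rfl⟩
    · rintro ⟨u, ⟨⟨hlen, hav⟩, hns⟩, rfl⟩
      exact ⟨⟨by simp [hlen], (avoid_append010 u).mpr ⟨hav, hns⟩⟩, ⟨u, rfl⟩⟩
  have h1 : (Bd (n+3)).card = ((Ad n).filter (fun l => ¬ [0,1] <:+ l)).card := by
    rw [himg, Finset.card_image_of_injective _ (List.append_left_injective _)]
  have h2 := Finset.card_filter_add_card_filter_not
    (s := Ad n) (p := fun l => [0,1] <:+ l)
  rw [h1]
  rw [show Dd n = (Ad n).filter (fun l => [0,1] <:+ l) from rfl]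
  omega

def swp : V → V := fun v => if v = 0 then 2 else if v = 1 then 3 else if v = 2 then 0
  else if v = 3 then 1 else v

lemma swp_swp (v : V) : swp (swp v) = v := by fin_cases v <;> decide

lemma map_swp_swp (l : List V) : (l.map swp).map swp = l := by
  rw [List.map_map]
  simp [Function.comp_def, swp_swp]

lemma avoid_map_swp {l : List V} (h : avoidPC l) : avoidPC (l.map swp) := by
  obtain ⟨h1, h2⟩ := h
  constructor
  · intro hin
    apply h2
    have := hin.map swp
    rw [map_swp_swp] at this
    simpa [swp] using this
  · intro hin
    apply h1
    have := hin.map swp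
    rw [map_swp_swp] at this
    simpa [swp] using this

lemma Bd_eq_Cd (n : ℕ) : (Bd n).card = (Cd n).card := by
  classical
  refine Finset.card_bij' (fun l _ => l.map swp) (fun l _ => l.map swp) ?_ ?_
    (fun l _ => map_swp_swp l) (fun l _ => map_swp_swp l)
  · intro l hl
    simp only [Bd, Cd, Ad, Finset.mem_filter, mem_Wd] at hl ⊢
    obtain ⟨⟨hlen, hav⟩, hs⟩ := hl
    refine ⟨⟨by simp [hlen], avoid_map_swp hav⟩, ?_⟩
    have := hs.map swp
    simpa [swp] using this
  · intro l hl
    simp only [Bd, Cd, Ad, Finset.mem_filter, mem_Wd] at hl ⊢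
    obtain ⟨⟨hlen, hav⟩, hs⟩ := hl
    refine ⟨⟨by simp [hlen], avoid_map_swp hav⟩, ?_⟩
    have := hs.map swp
    simpa [swp] using this

lemma Bd_zero {n : ℕ} (h : n < 3) : (Bd n).card = 0 := by
  rw [Finset.card_eq_zero]
  apply Finset.eq_empty_of_forall_notMem
  intro l hl
  simp only [Bd, Ad, Finset.mem_filter, mem_Wd] at hl
  have := hl.2.length_le
  simp at this
  omega

lemma Dd_zero {n : ℕ} (h : n < 2) : (Dd n).card = 0 := by
  rw [Finset.card_eq_zero]
  apply Finset.eq_empty_of_forall_notMem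
  intro l hl
  simp only [Dd, Ad, Finset.mem_filter, mem_Wd] at hl
  have := hl.2.length_le
  simp at this
  omega

lemma bd_dd (n : ℕ) : (Bd (n+1)).card = (Dd n).card := by
  match n with
  | 0 => rw [Bd_zero (by norm_num), Dd_zero (by norm_num)]
  | 1 => rw [Bd_zero (by norm_num), Dd_zero (by norm_num)]
  | (m+2) =>
    show (Bd (m+3)).card = (Dd (m+2)).card
    have h2 := L2 m
    have h4 := L4 m
    omega

lemma recur (n : ℕ) : (aPC (n+4) : ℤ) =
    26 * aPC (n+3) - aPC (n+2) + 26 * aPC (n+1) - 2 * aPC n := by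
  have key : ∀ m : ℕ, (aPC (m+1) : ℤ) + 2 * (Bd m).card = 26 * aPC m := by
    intro m
    have h := L1 m
    have hbc := Bd_eq_Cd m
    rw [aPC_eq, aPC_eq]
    omega
  have h1 := key (n+3)
  have h5a : ((Bd (n+3)).card : ℤ) = (Dd (n+2)).card := by exact_mod_cast bd_dd (n+2)
  have h4 : ((Dd (n+2)).card : ℤ) + (Dd n).card = aPC n := by
    have := L4 n; rw [aPC_eq]; exact_mod_cast this
  have h5b : ((Bd (n+1)).card : ℤ) = (Dd n).card := by exact_mod_cast bd_dd n
  have h1b := key (n+1)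
  linarith

/-- `f(s)·(1 - 26s + s² - 26s³ + 2s⁴) = 1 + s²` for the generating function of
words avoiding `PIPI` and `CACA`. -/
theorem stmt9 :
    PowerSeries.mk (fun n => (aPC n : ℤ)) *
        (1 - 26 * PowerSeries.X + PowerSeries.X ^ 2 - 26 * PowerSeries.X ^ 3 +
          2 * PowerSeries.X ^ 4) =
      1 + PowerSeries.X ^ 2 := by
  set F := PowerSeries.mk (fun n => (aPC n : ℤ)) with hF
  have hre : F * (1 - 26 * PowerSeries.X + PowerSeries.X ^ 2 - 26 * PowerSeries.X ^ 3 +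
      2 * PowerSeries.X ^ 4) =
      F - (PowerSeries.C (R := ℤ) 26) * (F * PowerSeries.X ^ 1) + F * PowerSeries.X ^ 2 -
        (PowerSeries.C (R := ℤ) 26) * (F * PowerSeries.X ^ 3) +
        (PowerSeries.C (R := ℤ) 2) * (F * PowerSeries.X ^ 4) := by
    rw [show (PowerSeries.C (R := ℤ) 26) = (26 : PowerSeries ℤ) from map_ofNat _ 26,
      show (PowerSeries.C (R := ℤ) 2) = (2 : PowerSeries ℤ) from map_ofNat _ 2]
    ring
  rw [hre]
  ext n
  simp only [map_sub, map_add, PowerSeries.coeff_C_mul, PowerSeries.coeff_mul_X_pow',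
    hF, PowerSeries.coeff_mk, PowerSeries.coeff_one, PowerSeries.coeff_X_pow,
    PowerSeries.coeff_zero_eq_constantCoeff, PowerSeries.constantCoeff_mk]
  match n with
  | 0 => norm_num [aPC_small]
  | 1 => norm_num [aPC_small (by norm_num : (1:ℕ) ≤ 3), aPC_small (by norm_num : (0:ℕ) ≤ 3)]
  | 2 => norm_num [aPC_small (by norm_num : (2:ℕ) ≤ 3), aPC_small (by norm_num : (1:ℕ) ≤ 3),
      aPC_small (by norm_num : (0:ℕ) ≤ 3)]
  | 3 => norm_num [aPC_small (by norm_num : (3:ℕ) ≤ 3), aPC_small (by norm_num : (2:ℕ) ≤ 3),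
      aPC_small (by norm_num : (1:ℕ) ≤ 3), aPC_small (by norm_num : (0:ℕ) ≤ 3)]
  | (m+4) =>
    have hr := recur m
    have e1 : m + 4 - 1 = m + 3 := by omega
    have e2 : m + 4 - 2 = m + 2 := by omega
    have e3 : m + 4 - 3 = m + 1 := by omega
    have e4 : m + 4 - 4 = m := by omega
    simp only [if_pos (by omega : 1 ≤ m + 4), if_pos (by omega : 2 ≤ m + 4),
      if_pos (by omega : 3 ≤ m + 4), if_pos (by omega : 4 ≤ m + 4),
      if_neg (by omega : ¬ m + 4 = 0), if_neg (by omega : ¬ m + 4 = 2), e1, e2, e3, e4]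
    linarith
end

section
/- Let V be an alphabet with 26 letters (identified with Fin 26), let B = {[0,1,0,1], [2,3,2,3]} (encoding PIPI and CACA), and let v = [0,1,0,1]. Then the identity (1 + s²) · C_v(s) = −s⁴ holds in ℤ[[s]]; that is, the signed cluster generating function for clusters ending with PIPI equals −s⁴/(1+s²). -/
private def pipi : List (Fin 26) := [0,1,0,1]

lemma occ_elem {w : List (Fin 26)} {i : ℕ} {b : List (Fin 26)}
    (h : IsOcc badPC w (i, b)) : i + 4 ≤ w.length ∧ ∀ k < 4, w[i+k]? = b[k]? := by
  obtain ⟨hb, ht⟩ := h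
  have hlen : b.length = 4 := by
    simp only [badPC, Finset.mem_insert, Finset.mem_singleton] at hb
    rcases hb with rfl | rfl <;> rfl
  rw [hlen] at ht
  have hl : i + 4 ≤ w.length := by
    have := congrArg List.length ht
    simp [hlen] at this
    omega
  refine ⟨hl, fun k hk => ?_⟩
  have := congrArg (fun l => l[k]?) ht
  simpa [List.getElem?_take, List.getElem?_drop, hk] using this


lemma overlap {w : List (Fin 26)} {i j : ℕ} {b : List (Fin 26)}
    (h1 : IsOcc badPC w (i, b)) (h2 : IsOcc badPC w (j, pipi))
    (hij : i < j) (hji : j < i + b.length) : b = pipi ∧ j = i + 2 := by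
  have hb := h1.1
  have hlen : b.length = 4 := by
    simp only [badPC, Finset.mem_insert, Finset.mem_singleton] at hb
    rcases hb with rfl | rfl <;> rfl
  have e1 := (occ_elem h1).2
  have e2 := (occ_elem h2).2
  have key : w[j]? = some 0 := by
    have := e2 0 (by norm_num)
    simpa [pipi] using this
  rw [hlen] at hji
  simp only [badPC, Finset.mem_insert, Finset.mem_singleton] at hb
  have hd : j = i + 1 ∨ j = i + 2 ∨ j = i + 3 := by omega
  rcases hb with rfl | rfl
  · rcases hd with rfl | rfl | rfl
    · have := e1 1 (by norm_num); rw [key] at this; simp at this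
    · exact ⟨rfl, rfl⟩
    · have := e1 3 (by norm_num); rw [key] at this; simp at this
  · rcases hd with rfl | rfl | rfl
    · have := e1 1 (by norm_num); rw [key] at this; simp at this
    · have := e1 2 (by norm_num); rw [key] at this; simp at this
    · have := e1 3 (by norm_num); rw [key] at this; simp at this

lemma cluster_shape (w : List (Fin 26)) (L : List (ℕ × List (Fin 26))) (hne : L ≠ [])
    (hocc : ∀ p ∈ L, IsOcc badPC w p)
    (hch : L.Chain' fun p q => p.1 < q.1 ∧ p.1 + p.2.length < q.1 + q.2.length ∧ q.1 < p.1 + p.2.length)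
    (hlast : (L.map Prod.snd).getLast? = some pipi) :
    ∃ a, L = (List.range L.length).map (fun r => (a + 2*r, pipi)) := by
  induction L using List.reverseRecOn with
  | nil => exact absurd rfl hne
  | append_singleton M x IH =>
    have hx2 : x.2 = pipi := by
      rw [List.map_append, show List.map Prod.snd [x] = [x.2] from rfl,
        List.getLast?_concat] at hlast
      exact Option.some_injective _ hlast
    rcases eq_or_ne M [] with rfl | hM
    · exact ⟨x.1, by simp [← hx2, List.range_succ]⟩
    · simp only [List.Chain'] at hch; rw [List.isChain_append] at hch
      obtain ⟨hchM, -, hrel⟩ := hch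
      obtain ⟨p, hlastM⟩ : ∃ p, M.getLast? = some p :=
        Option.isSome_iff_exists.1 (List.getLast?_isSome.2 hM)
      have hrel' := hrel p hlastM x (by simp)
      have hpeq : p = M.getLast hM := by
        rw [List.getLast?_eq_getLast hM] at hlastM
        exact (Option.some_injective _ hlastM).symm
      have hpM : p ∈ M := hpeq ▸ List.getLast_mem hM
      have hpp : IsOcc badPC w p := hocc p (List.mem_append_left _ hpM)
      have hxp : IsOcc badPC w (x.1, pipi) := by
        have := hocc x (by simp); rwa [show (x.1, pipi) = x by rw [← hx2]]
      have hov := overlap hpp hxp hrel'.1 hrel'.2.2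
      have hMlast : (M.map Prod.snd).getLast? = some pipi := by
        rw [List.getLast?_map, hlastM]
        simpa using hov.1
      obtain ⟨a, ha⟩ := IH hM (fun q hq => hocc q (List.mem_append_left _ hq)) hchM hMlast
      refine ⟨a, ?_⟩
      have hMlen : M.length ≠ 0 := by simpa using hM
      have hrange : List.range M.length = List.range (M.length - 1) ++ [M.length - 1] := by
        rw [← List.range_succ]; congr 1; omega
      have hplast : p = (a + 2*(M.length - 1), pipi) := by
        rw [ha, hrange, List.map_append, show List.map (fun r => (a + 2*r, pipi)) [M.length - 1]
          = [(a + 2*(M.length - 1), pipi)] from rfl, List.getLast?_concat] at hlastM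
        exact (Option.some_injective _ hlastM).symm
      have hx1 : x.1 = a + 2 * M.length := by
        have h2 := hov.2
        rw [hplast] at h2
        simp only at h2
        omega
      have hx : x = (a + 2 * M.length, pipi) := by
        obtain ⟨x1, x2⟩ := x
        simp only at hx1 hx2
        rw [hx1, hx2]
      simp only [List.length_append, List.length_singleton, List.range_succ, List.map_append,
        ← ha]
      rw [hx]
      rfl

private def wpat (n : ℕ) : Fin n → Fin 26 := fun j => if j.val % 2 = 0 then 0 else 1
private def Lpat (l : ℕ) : List (ℕ × List (Fin 26)) := (List.range l).map fun r => (2*r, pipi)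

lemma cluster_char {n l : ℕ} (w : Fin n → Fin 26) (L : List (ℕ × List (Fin 26))) :
    (IsCluster badPC (List.ofFn w) L ∧ L.length = l ∧
      (L.map Prod.snd).getLast? = some pipi) ↔
    (1 ≤ l ∧ n = 2*l + 2 ∧ w = wpat n ∧ L = Lpat l) := by
  constructor
  · rintro ⟨⟨hne, hocc, hhead, hlen, hch⟩, hl, hlast⟩
    obtain ⟨a, ha⟩ := cluster_shape _ L hne hocc hch hlast
    rw [hl] at ha
    have hl1 : 1 ≤ l := by
      rcases Nat.eq_zero_or_pos l with rfl | h
      · rw [ha] at hne; simp at hne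
      · exact h
    have ha0 : a = 0 := by
      rw [ha, List.head?_map, List.head?_map, List.head?_range] at hhead
      rcases Nat.eq_zero_or_pos l with rfl | h
      · omega
      · simp [Nat.pos_iff_ne_zero.1 h] at hhead
        omega
    subst ha0
    simp only [zero_add] at ha
    have hrange : List.range l = List.range (l - 1) ++ [l - 1] := by
      rw [← List.range_succ]; congr 1; omega
    have hn : n = 2 * l + 2 := by
      rw [ha] at hlen
      simp only [List.map_map, hrange, List.map_append, List.map_cons, List.map_nil,
        List.getLast?_concat, List.length_ofFn, Function.comp_apply] at hlen
      have := Option.some_injective _ hlen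
      simp only [pipi, List.length_cons, List.length_nil] at this
      omega
    have hoccr : ∀ r < l, IsOcc badPC (List.ofFn w) (2 * r, pipi) := by
      intro r hr
      exact hocc _ (by rw [ha]; exact List.mem_map_of_mem (List.mem_range.2 hr))
    have hw : ∀ (j : Fin n), w j = if j.val % 2 = 0 then 0 else 1 := by
      intro j
      have hj : j.val < 2 * l + 2 := hn ▸ j.isLt
      obtain ⟨r, k, hrk, hrl, hk⟩ : ∃ r k, j.val = 2 * r + k ∧ r < l ∧ k < 4 := by
        rcases Nat.lt_or_ge j.val (2 * l) with h | h
        · exact ⟨j.val / 2, j.val % 2, by omega, by omega, by omega⟩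
        · exact ⟨l - 1, j.val - 2 * (l - 1), by omega, by omega, by omega⟩
      have he := (occ_elem (hoccr r hrl)).2 k hk
      rw [List.getElem?_ofFn] at he
      have hjn : 2 * r + k < n := by omega
      rw [dif_pos hjn] at he
      have : w ⟨2 * r + k, hjn⟩ = if k % 2 = 0 then 0 else 1 := by
        interval_cases k <;> simpa [pipi] using he
      have hjj : j = ⟨2 * r + k, hjn⟩ := Fin.ext (by simpa using hrk)
      rw [hjj, this]
      have : (2 * r + k) % 2 = k % 2 := by omega
      simp [this]
    refine ⟨hl1, hn, funext fun j => ?_, by rw [ha]; rfl⟩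
    rw [hw j]; rfl
  · rintro ⟨hl1, hn, rfl, rfl⟩
    have hlen : (List.ofFn (wpat n)).length = n := by simp
    have hoccr : ∀ r < l, IsOcc badPC (List.ofFn (wpat n)) (2 * r, pipi) := by
      intro r hr
      refine ⟨(by decide : pipi ∈ badPC), ?_⟩
      apply List.ext_getElem?
      intro m
      rw [List.getElem?_take]
      have hp4 : pipi.length = 4 := rfl
      by_cases hm : m < pipi.length
      · rw [if_pos hm, List.getElem?_drop, List.getElem?_ofFn]
        have h4 : m < 4 := hm
        have hmn : 2 * r + m < n := by omega
        rw [dif_pos hmn]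
        have : wpat n ⟨2 * r + m, hmn⟩ = if m % 2 = 0 then 0 else 1 := by
          simp only [wpat]
          have : (⟨2 * r + m, hmn⟩ : Fin n).val % 2 = m % 2 := by
            simp only [Fin.val_mk]; omega
          rw [this]
        rw [this]
        interval_cases m <;> simp [pipi]
      · rw [if_neg hm, eq_comm, List.getElem?_eq_none_iff]
        simp only [show ((2 * r, pipi) : ℕ × List (Fin 26)).2 = pipi from rfl, hp4]
        omega
    refine ⟨⟨?_, ?_, ?_, ?_, ?_⟩, by simp [Lpat], ?_⟩
    · simp [Lpat]; omega
    · rintro ⟨i, b⟩ hp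
      simp only [Lpat, List.mem_map, List.mem_range] at hp
      obtain ⟨r, hr, heq⟩ := hp
      obtain ⟨rfl, rfl⟩ : 2 * r = i ∧ pipi = b := by
        exact ⟨congrArg Prod.fst heq, congrArg Prod.snd heq⟩
      exact hoccr r hr
    · simp only [Lpat, List.map_map, List.head?_map, List.head?_range]
      have : l ≠ 0 := by omega
      simp [this, Function.comp]
    · have hrange : List.range l = List.range (l - 1) ++ [l - 1] := by
        rw [← List.range_succ]; congr 1; omega
      simp only [Lpat, List.map_map, hrange, List.map_append]
      rw [show (List.map ((fun p : ℕ × List (Fin 26) => p.1 + p.2.length) ∘ fun r => (2*r, pipi)) [l-1]) = [2*(l-1) + 4] from rfl, List.getLast?_concat]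
      rw [hlen]
      congr 1
      omega
    · simp only [Lpat]
      simp only [List.Chain']; rw [List.isChain_map]
      obtain ⟨m, rfl⟩ : ∃ m, l = m + 1 := ⟨l - 1, by omega⟩
      rw [show (m + 1) = Nat.succ m from rfl, List.isChain_range_succ]
      intro i hi
      refine ⟨by omega, ?_, ?_⟩ <;>
        · simp only [pipi, List.length_cons, List.length_nil]; omega
    · simp only [Lpat, List.map_map]
      have hrange : List.range l = List.range (l - 1) ++ [l - 1] := by
        rw [← List.range_succ]; congr 1; omega
      rw [hrange, List.map_append, show (List.map (Prod.snd ∘ fun r => (2*r, pipi)) [l-1]) = [pipi] from rfl, List.getLast?_concat]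


lemma count_eq (n l : ℕ) :
    clusterCountEnd badPC [0,1,0,1] n l = if 1 ≤ l ∧ n = 2*l+2 then 1 else 0 := by
  have hv : ([0,1,0,1] : List (Fin 26)) = pipi := rfl
  rw [hv]
  unfold clusterCountEnd
  split_ifs with h
  · rw [Nat.card_eq_one_iff_unique]
    constructor
    · constructor
      intro x y
      have hx := (cluster_char x.1.1 x.1.2).1 ⟨x.2.1, x.2.2.1, x.2.2.2⟩
      have hy := (cluster_char y.1.1 y.1.2).1 ⟨y.2.1, y.2.2.1, y.2.2.2⟩
      apply Subtype.ext
      apply Prod.ext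
      · rw [hx.2.2.1, hy.2.2.1]
      · rw [hx.2.2.2, hy.2.2.2]
    · refine ⟨⟨(wpat n, Lpat l), ?_⟩⟩
      have := (cluster_char (wpat n) (Lpat l)).2 ⟨h.1, h.2, rfl, rfl⟩
      exact ⟨this.1, this.2.1, this.2.2⟩
  · rw [Nat.card_eq_zero]
    left
    constructor
    intro x
    have hx := (cluster_char x.1.1 x.1.2).1 ⟨x.2.1, x.2.2.1, x.2.2.2⟩
    exact h ⟨hx.1, hx.2.1⟩

lemma coeff_gf (n : ℕ) :
    PowerSeries.coeff n (clusterGFEnd badPC [0,1,0,1]) =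
      if n % 2 = 0 ∧ 4 ≤ n then (-1 : ℤ)^(n/2 - 1) else 0 := by
  rw [clusterGFEnd, PowerSeries.coeff_mk]
  have hterm : ∀ l, (-1 : ℤ)^l * clusterCountEnd badPC [0,1,0,1] n l =
      if 1 ≤ l ∧ n = 2*l+2 then (-1 : ℤ)^l else 0 := by
    intro l
    rw [count_eq]
    split_ifs <;> simp
  simp only [hterm]
  by_cases h : n % 2 = 0 ∧ 4 ≤ n
  · rw [if_pos h]
    rw [Finset.sum_eq_single_of_mem (n/2 - 1) (Finset.mem_range.2 (by omega))]
    · rw [if_pos (by omega)]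
    · intro l _ hl
      rw [if_neg (by omega)]
  · rw [if_neg h]
    apply Finset.sum_eq_zero
    intro l _
    rw [if_neg (by omega)]


/-- For `B = {PIPI, CACA}`, the signed cluster generating function for clusters
ending in `PIPI` satisfies `(1 + s²)·C_{PIPI}(s) = -s⁴`. -/
theorem stmt11 :
    (1 + PowerSeries.X ^ 2) * clusterGFEnd badPC [0, 1, 0, 1] =
      -(PowerSeries.X ^ 4 : PowerSeries ℤ) := by
  ext n
  rw [show (1 + PowerSeries.X ^ 2) * clusterGFEnd badPC [0,1,0,1]
    = clusterGFEnd badPC [0,1,0,1] + clusterGFEnd badPC [0,1,0,1] * PowerSeries.X ^ 2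
    from by ring]
  rw [map_add, PowerSeries.coeff_mul_X_pow', map_neg, PowerSeries.coeff_X_pow, coeff_gf]
  by_cases h4 : n = 4
  · subst h4
    rw [if_pos (by norm_num), if_pos (by norm_num), coeff_gf, if_neg (by norm_num)]
    norm_num
  · by_cases he : n % 2 = 0 ∧ 6 ≤ n
    · rw [if_pos (by omega), if_pos (by omega), coeff_gf, if_pos (by omega), if_neg h4]
      have h1 : n / 2 - 1 = (n - 2) / 2 - 1 + 1 := by omega
      rw [h1, pow_succ]
      ring
    · rw [if_neg (by omega), if_neg h4]
      split_ifs with h2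
      · rw [coeff_gf, if_neg (by omega)]
        norm_num
      · norm_num
end

section
/- Let a(n) be the number of words of length n over V that avoid B. Then the generating function f(s) = Σ_{n≥0} a(n) s^n is a rational function: there exist polynomials P, Q ∈ ℤ[s] with constant coefficient of Q equal to 1 such that Q · f = P in ℤ[[s]]. Consequently a(n) satisfies, for all sufficiently large n, a linear recurrence with constant integer coefficients. -/
set_option linter.unusedSectionVars false
set_option linter.unusedVariables false

/-- The number of words of length `n` over `V` none of whose factors lies in `B`. -/
noncomputable def avoidCount (V : Type*) [Fintype V] (B : Finset (List V))
    (n : ℕ) : ℕ :=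
  Nat.card {f : Fin n → V // ∀ b ∈ B, ¬ b <:+: List.ofFn f}

namespace AvoidAux

open Finset
open scoped Classical

variable {V : Type*} [Fintype V]

/-- avoidance predicate -/
def Avoids (B : Finset (List V)) (w : List V) : Prop := ∀ b ∈ B, ¬ b <:+: w

variable (B : Finset (List V))

/-- max length of a forbidden word -/
def m : ℕ := B.sup List.length

/-- the last `k` letters of a list -/
def lastN (k : ℕ) (l : List V) : List V := l.drop (l.length - k)

lemma lastN_suffix (k : ℕ) (l : List V) : lastN k l <:+ l := List.drop_suffix _ _

lemma lastN_length (k : ℕ) (l : List V) : (lastN k l).length = min k l.length := by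
  simp [lastN]; omega

lemma lastN_of_le {k : ℕ} {l : List V} (h : l.length ≤ k) : lastN k l = l := by
  simp [lastN, Nat.sub_eq_zero_of_le h]

lemma lastN_eq_of_suffix {k : ℕ} {u v : List V} (h : u <:+ v) (hk : k ≤ u.length) :
    lastN k u = lastN k v := by
  obtain ⟨s, rfl⟩ := h
  unfold lastN
  rw [List.length_append,
    show s.length + u.length - k = s.length + (u.length - k) by omega, List.drop_append]
  simp

/-- state type: words of length at most `m B` -/
def St := {l : List V // l.length ≤ m B}

noncomputable def listsLen (k : ℕ) : Finset (List V) :=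
  (univ : Finset (List.Vector V k)).image List.Vector.toList

lemma mem_listsLen {k : ℕ} {l : List V} : l ∈ listsLen (V := V) k ↔ l.length = k := by
  simp only [listsLen, mem_image, mem_univ, true_and]
  constructor
  · rintro ⟨v, rfl⟩; exact v.2
  · rintro rfl; exact ⟨⟨l, rfl⟩, rfl⟩

lemma mem_SF {l : List V} :
    l ∈ (Finset.range (m B + 1)).biUnion (fun k => listsLen (V := V) k) ↔ l.length ≤ m B := by
  simp only [mem_biUnion, Finset.mem_range, mem_listsLen]
  constructor
  · rintro ⟨k, hk, rfl⟩; omega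
  · intro h; exact ⟨l.length, by omega, rfl⟩

noncomputable instance : Fintype (St B) :=
  Fintype.ofFinset ((Finset.range (m B + 1)).biUnion (fun k => listsLen (V := V) k))
    (fun l => mem_SF B)

instance : Nonempty (St B) := ⟨⟨[], by simp⟩⟩

/-- the state of a word -/
def stS (w : List V) : St B := ⟨lastN (m B) w, by rw [lastN_length]; omega⟩

/-- words (as vectors) of length n avoiding B -/
noncomputable def WS (n : ℕ) : Finset (List.Vector V n) :=
  univ.filter (fun v => Avoids B v.toList)

/-- words (as lists) of length n avoiding B -/
noncomputable def W (n : ℕ) : Finset (List V) := (WS B n).image List.Vector.toList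

lemma vector_toList_injective {n : ℕ} :
    Function.Injective (List.Vector.toList : List.Vector V n → List V) :=
  fun a b h => Subtype.ext h

lemma mem_W {n : ℕ} {w : List V} : w ∈ W B n ↔ w.length = n ∧ Avoids B w := by
  simp only [W, WS, mem_image, Finset.mem_filter, mem_univ, true_and]
  constructor
  · rintro ⟨v, hv, rfl⟩; exact ⟨v.2, hv⟩
  · rintro ⟨rfl, h⟩; exact ⟨⟨w, rfl⟩, h, rfl⟩

lemma card_W (n : ℕ) :
    avoidCount V B n = (W B n).card := by
  rw [avoidCount]
  have e : {f : Fin n → V // ∀ b ∈ B, ¬ b <:+: List.ofFn f} ≃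
      {v : List.Vector V n // Avoids B v.toList} :=
    (Equiv.vectorEquivFin V n).symm.subtypeEquiv (fun f => by
      rw [show ((Equiv.vectorEquivFin V n).symm f) = List.Vector.ofFn f from rfl,
        List.Vector.toList_ofFn]
      rfl)
  rw [Nat.card_congr e, Nat.card_eq_fintype_card, W,
    Finset.card_image_of_injective _ (vector_toList_injective), WS, Fintype.card_subtype]

lemma infix_concat_iff {t w : List V} {x : V} :
    t <:+: (w ++ [x]) ↔ t <:+: w ∨ t <:+ (w ++ [x]) := by
  constructor
  · rintro ⟨s, r, h⟩
    rcases List.eq_nil_or_concat r with rfl | ⟨r', y, rfl⟩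
    · right; exact ⟨s, by simpa using h⟩
    · left
      rw [List.concat_eq_append, ← List.append_assoc] at h
      have hlen : (s ++ t ++ r').length = w.length := by
        have := congrArg List.length h
        simp at this ⊢; omega
      obtain ⟨h1, -⟩ := List.append_inj h hlen
      exact ⟨s, r', by rw [← h1]⟩
  · rintro (h | h)
    · exact h.trans ⟨[], [x], by simp⟩
    · exact h.isInfix

lemma suffix_lastN_concat_iff {k : ℕ} {b w : List V} {x : V} (hb : b.length ≤ k) :
    b <:+ (w ++ [x]) ↔ b <:+ (lastN k w ++ [x]) := by
  rcases le_or_gt w.length k with h | h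
  · rw [lastN_of_le h]
  · have hsfx : (lastN k w ++ [x]) <:+ (w ++ [x]) := by
      obtain ⟨s, hs⟩ := lastN_suffix (V := V) k w
      exact ⟨s, by rw [← List.append_assoc, hs]⟩
    constructor
    · intro hbw
      rcases List.suffix_or_suffix_of_suffix hbw hsfx with h1 | h1
      · exact h1
      · have := h1.length_le
        have hlen : (lastN k w ++ [x]).length = k + 1 := by
          rw [List.length_append, lastN_length]; simp; omega
        omega
    · intro h1; exact h1.trans hsfx

lemma lastN_concat (k : ℕ) (w : List V) (x : V) :
    lastN k (w ++ [x]) = lastN k (lastN k w ++ [x]) := by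
  rcases le_or_gt w.length k with h | h
  · rw [lastN_of_le h]
  · have hsfx : (lastN k w ++ [x]) <:+ (w ++ [x]) := by
      obtain ⟨s, hs⟩ := lastN_suffix (V := V) k w
      exact ⟨s, by rw [← List.append_assoc, hs]⟩
    exact (lastN_eq_of_suffix hsfx (by rw [List.length_append, lastN_length]; simp; omega)).symm


lemma length_le_m {b : List V} (hb : b ∈ B) : b.length ≤ m B := Finset.le_sup hb

lemma avoids_concat {w : List V} {x : V} :
    Avoids B (w ++ [x]) ↔
      Avoids B w ∧ ∀ b ∈ B, ¬ b <:+ (lastN (m B) w ++ [x]) := by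
  constructor
  · intro h
    refine ⟨fun b hb hbw => h b hb (hbw.trans ⟨[], [x], by simp⟩), fun b hb hbs => h b hb ?_⟩
    exact (List.IsSuffix.isInfix ((suffix_lastN_concat_iff (length_le_m B hb)).2 hbs))
  · rintro ⟨h1, h2⟩ b hb hbw
    rcases infix_concat_iff.1 hbw with h | h
    · exact h1 b hb h
    · exact h2 b hb ((suffix_lastN_concat_iff (length_le_m B hb)).1 h)


lemma stS_concat (w : List V) (x : V) :
    stS B (w ++ [x]) = stS B ((stS B w).1 ++ [x]) :=
  Subtype.ext (lastN_concat (m B) w x)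

/-- number of avoiding words of length `n` in state `s` -/
noncomputable def v (n : ℕ) (s : St B) : ℕ :=
  ((W B n).filter (fun w => stS B w = s)).card

/-- transition counts -/
noncomputable def Mnat (t s : St B) : ℕ :=
  ((univ : Finset V).filter
    (fun x => (∀ b ∈ B, ¬ b <:+ (s.1 ++ [x])) ∧ stS B (s.1 ++ [x]) = t)).card

lemma fiber_eq {n : ℕ} {w : List V} (hw : w ∈ W B n) (t : St B) :
    ((W B (n + 1)).filter (fun u => stS B u = t)).filter (fun u => u.dropLast = w)
      = ((univ : Finset V).filter
          (fun x => (∀ b ∈ B, ¬ b <:+ ((stS B w).1 ++ [x])) ∧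
            stS B ((stS B w).1 ++ [x]) = t)).image (fun x => w ++ [x]) := by
  obtain ⟨hwlen, hwav⟩ := (mem_W B).1 hw
  ext u
  simp only [Finset.mem_filter, Finset.mem_image, mem_univ, true_and, mem_W]
  constructor
  · rintro ⟨⟨⟨hulen, huav⟩, hust⟩, hud⟩
    rcases List.eq_nil_or_concat u with rfl | ⟨u', y, rfl⟩
    · simp at hulen
    · rw [List.concat_eq_append] at *
      rw [List.dropLast_concat] at hud
      subst hud
      obtain ⟨-, hsuf⟩ := (avoids_concat B).1 huav
      refine ⟨y, ⟨hsuf, ?_⟩, rfl⟩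
      rw [← stS_concat]; exact hust
  · rintro ⟨x, ⟨hsuf, hst⟩, rfl⟩
    refine ⟨⟨⟨by simp [hwlen], (avoids_concat B).2 ⟨hwav, hsuf⟩⟩, ?_⟩, List.dropLast_concat⟩
    rw [stS_concat]; exact hst

lemma v_succ (n : ℕ) (t : St B) :
    v B (n + 1) t = ∑ s : St B, Mnat B t s * v B n s := by
  have hmap : ∀ u ∈ (W B (n + 1)).filter (fun u => stS B u = t), u.dropLast ∈ W B n := by
    intro u hu
    obtain ⟨hu, -⟩ := Finset.mem_filter.1 hu
    obtain ⟨hulen, huav⟩ := (mem_W B).1 hu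
    refine (mem_W B).2 ⟨by simp [hulen], fun b hb hbi => huav b hb ?_⟩
    exact hbi.trans (List.dropLast_prefix u).isInfix
  rw [v, Finset.card_eq_sum_card_fiberwise hmap]
  have step1 : ∀ w ∈ W B n,
      (((W B (n + 1)).filter (fun u => stS B u = t)).filter (fun u => u.dropLast = w)).card
        = Mnat B t (stS B w) := by
    intro w hw
    rw [fiber_eq B hw t, Finset.card_image_of_injective _ ?_, Mnat]
    intro x y hxy
    simpa using List.append_cancel_left hxy
  rw [Finset.sum_congr rfl step1]
  rw [← Finset.sum_fiberwise (W B n) (fun w => stS B w) (fun w => Mnat B t (stS B w))]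
  refine Finset.sum_congr rfl (fun s _ => ?_)
  rw [Finset.sum_congr rfl (fun w hw => by
        rw [(Finset.mem_filter.1 hw).2]),
    Finset.sum_const, smul_eq_mul, v, mul_comm]

lemma card_W_eq_sum_v (n : ℕ) : (W B n).card = ∑ s : St B, v B n s := by
  exact Finset.card_eq_sum_card_fiberwise (fun w _ => Finset.mem_univ (stS B w))

/-- transition matrix over ℤ -/
noncomputable def MZ : Matrix (St B) (St B) ℤ := fun t s => (Mnat B t s : ℤ)

noncomputable def vZ (n : ℕ) : St B → ℤ := fun s => (v B n s : ℤ)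

lemma vZ_succ (n : ℕ) : vZ B (n + 1) = (MZ B).mulVec (vZ B n) := by
  funext t
  rw [Matrix.mulVec, dotProduct]
  simp only [vZ, MZ, v_succ B n t]
  push_cast
  rfl

lemma vZ_eq (n : ℕ) : vZ B n = ((MZ B) ^ n).mulVec (vZ B 0) := by
  induction n with
  | zero => simp [Matrix.one_mulVec]
  | succ n ih => rw [vZ_succ, ih, Matrix.mulVec_mulVec, ← pow_succ']

lemma avoidCount_eq_sum (n : ℕ) :
    (avoidCount V B n : ℤ) = ∑ t : St B, ((MZ B) ^ n).mulVec (vZ B 0) t := by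
  rw [card_W B n, card_W_eq_sum_v B n]
  push_cast
  rw [show (fun s => ((v B n s : ℤ))) = vZ B n from rfl, vZ_eq B n]

/-- the counting functional, as a linear map on matrices -/
noncomputable def L : Matrix (St B) (St B) ℤ →ₗ[ℤ] ℤ where
  toFun A := ∑ t : St B, A.mulVec (vZ B 0) t
  map_add' A A' := by
    simp [Matrix.add_mulVec, Finset.sum_add_distrib]
  map_smul' c A := by
    simp only [RingHom.id_apply, smul_eq_mul]
    show ∑ t : St B, (c • A).mulVec (vZ B 0) t = c * ∑ t : St B, A.mulVec (vZ B 0) t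
    rw [Matrix.smul_mulVec]
    simp [Finset.mul_sum]

lemma main_recurrence :
    ∀ n, (avoidCount V B (n + Fintype.card (St B)) : ℤ) =
      ∑ i : Fin (Fintype.card (St B)),
        (-(MZ B).charpoly.coeff i) * avoidCount V B (n + i) := by
  intro n
  set k := Fintype.card (St B) with hk
  set p := (MZ B).charpoly with hp
  have hdeg : p.natDegree = k := Matrix.charpoly_natDegree_eq_dim (MZ B)
  have h0 := Matrix.aeval_self_charpoly (MZ B)
  rw [Polynomial.aeval_eq_sum_range, hdeg, Finset.sum_range_succ] at h0
  have hck : p.coeff k = 1 := by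
    have := (Matrix.charpoly_monic (MZ B)).coeff_natDegree
    rwa [hdeg] at this
  rw [← hp, hck, one_smul] at h0
  have hM : (MZ B) ^ k = ∑ i ∈ Finset.range k, (-p.coeff i) • (MZ B) ^ i := by
    have h1 : (MZ B) ^ k = -(∑ i ∈ Finset.range k, p.coeff i • (MZ B) ^ i) :=
      eq_neg_of_add_eq_zero_right h0
    rw [h1, ← Finset.sum_neg_distrib]
    exact Finset.sum_congr rfl fun i _ => (neg_smul _ _).symm
  have hMn : (MZ B) ^ (n + k) = ∑ i ∈ Finset.range k, (-p.coeff i) • (MZ B) ^ (n + i) := by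
    rw [pow_add, hM, Finset.mul_sum]
    exact Finset.sum_congr rfl fun i _ => by rw [mul_smul_comm, ← pow_add]
  have hL : ∀ n', (avoidCount V B n' : ℤ) = L B ((MZ B) ^ n') := fun n' =>
    avoidCount_eq_sum B n'
  rw [hL, hMn, map_sum]
  rw [← Finset.sum_range (fun i => (-p.coeff i) * (avoidCount V B (n + i) : ℤ))]
  exact Finset.sum_congr rfl fun i _ => by
    rw [LinearMap.map_smul, smul_eq_mul, ← hL]

lemma gf_of_recurrence (a : ℕ → ℤ) (k N : ℕ) (c : Fin k → ℤ)
    (h : ∀ n, N ≤ n → a (n + k) = ∑ i : Fin k, c i * a (n + i)) :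
    ∃ P Q : Polynomial ℤ, Q.coeff 0 = 1 ∧
      (Q : PowerSeries ℤ) * PowerSeries.mk a = (P : PowerSeries ℤ) := by
  set f := PowerSeries.mk a with hf
  set Q : Polynomial ℤ := 1 - ∑ i : Fin k, Polynomial.C (c i) * Polynomial.X ^ (k - i.1)
    with hQ
  have hQ0 : Q.coeff 0 = 1 := by
    rw [hQ, Polynomial.coeff_sub, Polynomial.coeff_one, Polynomial.finset_sum_coeff]
    rw [Finset.sum_eq_zero (fun i _ => ?_)]
    · simp
    · rw [Polynomial.coeff_C_mul, Polynomial.coeff_X_pow, if_neg (by have := i.2; omega),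
        mul_zero]
  have hQcast : (Q : PowerSeries ℤ) =
      1 - ∑ i : Fin k, (PowerSeries.C (c i)) * PowerSeries.X ^ (k - i.1) := by
    have hsum : ((∑ i : Fin k, Polynomial.C (c i) * Polynomial.X ^ (k - i.1) :
          Polynomial ℤ) : PowerSeries ℤ) =
        ∑ i : Fin k, ((Polynomial.C (c i) * Polynomial.X ^ (k - i.1) :
          Polynomial ℤ) : PowerSeries ℤ) :=
      map_sum Polynomial.coeToPowerSeries.ringHom
        (fun i : Fin k => Polynomial.C (c i) * Polynomial.X ^ (k - i.1)) Finset.univ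
    rw [hQ, Polynomial.coe_sub, Polynomial.coe_one, hsum]
    congr 1
    refine Finset.sum_congr rfl (fun i _ => ?_)
    rw [Polynomial.coe_mul, Polynomial.coe_C, Polynomial.coe_pow, Polynomial.coe_X]
  have key : ∀ n, N + k ≤ n → PowerSeries.coeff n ((Q : PowerSeries ℤ) * f) = 0 := by
    intro n hn
    obtain ⟨d, rfl⟩ : ∃ d, n = (N + d) + k := ⟨n - N - k, by omega⟩
    rw [hQcast, sub_mul, one_mul, Finset.sum_mul, map_sub, map_sum]
    have hmk : PowerSeries.coeff (N + d + k) f = a (N + d + k) := PowerSeries.coeff_mk _ _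
    rw [hmk, Finset.sum_congr rfl (fun (i : Fin k) _ => ?_), h (N + d) (by omega), sub_self]
    rw [mul_assoc, PowerSeries.coeff_C_mul,
      show N + d + k = (N + d + i.1) + (k - i.1) by have := i.2; omega,
      PowerSeries.coeff_X_pow_mul, hf, PowerSeries.coeff_mk]
  refine ⟨PowerSeries.trunc (N + k) ((Q : PowerSeries ℤ) * f), Q, hQ0, ?_⟩
  ext n
  rw [Polynomial.coeff_coe, PowerSeries.coeff_trunc]
  split_ifs with hlt
  · rfl
  · exact key n (by omega)

end AvoidAux

open scoped Classical in
/-- The generating function of `a(n)` is rational (denominator with constant term 1),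
and consequently `a(n)` eventually satisfies a linear recurrence with constant
integer coefficients. -/
theorem stmt12 {V : Type*} [Fintype V] (B : Finset (List V))
    (hB : ∀ b ∈ B, b ≠ []) :
    (∃ P Q : Polynomial ℤ, Q.coeff 0 = 1 ∧
        (Q : PowerSeries ℤ) * PowerSeries.mk (fun n => (avoidCount V B n : ℤ)) =
          (P : PowerSeries ℤ)) ∧
      ∃ (k N : ℕ) (c : Fin k → ℤ), ∀ n, N ≤ n →
        (avoidCount V B (n + k) : ℤ) = ∑ i : Fin k, c i * avoidCount V B (n + i) := by
  refine ⟨?_, ?_⟩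
  · exact AvoidAux.gf_of_recurrence _ _ 0 _ (fun n _ => AvoidAux.main_recurrence B n)
  · exact ⟨_, 0, _, fun n _ => AvoidAux.main_recurrence B n⟩
end
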